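/- arXiv:1304.7750 — 7 statements merged into one kernel-verified Lean document; each statement's English description precedes it below -/
import Mathlib

section
/- Let (a,b,c) be a triple of positive real numbers with a < b < c. Then D_{a,b,c} = ∅ if and only if Q_{a,b,c} < +∞. -/
open MeasureTheory Set

/- Indicator function of the interval `[0, c)`. -/
open Classical in
noncomputable def chiIco (c x : ℝ) : ℝ := if 0 ≤ x ∧ x < c then 1 else 0

/-- The row `μ = j·a` of the infinite matrix `M_{a,b,c}(t)` applied to the vector
`z : bℤ → ℝ` (indexed by `k : ℤ`, with `λ = k·b`):
`(M_{a,b,c}(t)z)(μ) = Σ_{λ∈bℤ} χ_{[0,c)}(t − μ + λ)·z(λ)`. -/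
noncomputable def Mrow (a b c t : ℝ) (z : ℤ → ℝ) (j : ℤ) : ℝ :=
  ∑' k : ℤ, chiIco c (t - (j : ℝ) * a + (k : ℝ) * b) * z k

/-- `D_{a,b,c} = {t : M_{a,b,c}(t)x = 2 for some binary x with x(0) = 1}`. -/
def Dset (a b c : ℝ) : Set ℝ :=
  {t : ℝ | ∃ x : ℤ → ℝ, (∀ k, x k = 0 ∨ x k = 1) ∧ x 0 = 1 ∧ ∀ j : ℤ, Mrow a b c t x j = 2}

/-- `S_{a,b,c} = {t : M_{a,b,c}(t)x = 1 for some binary x with x(0) = 1}`. -/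
def Sset (a b c : ℝ) : Set ℝ :=
  {t : ℝ | ∃ x : ℤ → ℝ, (∀ k, x k = 0 ∨ x k = 1) ∧ x 0 = 1 ∧ ∀ j : ℤ, Mrow a b c t x j = 1}

/-- `Q_{a,b,c} = sup_{t∈ℝ} sup_{x∈B_b} Q_{a,b,c}(t,x) ∈ [0,∞]`, where `Q_{a,b,c}(t,x)`
is the maximal length `n` of a run of consecutive twos `(M_{a,b,c}(t)x)(μ) = 2`,
`μ ∈ {ja, (j+1)a, …, (j+n−1)a}` (and `0` if there are no twos). -/
noncomputable def Qabc (a b c : ℝ) : ℕ∞ :=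
  ⨆ (t : ℝ) (x : ℤ → ℝ) (_ : ∀ k, x k = 0 ∨ x k = 1) (n : ℕ)
    (_ : 1 ≤ n ∧ ∃ j : ℤ, ∀ i : ℕ, i < n → Mrow a b c t x (j + (i : ℤ)) = 2), (n : ℕ∞)

open Classical in
lemma chiIco_eq_one_iff {c u : ℝ} : chiIco c u = 1 ↔ 0 ≤ u ∧ u < c := by
  unfold chiIco; split_ifs with h <;> simp [h]

lemma chiIco_cases (c u : ℝ) : chiIco c u = 0 ∨ chiIco c u = 1 := by
  unfold chiIco; split_ifs <;> simp

lemma chiIco_ne_zero {c u : ℝ} (h : chiIco c u ≠ 0) : 0 ≤ u ∧ u < c := by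
  unfold chiIco at h; split_ifs at h with h' <;> tauto

noncomputable def Fj (a b c : ℝ) (j : ℤ) : Finset ℤ :=
  Finset.Icc ⌈((j:ℝ)*a - c)/b⌉ ⌊((j:ℝ)*a + c)/b⌋

lemma chi_vanish {a b c : ℝ} (hb : 0 < b) {u : ℝ} (hu0 : 0 ≤ u) (huc : u ≤ c)
    {j k : ℤ} (hk : k ∉ Fj a b c j) : chiIco c (u - (j:ℝ)*a + (k:ℝ)*b) = 0 := by
  by_contra h
  obtain ⟨h1, h2⟩ := chiIco_ne_zero h
  apply hk
  rw [Fj, Finset.mem_Icc, Int.ceil_le, Int.le_floor]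
  constructor
  · rw [div_le_iff₀ hb]; nlinarith
  · rw [le_div_iff₀ hb]; nlinarith

lemma mrow_eq_sum {a b c : ℝ} (hb : 0 < b) {u : ℝ} (hu0 : 0 ≤ u) (huc : u ≤ c)
    (x : ℤ → ℝ) (j : ℤ) :
    Mrow a b c u x j = ∑ k ∈ Fj a b c j, chiIco c (u - (j:ℝ)*a + (k:ℝ)*b) * x k := by
  apply tsum_eq_sum
  intro k hk
  rw [chi_vanish hb hu0 huc hk, zero_mul]

lemma mrow_shift_j (a b c t : ℝ) (x : ℤ → ℝ) (m j : ℤ) :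
    Mrow a b c (t - (m:ℝ)*a) x j = Mrow a b c t x (j + m) := by
  apply tsum_congr
  intro k
  congr 2
  push_cast
  ring

lemma mrow_shift_k (a b c t : ℝ) (x : ℤ → ℝ) (m j : ℤ) :
    Mrow a b c (t + (m:ℝ)*b) (fun k => x (k + m)) j = Mrow a b c t x j := by
  unfold Mrow
  rw [← (Equiv.addRight m).tsum_eq (fun k => chiIco c (t - (j:ℝ)*a + (k:ℝ)*b) * x k)]
  apply tsum_congr
  intro k
  simp only [Equiv.coe_addRight]
  congr 2
  push_cast
  ring

lemma chi_right (c s : ℝ) : ∃ δ > 0, ∀ ε : ℝ, 0 ≤ ε → ε < δ → chiIco c (s + ε) = chiIco c s := by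
  rcases lt_or_ge s 0 with h | h
  · refine ⟨-s, by linarith, fun ε h1 h2 => ?_⟩
    unfold chiIco
    rw [if_neg (by push_neg; intro hh; linarith), if_neg (by push_neg; intro hh; linarith)]
  rcases lt_or_ge s c with h' | h'
  · refine ⟨c - s, by linarith, fun ε h1 h2 => ?_⟩
    unfold chiIco
    rw [if_pos ⟨by linarith, by linarith⟩, if_pos ⟨h, h'⟩]
  · refine ⟨1, one_pos, fun ε h1 h2 => ?_⟩
    unfold chiIco
    rw [if_neg (by push_neg; intro hh; linarith), if_neg (by push_neg; intro hh; linarith)]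

lemma chi_left {c : ℝ} (hc : 0 < c) (s : ℝ) :
    ∃ δ > 0, ∀ ε : ℝ, 0 < ε → ε < δ → chiIco c (s - ε) = chiIco c (c - s) := by
  rcases le_or_gt s 0 with h | h
  · refine ⟨1, one_pos, fun ε h1 h2 => ?_⟩
    unfold chiIco
    rw [if_neg (by push_neg; intro hh; linarith), if_neg (by push_neg; intro hh; linarith)]
  rcases le_or_gt s c with h' | h'
  · refine ⟨s, h, fun ε h1 h2 => ?_⟩
    unfold chiIco
    rw [if_pos ⟨by linarith, by linarith⟩, if_pos ⟨by linarith, by linarith⟩]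
  · refine ⟨s - c, by linarith, fun ε h1 h2 => ?_⟩
    unfold chiIco
    rw [if_neg (by push_neg; intro hh; linarith), if_neg (by push_neg; intro hh; linarith)]

lemma Fj_neg {a b c : ℝ} {j k : ℤ} : k ∈ Fj a b c j ↔ -k ∈ Fj a b c (-j) := by
  simp only [Fj, Finset.mem_Icc]
  have e1 : ((-j : ℤ):ℝ)*a - c = -((j:ℝ)*a + c) := by push_cast; ring
  have e2 : ((-j : ℤ):ℝ)*a + c = -((j:ℝ)*a - c) := by push_cast; ring
  rw [e1, e2, neg_div, neg_div, Int.ceil_neg, Int.floor_neg]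
  omega

lemma mrow_exists_one {a b c t : ℝ} {x : ℤ → ℝ} (hx : ∀ k, x k = 0 ∨ x k = 1)
    {j : ℤ} (h : Mrow a b c t x j = 2) :
    ∃ k : ℤ, chiIco c (t - (j:ℝ)*a + (k:ℝ)*b) = 1 ∧ x k = 1 := by
  by_contra hcon
  push_neg at hcon
  have : Mrow a b c t x j = 0 := by
    rw [Mrow, tsum_eq_sum (s := ∅) ?_, Finset.sum_empty]
    intro k _
    rcases chiIco_cases c (t - (j:ℝ)*a + (k:ℝ)*b) with h0 | h1
    · rw [h0, zero_mul]
    · rcases hx k with h0 | hone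
      · rw [h0, mul_zero]
      · exact absurd hone (hcon k h1)
  rw [this] at h; norm_num at h

lemma Q_top_of_D_nonempty' {a b c : ℝ} (h : (Dset a b c).Nonempty) : Qabc a b c = ⊤ := by
  obtain ⟨t, x, hx, hx0, hrow⟩ := h
  by_contra hne
  obtain ⟨m, hm⟩ := WithTop.ne_top_iff_exists.mp hne
  have hle : ((m + 1 : ℕ) : ℕ∞) ≤ Qabc a b c := by
    apply le_iSup_of_le t
    apply le_iSup_of_le x
    apply le_iSup_of_le hx
    apply le_iSup_of_le (m + 1)
    apply le_iSup_of_le ⟨Nat.le_add_left 1 m, 0, fun i _ => hrow _⟩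
    exact le_rfl
  rw [← hm] at hle
  exact absurd (Nat.cast_le.mp hle) (by omega)

lemma key_extract {a b c : ℝ} (hb : 0 < b) (hQ : Qabc a b c = ⊤) (N : ℕ) :
    ∃ t : ℝ, (0 ≤ t ∧ t < c) ∧ ∃ x : ℤ → ℝ, (∀ k, x k = 0 ∨ x k = 1) ∧ x 0 = 1 ∧
      ∀ j : ℤ, |j| ≤ (N : ℤ) → Mrow a b c t x j = 2 := by
  have hlt : ((2 * N : ℕ) : ℕ∞) < Qabc a b c := hQ ▸ (by exact WithTop.coe_lt_top _)
  rw [Qabc, lt_iSup_iff] at hlt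
  obtain ⟨t, hlt⟩ := hlt
  rw [lt_iSup_iff] at hlt
  obtain ⟨x, hlt⟩ := hlt
  rw [lt_iSup_iff] at hlt
  obtain ⟨hx, hlt⟩ := hlt
  rw [lt_iSup_iff] at hlt
  obtain ⟨n, hlt⟩ := hlt
  rw [lt_iSup_iff] at hlt
  obtain ⟨⟨hn1, j, hj⟩, hlt⟩ := hlt
  have hnN : 2 * N < n := by exact_mod_cast hlt
  -- shift rows
  set t1 := t - ((j + N : ℤ) : ℝ) * a with ht1
  have hrow1 : ∀ j' : ℤ, |j'| ≤ (N : ℤ) → Mrow a b c t1 x j' = 2 := by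
    intro j' hj'
    rw [ht1, mrow_shift_j]
    rw [abs_le] at hj'
    have hi : ((j' + N).toNat : ℤ) = j' + N := Int.toNat_of_nonneg (by omega)
    have : j' + (j + N) = j + ((j' + N).toNat : ℤ) := by omega
    rw [this]
    exact hj _ (by omega)
  -- find k0 in row 0
  have h0 : Mrow a b c t1 x 0 = 2 := hrow1 0 (by simp)
  obtain ⟨k0, hchi, hxk0⟩ := mrow_exists_one hx h0
  rw [chiIco_eq_one_iff] at hchi
  simp only [Int.cast_zero, zero_mul, sub_zero] at hchi
  refine ⟨t1 + (k0 : ℝ) * b, hchi, fun k => x (k + k0), fun k => hx _, by simpa using hxk0, ?_⟩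
  intro j' hj'
  rw [mrow_shift_k]
  exact hrow1 j' hj'

open Filter in
lemma D_nonempty_of_Q_top {a b c : ℝ} (ha : 0 < a) (hab : a < b) (hbc : b < c)
    (hQ : Qabc a b c = ⊤) : (Dset a b c).Nonempty := by
  classical
  have hb : 0 < b := ha.trans hab
  have hc : 0 < c := hb.trans hbc
  choose T hT X hX hX0 hrows using fun N => key_extract hb hQ N
  set U : Ultrafilter ℕ := hyperfilter ℕ with hU
  -- limit point of T along U
  have hprin : ↑(U.map T) ≤ 𝓟 (Set.Icc (0:ℝ) c) := by
    rw [Ultrafilter.coe_map, le_principal_iff, mem_map]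
    refine mem_of_superset univ_mem fun n _ => ?_
    exact ⟨(hT n).1, le_of_lt (hT n).2⟩
  obtain ⟨t, ht, hconv⟩ := (isCompact_Icc).ultrafilter_le_nhds (U.map T) hprin
  rw [Ultrafilter.coe_map] at hconv
  have hTt : Tendsto T ↑U (nhds t) := hconv
  -- limit vector
  set x : ℤ → ℝ := fun k => if {n | X n k = 1} ∈ U then (1:ℝ) else 0 with hxdef
  have hxbin : ∀ k, x k = 0 ∨ x k = 1 := fun k => by
    by_cases h : {n | X n k = 1} ∈ U <;> simp [hxdef, h]
  have hx0' : x 0 = 1 := by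
    have hmem : {n | X n 0 = 1} ∈ U := mem_of_superset univ_mem fun n _ => hX0 n
    simp [hxdef, hmem]
  have hxlim : ∀ k, {n | X n k = x k} ∈ (U : Filter ℕ) := by
    intro k
    by_cases h : {n | X n k = 1} ∈ U
    · refine mem_of_superset h fun n hn => ?_
      simpa [hxdef, h] using hn
    · have h' : {n | X n k = 1}ᶜ ∈ U := Ultrafilter.compl_mem_iff_notMem.mpr h
      refine mem_of_superset h' fun n hn => ?_
      have : X n k = 0 := (hX n k).resolve_right hn
      simp [hxdef, h, this]
  have natle : ∀ m : ℕ, {n : ℕ | m ≤ n} ∈ (U : Filter ℕ) := by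
    intro m
    apply hyperfilter_le_cofinite
    rw [mem_cofinite]
    have : {n : ℕ | m ≤ n}ᶜ = Set.Iio m := by ext n; simp only [Set.mem_compl_iff, Set.mem_setOf_eq, not_le, Set.mem_Iio]
    rw [this]; exact Set.finite_Iio m
  have Tlt : ∀ δ : ℝ, 0 < δ → {n | T n < t + δ} ∈ (U : Filter ℕ) :=
    fun δ hδ => hTt (Iio_mem_nhds (by linarith) : Iio (t+δ) ∈ nhds t)
  have Tgt : ∀ δ : ℝ, 0 < δ → {n | t - δ < T n} ∈ (U : Filter ℕ) :=
    fun δ hδ => hTt (Ioi_mem_nhds (by linarith) : Ioi (t-δ) ∈ nhds t)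
  rcases U.mem_or_compl_mem {n | t ≤ T n} with hA | hB
  · -- approach from above: t itself works
    refine ⟨t, x, hxbin, hx0', fun j => ?_⟩
    choose δ hδpos hδ using fun k : ℤ => chi_right c (t - (j:ℝ)*a + (k:ℝ)*b)
    have hS : ({n | j.natAbs ≤ n} ∩ ({n | t ≤ T n} ∩
        ⋂ k ∈ Fj a b c j, ({n | X n k = x k} ∩ {n | T n < t + δ k}))) ∈ (U : Filter ℕ) := by
      refine inter_mem (natle _) (inter_mem hA ?_)
      refine (biInter_finset_mem _).mpr fun k _ => inter_mem (hxlim k) (Tlt _ (hδpos k))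
    obtain ⟨n, hn1, hn2, hn3⟩ := Filter.nonempty_of_mem hS
    have hrow_n : Mrow a b c (T n) (X n) j = 2 := by
      refine hrows n j ?_
      rw [Int.abs_eq_natAbs]; exact_mod_cast hn1
    rw [mrow_eq_sum hb (hT n).1 (le_of_lt (hT n).2)] at hrow_n
    rw [mrow_eq_sum hb ht.1 ht.2, ← hrow_n]
    refine Finset.sum_congr rfl fun k hk => ?_
    obtain ⟨hxk, hTk⟩ := Set.mem_iInter₂.mp hn3 k hk
    have heq := hδ k (T n - t) (by simpa using hn2) (by simp only [Set.mem_setOf_eq] at hTk; linarith)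
    have earg : t - (j:ℝ)*a + (k:ℝ)*b + (T n - t) = T n - (j:ℝ)*a + (k:ℝ)*b := by ring
    rw [earg] at heq
    rw [heq, hxk]
  · -- approach from below: reflect
    refine ⟨c - t, fun k => x (-k), fun k => hxbin _, by simpa using hx0', fun j => ?_⟩
    have h1 : (0:ℝ) ≤ c - t := by linarith [ht.2]
    have h2 : c - t ≤ c := by linarith [ht.1]
    choose δ hδpos hδ using fun m : ℤ => chi_left hc (t + (j:ℝ)*a + (m:ℝ)*b)
    have hS : ({n | (-j).natAbs ≤ n} ∩ ({n | t ≤ T n}ᶜ ∩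
        ⋂ m ∈ Fj a b c (-j), ({n | X n m = x m} ∩ {n | t - δ m < T n}))) ∈ (U : Filter ℕ) := by
      refine inter_mem (natle _) (inter_mem hB ?_)
      refine (biInter_finset_mem _).mpr fun m _ => inter_mem (hxlim m) (Tgt _ (hδpos m))
    obtain ⟨n, hn1, hn2, hn3⟩ := Filter.nonempty_of_mem hS
    have hTn : T n < t := not_le.mp hn2
    have hrow_n : Mrow a b c (T n) (X n) (-j) = 2 := by
      refine hrows n (-j) ?_
      rw [Int.abs_eq_natAbs]; exact_mod_cast hn1
    rw [mrow_eq_sum hb (hT n).1 (le_of_lt (hT n).2)] at hrow_n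
    rw [mrow_eq_sum hb h1 h2, ← hrow_n]
    refine Finset.sum_nbij' (Neg.neg) (Neg.neg) (fun k hk => Fj_neg.mp hk)
      (fun m hm => by simpa using Fj_neg.mpr (by simpa using hm)) (by simp) (by simp)
      (fun k hk => ?_)
    have hmem : -k ∈ Fj a b c (-j) := Fj_neg.mp hk
    obtain ⟨hxk, hTk⟩ := Set.mem_iInter₂.mp hn3 (-k) hmem
    have heq := hδ (-k) (t - T n) (by linarith) (by simp only [Set.mem_setOf_eq] at hTk; linarith)
    have earg1 : t + (j:ℝ)*a + ((-k : ℤ):ℝ)*b - (t - T n) = T n - ((-j : ℤ):ℝ)*a + ((-k : ℤ):ℝ)*b := by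
      push_cast; ring
    have earg2 : c - (t + (j:ℝ)*a + ((-k : ℤ):ℝ)*b) = c - t - (j:ℝ)*a + (k:ℝ)*b := by
      push_cast; ring
    rw [earg1, earg2] at heq
    rw [← heq, hxk]


/-- Lemma `dabc2toqabc`: `D_{a,b,c} = ∅` if and only if `Q_{a,b,c} < +∞`. -/
theorem D_empty_iff_Q_finite (a b c : ℝ) (ha : 0 < a) (hab : a < b) (hbc : b < c) :
    Dset a b c = ∅ ↔ Qabc a b c < ⊤ := by
  constructor
  · intro hD
    by_contra hlt
    rw [not_lt, top_le_iff] at hlt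
    obtain ⟨t, ht⟩ := D_nonempty_of_Q_top ha hab hbc hlt
    rw [hD] at ht
    exact ht
  · intro hQ
    rw [Set.eq_empty_iff_forall_notMem]
    intro t ht
    have := Q_top_of_D_nonempty' ⟨t, ht⟩
    rw [this] at hQ
    exact lt_irrefl _ hQ
end

section
/- Let (a,b,c) be a triple of positive real numbers with a < b < c, and suppose Q_{a,b,c} < +∞. Then for every t ∈ [0,b) and every complex vector z = (z(λ))_{λ∈bℤ}, one has Σ_{μ∈aℤ, 0 ≤ μ ≤ a·Q_{a,b,c}+2a+b+c} |(M_{a,b,c}(t)z)(μ)| ≥ (b/(2c))·|z(0)|. -/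
open MeasureTheory Set

/-- The row `μ = j·a` of `M_{a,b,c}(t)` applied to a complex vector. -/
noncomputable def MrowC (a b c t : ℝ) (z : ℤ → ℂ) (j : ℤ) : ℂ :=
  ∑' k : ℤ, ((chiIco c (t - (j : ℝ) * a + (k : ℝ) * b) : ℝ) : ℂ) * z k

namespace IMS

structure Nice (f g : ℤ → ℤ) : Prop where
  f1 : ∀ j, f j ≤ f (j + 1)
  f2 : ∀ j, f (j + 1) ≤ f j + 1
  g1 : ∀ j, g j ≤ g (j + 1)
  g2 : ∀ j, g (j + 1) ≤ g j + 1
  fg : ∀ j, f j < g j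

lemma mono_step {h : ℤ → ℤ} (h1 : ∀ j, h j ≤ h (j + 1)) {j j' : ℤ} (hj : j ≤ j') :
    h j ≤ h j' :=
  Int.le_induction (motive := fun n _ => h j ≤ h n) le_rfl (fun n _ ih => ih.trans (h1 n)) j' hj

lemma Nice.fmono {f g : ℤ → ℤ} (hN : Nice f g) {j j' : ℤ} (hj : j ≤ j') : f j ≤ f j' :=
  mono_step hN.f1 hj

lemma Nice.gmono {f g : ℤ → ℤ} (hN : Nice f g) {j j' : ℤ} (hj : j ≤ j') : g j ≤ g j' :=
  mono_step hN.g1 hj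

/-- one step of the chain dynamics at row `j`. -/
def cstep (f g : ℤ → ℤ) (j p : ℤ) : Option ℤ :=
  if f j = p + 1 then (if g j = g (j - 1) + 1 then some (g (j - 1)) else none) else some p

/-- the chain starting at column `v` in row `js`. -/
def chain (f g : ℤ → ℤ) (js v : ℤ) : ℕ → Option ℤ
  | 0 => some v
  | (i + 1) => (chain f g js v i).bind (cstep f g (js + (i : ℤ) + 1))

variable {f g : ℤ → ℤ}

lemma cstep_cases {j p q : ℤ} (h : cstep f g j p = some q) :
    (f j = p + 1 ∧ g j = g (j - 1) + 1 ∧ q = g (j - 1)) ∨ (¬ f j = p + 1 ∧ q = p) := by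
  unfold cstep at h
  by_cases h1 : f j = p + 1
  · rw [if_pos h1] at h
    by_cases h2 : g j = g (j - 1) + 1
    · rw [if_pos h2] at h
      exact Or.inl ⟨h1, h2, (Option.some_inj.mp h).symm⟩
    · rw [if_neg h2] at h; simp at h
  · rw [if_neg h1] at h
    exact Or.inr ⟨h1, (Option.some_inj.mp h).symm⟩

lemma cstep_none {j p : ℤ} (h : cstep f g j p = none) :
    f j = p + 1 ∧ ¬ g j = g (j - 1) + 1 := by
  unfold cstep at h
  by_cases h1 : f j = p + 1
  · rw [if_pos h1] at h
    by_cases h2 : g j = g (j - 1) + 1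
    · rw [if_pos h2] at h; simp at h
    · exact ⟨h1, h2⟩
  · rw [if_neg h1] at h; simp at h

lemma chain_succ (js v : ℤ) (i : ℕ) :
    chain f g js v (i + 1) = (chain f g js v i).bind (cstep f g (js + (i : ℤ) + 1)) := rfl

lemma chain_some_pred {js v p : ℤ} {i : ℕ} (h : chain f g js v (i + 1) = some p) :
    ∃ q, chain f g js v i = some q ∧ cstep f g (js + (i : ℤ) + 1) q = some p := by
  rw [chain_succ] at h
  cases hq : chain f g js v i with
  | none => rw [hq] at h; simp at h
  | some q => rw [hq] at h; exact ⟨q, rfl, h⟩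

/-- invariant: the chain stays inside its current row. -/
lemma chain_inv (hN : Nice f g) :
    ∀ (i : ℕ) {js v p : ℤ}, f js ≤ v → v < g js → chain f g js v i = some p →
      f (js + (i : ℤ)) ≤ p ∧ p < g (js + (i : ℤ)) := by
  intro i
  induction i with
  | zero =>
    intro js v p h1 h2 h3
    simp only [chain] at h3
    obtain rfl : v = p := Option.some_inj.mp h3
    simpa using ⟨h1, h2⟩
  | succ i ih =>
    intro js v p h1 h2 h3
    obtain ⟨q, hq, hs⟩ := chain_some_pred h3
    obtain ⟨hq1, hq2⟩ := ih h1 h2 hq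
    have e2 : js + ((i + 1 : ℕ) : ℤ) = js + (i : ℤ) + 1 := by push_cast; ring
    rw [e2]
    have hf2 := hN.f2 (js + (i : ℤ))
    have hg1 := hN.g1 (js + (i : ℤ))
    have e3 : js + (i : ℤ) + 1 = (js + (i : ℤ)) + 1 := by ring
    rcases cstep_cases hs with ⟨ha, hb, hc⟩ | ⟨ha, hb⟩
    · rw [show js + (i:ℤ) + 1 - 1 = js + (i:ℤ) by ring] at hb hc
      subst hc
      rw [e3] at hb ⊢
      omega
    · subst hb
      rw [e3] at ha ⊢
      omega

lemma chain_none_mono {js v : ℤ} {i : ℕ} (h : chain f g js v i = none) (d : ℕ) :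
    chain f g js v (i + d) = none := by
  induction d with
  | zero => exact h
  | succ d ih => rw [show i + (d+1) = (i+d) + 1 by ring, chain_succ, ih]; rfl

lemma chain_isSome_of_le {js v : ℤ} {i i' : ℕ} (hle : i ≤ i')
    (h : chain f g js v i' ≠ none) : ∃ p, chain f g js v i = some p := by
  cases hc : chain f g js v i with
  | none => exact absurd (by rw [show i' = i + (i' - i) by omega]; exact chain_none_mono hc _) h
  | some p => exact ⟨p, rfl⟩

/-- shift lemma -/
lemma chain_shift {js v p : ℤ} (h : chain f g js v 1 = some p) :
    ∀ i : ℕ, chain f g js v (i + 1) = chain f g (js + 1) p i := by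
  intro i
  induction i with
  | zero => exact h
  | succ i ih =>
    have e : js + ((i + 1 : ℕ) : ℤ) + 1 = (js + 1) + (i : ℤ) + 1 := by push_cast; ring
    rw [chain_succ, ih, chain_succ, e]


/-- the connectivity graph on partial-sum nodes, with one edge `(f j, g j)` for each row
`j ∈ [0, W]`. -/
def Gr (f g : ℤ → ℤ) (W : ℤ) : SimpleGraph ℤ :=
  SimpleGraph.fromRel (fun u w => ∃ j, 0 ≤ j ∧ j ≤ W ∧ f j = u ∧ g j = w)

lemma adj_of_row (hN : Nice f g) {W j : ℤ} (h0 : 0 ≤ j) (hW : j ≤ W) :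
    (Gr f g W).Adj (f j) (g j) :=
  ⟨(hN.fg j).ne, Or.inl ⟨j, h0, hW, rfl, rfl⟩⟩

/-- Main lemma A : if the chain starting at `(js, v)` dies within the window, then the
nodes `v` and `v+1` are connected. -/
lemma mainA (hN : Nice f g) (W : ℤ) :
    ∀ (n : ℕ) (js v : ℤ), 0 ≤ js → js + n + 1 ≤ W → f js ≤ v → v < g js →
      chain f g js v n = none → (Gr f g W).Reachable v (v + 1) := by
  intro n
  induction n with
  | zero => intro js v _ _ _ _ hc; simp [chain] at hc
  | succ n ih =>
    intro js v h0 hWn hfv hvg hdead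
    have hn0 : (0:ℤ) ≤ (n:ℤ) := Int.natCast_nonneg n
    have hjsW : js ≤ W := by
      have : js + ((n+1 : ℕ) : ℤ) + 1 ≤ W := hWn
      push_cast at this; omega
    have hjs1W : js + 1 ≤ W := by
      have : js + ((n+1 : ℕ) : ℤ) + 1 ≤ W := hWn
      push_cast at this; omega
    cases h1 : chain f g js v 1 with
    | none =>
      -- the chain dies immediately : drop at step js
      have h1' : cstep f g (js + 1) v = none := by
        have := h1
        rw [show (1:ℕ) = 0 + 1 by rfl, chain_succ] at this
        simpa [chain] using this
      obtain ⟨e1, e2⟩ := cstep_none h1'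
      rw [show js + 1 - 1 = js by ring] at e2
      have hgg : g (js + 1) = g js := by
        have := hN.g1 js; have := hN.g2 js; omega
      have hfjs : f js = v := by
        have := hN.f2 js; omega
      have adj1 : (Gr f g W).Adj v (g js) := by
        rw [← hfjs]; exact adj_of_row hN h0 hjsW
      have adj2 : (Gr f g W).Adj (v + 1) (g js) := by
        have : (Gr f g W).Adj (f (js+1)) (g (js+1)) := adj_of_row hN (by omega) hjs1W
        rwa [e1, hgg] at this
      exact adj1.reachable.trans adj2.reachable.symm
    | some p =>
      have hshift : chain f g (js + 1) p n = none := by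
        rw [← chain_shift h1 n]
        exact hdead
      by_cases hpv : p = v
      · subst hpv
        -- the chain did not move : f (js+1) ≤ p
        have h1' : cstep f g (js + 1) p = some p := by
          have := h1
          rw [show (1:ℕ) = 0 + 1 by rfl, chain_succ] at this
          simpa [chain] using this
        have hfle : f (js + 1) ≤ p := by
          rcases cstep_cases h1' with ⟨ha, hb, hc⟩ | ⟨ha, hb⟩
          · rw [show js + 1 - 1 = js by ring] at hc
            omega
          · have := hN.f2 js; omega
        exact ih (js + 1) p (by omega) (by push_cast at hWn ⊢; omega) hfle
          (lt_of_lt_of_le hvg (hN.g1 js)) hshift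
      · -- the chain moved : double jump at step js
        have h1' : cstep f g (js + 1) v = some p := by
          have := h1
          rw [show (1:ℕ) = 0 + 1 by rfl, chain_succ] at this
          simpa [chain] using this
        rcases cstep_cases h1' with ⟨ha, hb, hc⟩ | ⟨ha, hb⟩
        swap
        · exact absurd hb hpv
        rw [show js + 1 - 1 = js by ring] at hb hc
        subst hc
        have hfjs : f js = v := by have := hN.f2 js; omega
        have hreach : (Gr f g W).Reachable (g js) (g js + 1) :=
          ih (js + 1) (g js) (by omega) (by push_cast at hWn ⊢; omega)
            (by omega) (by omega) hshift
        have adj1 : (Gr f g W).Adj v (g js) := by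
          rw [← hfjs]; exact adj_of_row hN h0 hjsW
        have adj2 : (Gr f g W).Adj (v + 1) (g js + 1) := by
          have : (Gr f g W).Adj (f (js+1)) (g (js+1)) := adj_of_row hN (by omega) hjs1W
          rwa [ha, hb] at this
        exact adj1.reachable.trans (hreach.trans adj2.reachable.symm)

/-- separation lemma: once a chain changes column, its old column is strictly left of the
current row, and its new column is at or beyond the right end of the starting row. -/
lemma chain_sep (hN : Nice f g) {js v : ℤ} (hfv : f js ≤ v) (hvg : v < g js) :
    ∀ (d i : ℕ) {p p' : ℤ}, chain f g js v i = some p → chain f g js v (i + d) = some p' →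
      p = p' ∨ (p + 1 ≤ f (js + (i : ℤ) + (d : ℤ)) ∧ g (js + (i : ℤ)) ≤ p') := by
  intro d
  induction d with
  | zero =>
    intro i p p' hp hp'
    rw [Nat.add_zero] at hp'
    rw [hp] at hp'
    exact Or.inl (Option.some_inj.mp hp')
  | succ d ih =>
    intro i p p' hp hp'
    rw [show i + (d + 1) = (i + d) + 1 by ring] at hp'
    obtain ⟨q, hq, hs⟩ := chain_some_pred hp'
    have hinv := chain_inv hN (i + d) hfv hvg hq
    have hid : js + ((i + d : ℕ) : ℤ) = js + (i:ℤ) + (d:ℤ) := by push_cast; ring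
    rw [hid] at hinv
    have hcast : js + ((i + d : ℕ) : ℤ) + 1 = js + (i:ℤ) + (d:ℤ) + 1 := by push_cast; ring
    rw [hcast] at hs
    have hgoalidx : js + (i:ℤ) + ((d + 1 : ℕ) : ℤ) = js + (i:ℤ) + (d:ℤ) + 1 := by push_cast; ring
    rw [hgoalidx]
    have hgmono : g (js + (i:ℤ)) ≤ g (js + (i:ℤ) + (d:ℤ)) := hN.gmono (by omega)
    rcases ih i hp hq with rfl | ⟨hfp, hgq⟩
    · rcases cstep_cases hs with ⟨ha, hb, hc⟩ | ⟨ha, hb⟩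
      · rw [show js + (i:ℤ) + (d:ℤ) + 1 - 1 = js + (i:ℤ) + (d:ℤ) by ring] at hc
        subst hc
        exact Or.inr ⟨by omega, by omega⟩
      · subst hb
        exact Or.inl rfl
    · refine Or.inr ⟨?_, ?_⟩
      · have := hN.f1 (js + (i:ℤ) + (d:ℤ))
        omega
      · rcases cstep_cases hs with ⟨ha, hb, hc⟩ | ⟨ha, hb⟩
        · rw [show js + (i:ℤ) + (d:ℤ) + 1 - 1 = js + (i:ℤ) + (d:ℤ) by ring] at hc
          omega
        · omega

/-- two chains starting at distinct columns of the same row never collide. -/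
lemma chain_ne (hN : Nice f g) {js v1 v2 : ℤ} (h1a : f js ≤ v1) (h1b : v1 < g js)
    (h2a : f js ≤ v2) (h2b : v2 < g js) (hne : v1 ≠ v2) :
    ∀ (i : ℕ) {p q : ℤ}, chain f g js v1 i = some p → chain f g js v2 i = some q → p ≠ q := by
  intro i
  induction i with
  | zero =>
    intro p q hp hq
    simp only [chain] at hp hq
    obtain rfl := Option.some_inj.mp hp
    obtain rfl := Option.some_inj.mp hq
    exact hne
  | succ i ih =>
    intro p q hp hq
    obtain ⟨p0, hp0, hsp⟩ := chain_some_pred hp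
    obtain ⟨q0, hq0, hsq⟩ := chain_some_pred hq
    have hne0 := ih hp0 hq0
    have hinv1 := chain_inv hN i h1a h1b hp0
    have hinv2 := chain_inv hN i h2a h2b hq0
    have hidx : js + (i:ℤ) + 1 - 1 = js + (i:ℤ) := by ring
    rcases cstep_cases hsp with ⟨ha1, hb1, hc1⟩ | ⟨ha1, hc1⟩ <;>
      rcases cstep_cases hsq with ⟨ha2, hb2, hc2⟩ | ⟨ha2, hc2⟩
    · exact absurd (by omega : p0 = q0) hne0
    · rw [hidx] at hc1; subst hc1; subst hc2; omega
    · rw [hidx] at hc2; subst hc1; subst hc2; omega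
    · subst hc1; subst hc2; exact hne0

/-- a visited column of a chain which lies in the row at time `i0` must be the chain's
current column. -/
lemma chain_loc (hN : Nice f g) {js v : ℤ} (hfv : f js ≤ v) (hvg : v < g js)
    {i i0 : ℕ} {k p0 : ℤ} (hk : chain f g js v i = some k) (h0 : chain f g js v i0 = some p0)
    (hm1 : f (js + (i0:ℤ)) ≤ k) (hm2 : k < g (js + (i0:ℤ))) : k = p0 := by
  rcases le_total i i0 with hle | hle
  · have h := chain_sep hN hfv hvg (i0 - i) i hk (by rw [show i + (i0 - i) = i0 by omega]; exact h0)
    rcases h with h | ⟨h1, h2⟩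
    · exact h
    · rw [show js + (i:ℤ) + ((i0 - i : ℕ) : ℤ) = js + (i0:ℤ) by push_cast; omega] at h1
      omega
  · have h := chain_sep hN hfv hvg (i - i0) i0 h0 (by rw [show i0 + (i - i0) = i by omega]; exact hk)
    rcases h with h | ⟨h1, h2⟩
    · exact h.symm
    · omega

/-- Main lemma B : two chains surviving `n` steps give a binary vector with a run of
`n+1` rows summing to `2`. -/
lemma mainB (hN : Nice f g) {js v1 v2 : ℤ} (h1a : f js ≤ v1) (h1b : v1 < g js)
    (h2a : f js ≤ v2) (h2b : v2 < g js) (hne : v1 ≠ v2) (n : ℕ)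
    (alive1 : chain f g js v1 n ≠ none) (alive2 : chain f g js v2 n ≠ none) :
    ∃ x : ℤ → ℝ, (∀ k, x k = 0 ∨ x k = 1) ∧
      ∀ i : ℕ, i ≤ n → ∑ k ∈ Finset.Ico (f (js + (i:ℤ))) (g (js + (i:ℤ))), x k = 2 := by
  classical
  set P : ℤ → Prop := fun k =>
    ∃ i, i ≤ n ∧ (chain f g js v1 i = some k ∨ chain f g js v2 i = some k) with hPdef
  refine ⟨fun k => if P k then 1 else 0, fun k => by by_cases h : P k <;> simp [h], ?_⟩
  intro i0 hi0
  obtain ⟨p0, hp0⟩ := chain_isSome_of_le hi0 alive1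
  obtain ⟨q0, hq0⟩ := chain_isSome_of_le hi0 alive2
  have hpq : p0 ≠ q0 := chain_ne hN h1a h1b h2a h2b hne i0 hp0 hq0
  have hinv1 := chain_inv hN i0 h1a h1b hp0
  have hinv2 := chain_inv hN i0 h2a h2b hq0
  have hfilter : (Finset.Ico (f (js + (i0:ℤ))) (g (js + (i0:ℤ)))).filter P = {p0, q0} := by
    ext k
    simp only [Finset.mem_filter, Finset.mem_Ico, Finset.mem_insert, Finset.mem_singleton]
    constructor
    · rintro ⟨⟨hk1, hk2⟩, i, hi, hcase | hcase⟩
      · exact Or.inl (chain_loc hN h1a h1b hcase hp0 hk1 hk2)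
      · exact Or.inr (chain_loc hN h2a h2b hcase hq0 hk1 hk2)
    · rintro (rfl | rfl)
      · exact ⟨⟨hinv1.1, hinv1.2⟩, i0, hi0, Or.inl hp0⟩
      · exact ⟨⟨hinv2.1, hinv2.2⟩, i0, hi0, Or.inr hq0⟩
  rw [Finset.sum_boole, hfilter]
  rw [Finset.card_insert_of_notMem (by simpa using hpq), Finset.card_singleton]
  norm_num

lemma ladder {G : SimpleGraph ℤ} :
    ∀ s : ℕ, (∀ v : ℤ, 1 ≤ v → v < 1 + (s:ℤ) → G.Reachable v (v + 1)) →
      G.Reachable 1 (1 + (s:ℤ)) := by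
  intro s
  induction s with
  | zero =>
    intro _
    rw [show (1 : ℤ) + ((0 : ℕ) : ℤ) = 1 by norm_num]
  | succ s ih =>
    intro h
    have h1 := ih (fun v hv hlt => h v hv (by push_cast at hlt ⊢; omega))
    have h2 := h (1 + (s:ℤ)) (by omega) (by push_cast; omega)
    have h3 := h1.trans h2
    rw [show (1 : ℤ) + ((s + 1 : ℕ) : ℤ) = (1 + (s:ℤ)) + 1 by push_cast; ring]
    exact h3

noncomputable def wt (S : ℤ → ℂ) : Sym2 ℤ → ℝ :=
  Sym2.lift ⟨fun u v => ‖S u - S v‖, fun u v => norm_sub_rev (S u) (S v)⟩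

lemma wt_mk (S : ℤ → ℂ) (u v : ℤ) : wt S s(u, v) = ‖S u - S v‖ := by
  simp [wt]

lemma walk_sum {G : SimpleGraph ℤ} (S : ℤ → ℂ) : ∀ {u v : ℤ} (w : G.Walk u v),
    ‖S u - S v‖ ≤ (w.edges.map (wt S)).sum := by
  intro u v w
  induction w with
  | nil => simp
  | @cons u v w h p ih =>
    rw [SimpleGraph.Walk.edges_cons, List.map_cons, List.sum_cons]
    have h1 : ‖S u - S w‖ ≤ ‖S u - S v‖ + ‖S v - S w‖ := norm_sub_le_norm_sub_add_norm_sub _ _ _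
    have h2 : wt S s(u, v) = ‖S u - S v‖ := wt_mk S u v
    linarith

lemma reach_bound (hN : Nice f g) {W : ℤ} (S : ℤ → ℂ) (R : ℤ → ℝ)
    (hR : ∀ j, 0 ≤ j → j ≤ W → ‖S (f j) - S (g j)‖ = R j) (hRnn : ∀ j, 0 ≤ R j)
    {u v : ℤ} (hreach : (Gr f g W).Reachable u v) :
    ‖S u - S v‖ ≤ ∑ j ∈ Finset.Icc 0 W, R j := by
  classical
  obtain ⟨w0⟩ := hreach
  set p := w0.bypass with hpdef
  have hpath := w0.bypass_isPath
  have hnodup : p.edges.Nodup := hpath.isTrail.edges_nodup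
  have hbound := walk_sum S p
  have hsum : (p.edges.map (wt S)).sum = ∑ e ∈ p.edges.toFinset, wt S e :=
    (List.sum_toFinset _ hnodup).symm
  have hP : ∀ e ∈ p.edges.toFinset, ∃ j, (0 ≤ j ∧ j ≤ W) ∧ s(f j, g j) = e := by
    intro e he
    have he' : e ∈ (Gr f g W).edgeSet := p.edges_subset_edgeSet (List.mem_toFinset.mp he)
    induction e using Sym2.ind with
    | _ u' v' =>
      rw [SimpleGraph.mem_edgeSet] at he'
      obtain ⟨hne, hor⟩ := he'
      rcases hor with ⟨j, hj0, hjW, hu, hv⟩ | ⟨j, hj0, hjW, hu, hv⟩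
      · exact ⟨j, ⟨hj0, hjW⟩, by rw [hu, hv]⟩
      · exact ⟨j, ⟨hj0, hjW⟩, by rw [hu, hv]; exact Sym2.eq_swap⟩
  set jof : Sym2 ℤ → ℤ :=
    fun e => if h : ∃ j, (0 ≤ j ∧ j ≤ W) ∧ s(f j, g j) = e then h.choose else 0 with hjof
  have hspec : ∀ e ∈ p.edges.toFinset, (0 ≤ jof e ∧ jof e ≤ W) ∧ s(f (jof e), g (jof e)) = e := by
    intro e he
    have h := hP e he
    rw [hjof]
    simp only
    rw [dif_pos h]
    exact h.choose_spec
  have hwt : ∀ e ∈ p.edges.toFinset, wt S e = R (jof e) := by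
    intro e he
    obtain ⟨⟨h0, hW'⟩, heq⟩ := hspec e he
    have hh : wt S s(f (jof e), g (jof e)) = R (jof e) := by rw [wt_mk, hR _ h0 hW']
    rw [← hh, heq]
  have hinj : ∀ e1 ∈ p.edges.toFinset, ∀ e2 ∈ p.edges.toFinset, jof e1 = jof e2 → e1 = e2 := by
    intro e1 h1 e2 h2 heq
    rw [← (hspec e1 h1).2, ← (hspec e2 h2).2, heq]
  have himg : ∑ j ∈ p.edges.toFinset.image jof, R j = ∑ e ∈ p.edges.toFinset, R (jof e) :=
    Finset.sum_image hinj
  have hsub : p.edges.toFinset.image jof ⊆ Finset.Icc 0 W := by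
    intro j hj
    obtain ⟨e, he, rfl⟩ := Finset.mem_image.mp hj
    exact Finset.mem_Icc.mpr ⟨(hspec e he).1.1, (hspec e he).1.2⟩
  calc ‖S u - S v‖ ≤ (p.edges.map (wt S)).sum := hbound
    _ = ∑ e ∈ p.edges.toFinset, wt S e := hsum
    _ = ∑ e ∈ p.edges.toFinset, R (jof e) := Finset.sum_congr rfl hwt
    _ = ∑ j ∈ p.edges.toFinset.image jof, R j := himg.symm
    _ ≤ ∑ j ∈ Finset.Icc 0 W, R j :=
        Finset.sum_le_sum_of_subset_of_nonneg hsub (fun j _ _ => hRnn j)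

noncomputable def ff (a b t : ℝ) (j : ℤ) : ℤ := ⌈((j:ℝ) * a - t) / b⌉

noncomputable def gg (a b c t : ℝ) (j : ℤ) : ℤ := ⌈((j:ℝ) * a - t + c) / b⌉

lemma shiftone {b : ℝ} (hb : 0 < b) (x : ℝ) : (x + b) / b = x / b + 1 := by
  field_simp

lemma nice_ffgg (a b c t : ℝ) (ha : 0 < a) (hab : a < b) (hbc : b < c) :
    Nice (ff a b t) (gg a b c t) := by
  have hb : (0:ℝ) < b := lt_trans ha hab
  constructor
  · intro j
    apply Int.ceil_mono
    apply (div_le_div_iff_of_pos_right hb).mpr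
    push_cast
    nlinarith
  · intro j
    rw [ff, ff, ← Int.ceil_add_one]
    apply Int.ceil_mono
    rw [← shiftone hb]
    apply (div_le_div_iff_of_pos_right hb).mpr
    push_cast
    nlinarith
  · intro j
    apply Int.ceil_mono
    apply (div_le_div_iff_of_pos_right hb).mpr
    push_cast
    nlinarith
  · intro j
    rw [gg, gg, ← Int.ceil_add_one]
    apply Int.ceil_mono
    rw [← shiftone hb]
    apply (div_le_div_iff_of_pos_right hb).mpr
    push_cast
    nlinarith
  · intro j
    rw [Int.lt_iff_add_one_le, ff, gg, ← Int.ceil_add_one]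
    apply Int.ceil_mono
    rw [← shiftone hb]
    apply (div_le_div_iff_of_pos_right hb).mpr
    nlinarith

lemma ff_zero {a b t : ℝ} (ha : 0 < a) (hb : 0 < b) (ht0 : 0 ≤ t) (htb : t < b) :
    ff a b t 0 = 0 := by
  have h1 : ff a b t 0 ≤ 0 := by
    apply Int.ceil_le.mpr
    push_cast
    apply div_nonpos_of_nonpos_of_nonneg <;> nlinarith
  have h2 : (-1 : ℤ) < ff a b t 0 := by
    rw [ff, Int.lt_ceil]
    push_cast
    rw [lt_div_iff₀ hb]
    nlinarith
  omega

lemma mem_row_iff (a b c t : ℝ) (hb : 0 < b) (j k : ℤ) :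
    (ff a b t j ≤ k ∧ k < gg a b c t j) ↔
      (0 ≤ t - (j:ℝ)*a + (k:ℝ)*b ∧ t - (j:ℝ)*a + (k:ℝ)*b < c) := by
  rw [ff, gg, Int.ceil_le, Int.lt_ceil, div_le_iff₀ hb, lt_div_iff₀ hb]
  constructor <;> intro h <;> constructor <;> nlinarith [h.1, h.2]

lemma Mrow_eq (a b c t : ℝ) (hb : 0 < b) (x : ℤ → ℝ) (j : ℤ) :
    Mrow a b c t x j = ∑ k ∈ Finset.Ico (ff a b t j) (gg a b c t j), x k := by
  rw [Mrow]
  have hvanish : ∀ k ∉ Finset.Ico (ff a b t j) (gg a b c t j),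
      chiIco c (t - (j:ℝ)*a + (k:ℝ)*b) * x k = 0 := by
    intro k hk
    rw [Finset.mem_Ico] at hk
    have h : ¬ (0 ≤ t - (j:ℝ)*a + (k:ℝ)*b ∧ t - (j:ℝ)*a + (k:ℝ)*b < c) :=
      fun hcc => hk ((mem_row_iff a b c t hb j k).mpr hcc)
    rw [chiIco, if_neg h, zero_mul]
  rw [tsum_eq_sum hvanish]
  apply Finset.sum_congr rfl
  intro k hk
  rw [Finset.mem_Ico] at hk
  have h := (mem_row_iff a b c t hb j k).mp hk
  rw [chiIco, if_pos h, one_mul]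

lemma MrowC_eq (a b c t : ℝ) (hb : 0 < b) (z : ℤ → ℂ) (j : ℤ) :
    MrowC a b c t z j = ∑ k ∈ Finset.Ico (ff a b t j) (gg a b c t j), z k := by
  rw [MrowC]
  have hvanish : ∀ k ∉ Finset.Ico (ff a b t j) (gg a b c t j),
      ((chiIco c (t - (j:ℝ)*a + (k:ℝ)*b) : ℝ) : ℂ) * z k = 0 := by
    intro k hk
    rw [Finset.mem_Ico] at hk
    have h : ¬ (0 ≤ t - (j:ℝ)*a + (k:ℝ)*b ∧ t - (j:ℝ)*a + (k:ℝ)*b < c) :=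
      fun hcc => hk ((mem_row_iff a b c t hb j k).mpr hcc)
    rw [chiIco, if_neg h]
    norm_num
  rw [tsum_eq_sum hvanish]
  apply Finset.sum_congr rfl
  intro k hk
  rw [Finset.mem_Ico] at hk
  have h := (mem_row_iff a b c t hb j k).mp hk
  rw [chiIco, if_pos h]
  norm_num

lemma qabc_ge (a b c t : ℝ) (x : ℤ → ℝ) (hx : ∀ k, x k = 0 ∨ x k = 1) (n : ℕ) (hn : 1 ≤ n)
    (j : ℤ) (hrun : ∀ i : ℕ, i < n → Mrow a b c t x (j + (i:ℤ)) = 2) :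
    (n : ℕ∞) ≤ Qabc a b c :=
  le_iSup_of_le t (le_iSup_of_le x (le_iSup_of_le hx (le_iSup_of_le n
    (le_iSup_of_le ⟨hn, j, hrun⟩ le_rfl))))

/-- partial sums -/
noncomputable def pS (z : ℤ → ℂ) (m : ℤ) : ℂ := ∑ k ∈ Finset.Ico (0:ℤ) m, z k

lemma pS_zero (z : ℤ → ℂ) : pS z 0 = 0 := by
  rw [pS, Finset.Ico_self, Finset.sum_empty]

lemma pS_one (z : ℤ → ℂ) : pS z 1 = z 0 := by
  rw [pS]
  have h : Finset.Ico (0:ℤ) 1 = {0} := by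
    ext k; simp only [Finset.mem_Ico, Finset.mem_singleton]; omega
  rw [h, Finset.sum_singleton]

lemma pS_telescope (z : ℤ → ℂ) {m m' : ℤ} (h0 : 0 ≤ m) (hm : m ≤ m') :
    pS z m + ∑ k ∈ Finset.Ico m m', z k = pS z m' := by
  rw [pS, pS, ← Finset.sum_union (Finset.Ico_disjoint_Ico_consecutive 0 m m'),
    Finset.Ico_union_Ico_eq_Ico h0 hm]

end IMS

open Classical in
/-- Lemma `infinitematrixstability`: if `Q_{a,b,c} < +∞`, then for every `t ∈ [0,b)` and every
complex vector `z`, `Σ_{μ∈aℤ, 0 ≤ μ ≤ aQ_{a,b,c}+2a+b+c} |(M_{a,b,c}(t)z)(μ)| ≥ (b/(2c))·|z(0)|`. -/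
theorem infinite_matrix_stability (a b c : ℝ) (ha : 0 < a) (hab : a < b) (hbc : b < c)
    (hQ : Qabc a b c < ⊤) :
    ∀ t ∈ Set.Ico (0 : ℝ) b, ∀ z : ℤ → ℂ,
      (b / (2 * c)) * ‖z 0‖ ≤
        ∑' j : ℤ,
          (if 0 ≤ (j : ℝ) * a ∧
              (j : ℝ) * a ≤ a * ((Qabc a b c).toNat : ℝ) + 2 * a + b + c then
            ‖MrowC a b c t z j‖ else 0) := by
  intro t ht z
  obtain ⟨ht0, htb⟩ := ht
  have hb : (0:ℝ) < b := lt_trans ha hab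
  have hc0 : (0:ℝ) < c := lt_trans hb hbc
  set Q : ℕ := (Qabc a b c).toNat with hQdef
  set f : ℤ → ℤ := IMS.ff a b t with hfdef
  set g : ℤ → ℤ := IMS.gg a b c t with hgdef
  have hN : IMS.Nice f g := IMS.nice_ffgg a b c t ha hab hbc
  set W : ℤ := ⌊(a * (Q:ℝ) + 2*a + b + c)/a⌋ with hWdef
  have hW1 : (Q:ℤ) + 2 ≤ W := by
    rw [hWdef]
    apply Int.le_floor.mpr
    rw [le_div_iff₀ ha]
    push_cast
    nlinarith
  have hff0 : f 0 = 0 := IMS.ff_zero ha hb ht0 htb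
  have hg0pos : 0 < g 0 := by have := hN.fg 0; omega
  have hQn : (Qabc a b c) ≠ ⊤ := hQ.ne
  have hreach : (IMS.Gr f g W).Reachable 0 1 := by
    by_cases hdead0 : IMS.chain f g 0 0 Q = none
    · have h := IMS.mainA hN W Q 0 0 le_rfl (by omega) (le_of_eq hff0) (by omega) hdead0
      simpa using h
    · by_cases hsur : ∃ v, 1 ≤ v ∧ v < g 0 ∧ IMS.chain f g 0 v Q ≠ none
      · exfalso
        obtain ⟨v, hv1, hv2, hvs⟩ := hsur
        obtain ⟨x, hxbin, hxrow⟩ := IMS.mainB hN (js := 0) (v1 := 0) (v2 := v)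
          (le_of_eq hff0) (by omega) (by rw [hff0]; omega) hv2 (by omega) Q hdead0 hvs
        have hrun : ∀ i : ℕ, i < Q + 1 → Mrow a b c t x ((0:ℤ) + (i:ℤ)) = 2 := by
          intro i hi
          rw [IMS.Mrow_eq a b c t hb x ((0:ℤ) + (i:ℤ))]
          exact hxrow i (by omega)
        have hle : ((Q+1 : ℕ) : ℕ∞) ≤ Qabc a b c :=
          IMS.qabc_ge a b c t x hxbin (Q+1) (by omega) 0 hrun
        rw [← ENat.coe_toNat hQn] at hle
        have : Q + 1 ≤ Q := by exact_mod_cast hle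
        omega
      · push_neg at hsur
        have hall : ∀ v : ℤ, 1 ≤ v → v < g 0 → (IMS.Gr f g W).Reachable v (v+1) := by
          intro v hv1 hv2
          exact IMS.mainA hN W Q 0 v le_rfl (by omega) (by rw [hff0]; omega) (by omega)
            (hsur v hv1 hv2)
        have hlad : (IMS.Gr f g W).Reachable 1 (g 0) := by
          have hs : ((g 0 - 1).toNat : ℤ) = g 0 - 1 := Int.toNat_of_nonneg (by omega)
          have h := IMS.ladder (g 0 - 1).toNat (fun v hv hlt => hall v hv (by omega))
          rwa [show (1:ℤ) + (((g 0 - 1).toNat : ℕ) : ℤ) = g 0 by omega] at h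
        have hadj : (IMS.Gr f g W).Adj 0 (g 0) := by
          have h := IMS.adj_of_row hN (le_refl (0:ℤ)) (by omega : (0:ℤ) ≤ W)
          rwa [hff0] at h
        exact hadj.reachable.trans hlad.symm
  have hfnn : ∀ j : ℤ, 0 ≤ j → 0 ≤ f j := by
    intro j hj
    rw [← hff0]
    exact hN.fmono hj
  have hR : ∀ j, 0 ≤ j → j ≤ W → ‖IMS.pS z (f j) - IMS.pS z (g j)‖ = ‖MrowC a b c t z j‖ := by
    intro j hj0 hjW
    have h1 : MrowC a b c t z j = ∑ k ∈ Finset.Ico (f j) (g j), z k :=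
      IMS.MrowC_eq a b c t hb z j
    have h2 : IMS.pS z (f j) + ∑ k ∈ Finset.Ico (f j) (g j), z k = IMS.pS z (g j) :=
      IMS.pS_telescope z (hfnn j hj0) (hN.fg j).le
    have h3 : IMS.pS z (f j) - IMS.pS z (g j) = -(MrowC a b c t z j) := by
      rw [h1]
      linear_combination h2
    rw [h3, norm_neg]
  have hmain : ‖z 0‖ ≤ ∑ j ∈ Finset.Icc 0 W, ‖MrowC a b c t z j‖ := by
    have h := IMS.reach_bound hN (IMS.pS z) (fun j => ‖MrowC a b c t z j‖) hR
      (fun j => norm_nonneg _) hreach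
    rwa [IMS.pS_zero, IMS.pS_one, zero_sub, norm_neg] at h
  have hts : (∑' j : ℤ, (if 0 ≤ (j:ℝ)*a ∧ (j:ℝ)*a ≤ a * ((Q : ℕ) : ℝ) + 2*a + b + c then
      ‖MrowC a b c t z j‖ else 0)) = ∑ j ∈ Finset.Icc 0 W, ‖MrowC a b c t z j‖ := by
    have hvanish : ∀ j ∉ Finset.Icc (0:ℤ) W,
        (if 0 ≤ (j:ℝ)*a ∧ (j:ℝ)*a ≤ a * ((Q : ℕ) : ℝ) + 2*a + b + c then
          ‖MrowC a b c t z j‖ else 0) = 0 := by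
      intro j hj
      have hnc : ¬ (0 ≤ (j:ℝ)*a ∧ (j:ℝ)*a ≤ a * ((Q : ℕ) : ℝ) + 2*a + b + c) := by
        rintro ⟨hc1, hc2⟩
        apply hj
        rw [Finset.mem_Icc]
        constructor
        · by_contra hneg
          push_neg at hneg
          have hjr : (j:ℝ) < 0 := by exact_mod_cast hneg
          nlinarith
        · rw [hWdef]
          apply Int.le_floor.mpr
          rw [le_div_iff₀ ha]
          exact hc2
      rw [if_neg hnc]
    rw [tsum_eq_sum hvanish]
    apply Finset.sum_congr rfl
    intro j hj
    rw [Finset.mem_Icc] at hj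
    have hjr : (0:ℝ) ≤ (j:ℝ) := by exact_mod_cast hj.1
    rw [if_pos]
    constructor
    · exact mul_nonneg hjr ha.le
    · have h1 : (j:ℝ) ≤ (W:ℝ) := by exact_mod_cast hj.2
      have h2 : (W:ℝ) ≤ (a * ((Q : ℕ) : ℝ) + 2*a + b + c)/a := by
        rw [hWdef]; exact Int.floor_le _
      calc (j:ℝ)*a ≤ ((a * ((Q : ℕ) : ℝ) + 2*a + b + c)/a)*a :=
            mul_le_mul_of_nonneg_right (h1.trans h2) ha.le
        _ = a * ((Q : ℕ) : ℝ) + 2*a + b + c := div_mul_cancel₀ _ ha.ne'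
  rw [hts]
  have hle1 : b / (2*c) ≤ 1 := by
    rw [div_le_one (by linarith)]
    linarith
  calc (b/(2*c)) * ‖z 0‖ ≤ 1 * ‖z 0‖ := mul_le_mul_of_nonneg_right hle1 (norm_nonneg _)
    _ = ‖z 0‖ := one_mul _
    _ ≤ _ := hmain
end

section
/- Let (a,b,c) be a triple of positive real numbers with a < b < c, set c₀ := c − ⌊c/b⌋·b, (c₀+a−b)₊ := max(c₀+a−b, 0), c₀∧a := min(c₀, a), and define λ_{a,b,c}(t) := ⌊c/b⌋b + b if t ∈ [0, (c₀+a−b)₊) + aℤ, λ_{a,b,c}(t) := 0 if t ∈ [(c₀+a−b)₊, c₀∧a) + aℤ, λ_{a,b,c}(t) := ⌊c/b⌋b if t ∈ [c₀∧a, a) + aℤ; and λ̃_{a,b,c}(t) := −⌊c/b⌋b − b if t ∈ [c−(c₀+a−b)₊, c) + aℤ, λ̃_{a,b,c}(t) := 0 if t ∈ [c−c₀∧a, c−(c₀+a−b)₊) + aℤ, λ̃_{a,b,c}(t) := −⌊c/b⌋b if t ∈ [c−a, c−c₀∧a) + aℤ. Then: (i) S_{a,b,c} ∩ (([(c₀+a−b)₊,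 c₀∧a) ∪ [c−c₀∧a, c−(c₀+a−b)₊)) + aℤ) = ∅; and (ii) for every t ∈ S_{a,b,c} and every x ∈ B_b⁰ with M_{a,b,c}(t)x = 1: x(λ) = 0 for every λ ∈ bℤ with λ̃_{a,b,c}(t) < λ < λ_{a,b,c}(t) and λ ≠ 0, while x(λ̃_{a,b,c}(t)) = x(0) = x(λ_{a,b,c}(t)) = 1. -/
open MeasureTheory Set

/-- The periodic set `X + aℤ = {x + ka : x ∈ X, k ∈ ℤ}`. -/
def perSet (a : ℝ) (X : Set ℝ) : Set ℝ := {t : ℝ | ∃ k : ℤ, t - (k : ℝ) * a ∈ X}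

/- The function `λ_{a,b,c}`. -/
open Classical in
noncomputable def lamF (a b c : ℝ) (t : ℝ) : ℝ :=
  if t ∈ perSet a (Set.Ico 0 (max ((c - (⌊c / b⌋ : ℝ) * b) + a - b) 0)) then
    (⌊c / b⌋ : ℝ) * b + b
  else if t ∈ perSet a (Set.Ico (max ((c - (⌊c / b⌋ : ℝ) * b) + a - b) 0)
      (min (c - (⌊c / b⌋ : ℝ) * b) a)) then 0
  else (⌊c / b⌋ : ℝ) * b

/- The function `λ̃_{a,b,c}`. -/
open Classical in
noncomputable def lamTilF (a b c : ℝ) (t : ℝ) : ℝ :=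
  if t ∈ perSet a (Set.Ico (c - max ((c - (⌊c / b⌋ : ℝ) * b) + a - b) 0) c) then
    -((⌊c / b⌋ : ℝ) * b) - b
  else if t ∈ perSet a (Set.Ico (c - min (c - (⌊c / b⌋ : ℝ) * b) a)
      (c - max ((c - (⌊c / b⌋ : ℝ) * b) + a - b) 0)) then 0
  else -((⌊c / b⌋ : ℝ) * b)

noncomputable def rho (a s : ℝ) : ℝ := s - (⌊s / a⌋ : ℝ) * a

lemma floor_mul_le {a : ℝ} (ha : 0 < a) (s : ℝ) : (⌊s / a⌋ : ℝ) * a ≤ s := by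
  have h := Int.floor_le (s / a)
  calc (⌊s / a⌋ : ℝ) * a ≤ (s / a) * a := mul_le_mul_of_nonneg_right h ha.le
    _ = s := div_mul_cancel₀ s (ne_of_gt ha)

lemma lt_floor_mul_add {a : ℝ} (ha : 0 < a) (s : ℝ) : s < (⌊s / a⌋ : ℝ) * a + a := by
  have h := Int.lt_floor_add_one (s / a)
  have : s < ((⌊s / a⌋ : ℝ) + 1) * a := by
    calc s = (s / a) * a := (div_mul_cancel₀ s (ne_of_gt ha)).symm
      _ < ((⌊s / a⌋ : ℝ) + 1) * a := mul_lt_mul_of_pos_right h ha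
  linarith [this]

lemma rho_nonneg {a : ℝ} (ha : 0 < a) (s : ℝ) : 0 ≤ rho a s := by
  have := floor_mul_le ha s; unfold rho; linarith

lemma rho_lt {a : ℝ} (ha : 0 < a) (s : ℝ) : rho a s < a := by
  have := lt_floor_mul_add ha s; unfold rho; linarith

lemma intlt {b : ℝ} (hb : 0 < b) {y z : ℤ} (h : (y:ℝ)*b < (z:ℝ)*b) : y < z := by
  have : (y:ℝ) < z := lt_of_mul_lt_mul_right h hb.le
  exact_mod_cast this

lemma perSet_Ico_iff {a : ℝ} (ha : 0 < a) {α β : ℝ} (hα : 0 ≤ α) (hβ : β ≤ a) (t : ℝ) :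
    t ∈ perSet a (Set.Ico α β) ↔ (α ≤ rho a t ∧ rho a t < β) := by
  simp only [perSet, Set.mem_setOf_eq, Set.mem_Ico]
  constructor
  · rintro ⟨k, h1, h2⟩
    have hk : ⌊t / a⌋ = k := by
      rw [Int.floor_eq_iff]
      constructor
      · rw [le_div_iff₀ ha]; linarith
      · rw [div_lt_iff₀ ha]; push_cast; linarith
    unfold rho; rw [hk]; exact ⟨by linarith, by linarith⟩
  · rintro ⟨h1, h2⟩
    unfold rho at h1 h2
    exact ⟨⌊t/a⌋, h1, h2⟩

lemma perSet_Ico_sub_iff {a : ℝ} (ha : 0 < a) {α β : ℝ} (hα : 0 ≤ α) (hβ : β ≤ a) (c t : ℝ) :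
    t ∈ perSet a (Set.Ico (c - β) (c - α)) ↔
      (a - β ≤ rho a (t - c) ∧ rho a (t - c) < a - α) := by
  rw [← perSet_Ico_iff ha (by linarith : (0:ℝ) ≤ a - β) (by linarith : a - α ≤ a) (t - c)]
  simp only [perSet, Set.mem_setOf_eq, Set.mem_Ico]
  constructor
  · rintro ⟨k, h1, h2⟩; exact ⟨k - 1, by push_cast; linarith, by push_cast; linarith⟩
  · rintro ⟨k, h1, h2⟩; exact ⟨k + 1, by push_cast; linarith, by push_cast; linarith⟩

lemma perSet_union (a : ℝ) (X Y : Set ℝ) : perSet a (X ∪ Y) = perSet a X ∪ perSet a Y := by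
  ext t
  simp only [perSet, Set.mem_setOf_eq, Set.mem_union, exists_or]

lemma row_unique (a b c t : ℝ) (x : ℤ → ℝ)
    (hx : ∀ k, x k = 0 ∨ x k = 1) (j : ℤ) (hM : Mrow a b c t x j = 1) :
    ∃ k : ℤ, (x k = 1 ∧ 0 ≤ t - (j:ℝ)*a + (k:ℝ)*b ∧ t - (j:ℝ)*a + (k:ℝ)*b < c) ∧
      ∀ k' : ℤ, x k' = 1 → 0 ≤ t - (j:ℝ)*a + (k':ℝ)*b → t - (j:ℝ)*a + (k':ℝ)*b < c → k' = k := by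
  classical
  unfold Mrow at hM
  set f : ℤ → ℝ := fun k => chiIco c (t - (j:ℝ)*a + (k:ℝ)*b) * x k with hfdef
  have key : ∀ k, f k = 1 ↔ (x k = 1 ∧ 0 ≤ t - (j:ℝ)*a + (k:ℝ)*b ∧ t - (j:ℝ)*a + (k:ℝ)*b < c) := by
    intro k
    simp only [hfdef, chiIco]
    split
    · next h => simp [h.1, h.2]
    · next h =>
        constructor
        · intro h1; norm_num at h1
        · rintro ⟨_, h2, h3⟩; exact absurd ⟨h2, h3⟩ h
  have hf01 : ∀ k, f k = 0 ∨ f k = 1 := by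
    intro k
    simp only [hfdef, chiIco]
    rcases hx k with h | h <;> split <;> simp [h]
  have hnn : ∀ k, 0 ≤ f k := fun k => by rcases hf01 k with h | h <;> rw [h] <;> norm_num
  have hsum : Summable f := by
    by_contra hns
    rw [tsum_eq_zero_of_not_summable hns] at hM
    norm_num at hM
  have hex : ∃ k, f k = 1 := by
    by_contra hne
    push_neg at hne
    have hz : ∀ k, f k = 0 := fun k => (hf01 k).resolve_right (hne k)
    rw [show f = fun _ => (0:ℝ) from funext hz] at hM
    rw [tsum_zero] at hM
    norm_num at hM
  obtain ⟨k, hk⟩ := hex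
  refine ⟨k, (key k).mp hk, ?_⟩
  intro k' h1 h2 h3
  by_contra hne
  have hk' : f k' = 1 := (key k').mpr ⟨h1, h2, h3⟩
  have hle := Summable.sum_le_tsum ({k, k'} : Finset ℤ) (fun i _ => hnn i) hsum
  rw [Finset.sum_pair (Ne.symm hne), hk, hk', hM] at hle
  norm_num at hle

lemma gap_above {a b c : ℝ} (ha : 0 < a) (hb : 0 < b) (t : ℝ) (x : ℤ → ℝ)
    (hx : ∀ k, x k = 0 ∨ x k = 1) (hx0 : x 0 = 1)
    (hM : ∀ j : ℤ, Mrow a b c t x j = 1) :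
    ∃ m : ℤ, 0 < m ∧ x m = 1 ∧ (∀ k, 0 < k → k < m → x k = 0) ∧
      c - (m:ℝ)*b ≤ rho a t ∧ rho a t < a + c - (m:ℝ)*b := by
  classical
  have hpos : ∃ k : ℤ, 0 < k ∧ x k = 1 := by
    obtain ⟨k, ⟨hk1, hk2, hk3⟩, -⟩ := row_unique a b c t x hx (⌊t/a⌋ + 1) (hM _)
    push_cast at hk2 hk3
    refine ⟨k, ?_, hk1⟩
    by_contra hk
    push_neg at hk
    have hk' : (k:ℝ) ≤ 0 := by exact_mod_cast hk
    have h3 : (k:ℝ)*b ≤ 0*b := mul_le_mul_of_nonneg_right hk' hb.le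
    have hja := lt_floor_mul_add ha t
    linarith
  obtain ⟨m, ⟨hm0, hxm⟩, hmin⟩ := Int.exists_least_of_bdd
    (P := fun z => 0 < z ∧ x z = 1) ⟨1, fun z hz => hz.1⟩ hpos
  have hzero : ∀ k, 0 < k → k < m → x k = 0 := by
    intro k h1 h2
    rcases hx k with h | h
    · exact h
    · have := hmin k ⟨h1, h⟩; omega
  have hmb : 0 < (m:ℝ)*b := mul_pos (by exact_mod_cast hm0) hb
  have hA : ∀ j : ℤ, ¬ (t + (m:ℝ)*b - c < (j:ℝ)*a ∧ (j:ℝ)*a ≤ t) := by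
    rintro j ⟨h1, h2⟩
    obtain ⟨k, -, huniq⟩ := row_unique a b c t x hx j (hM j)
    have e0 : (0:ℤ) = k := huniq 0 hx0 (by push_cast; linarith) (by push_cast; linarith)
    have em : m = k := huniq m hxm (by linarith) (by linarith)
    omega
  have hB : ∀ j : ℤ, ¬ (t < (j:ℝ)*a ∧ (j:ℝ)*a ≤ t + (m:ℝ)*b - c) := by
    rintro j ⟨h1, h2⟩
    obtain ⟨k, ⟨hk1, hk2, hk3⟩, -⟩ := row_unique a b c t x hx j (hM j)
    have hkpos : 0 < k := by
      by_contra h; push_neg at h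
      have hk' : (k:ℝ) ≤ 0 := by exact_mod_cast h
      have h3 : (k:ℝ)*b ≤ 0*b := mul_le_mul_of_nonneg_right hk' hb.le
      linarith
    have hklt : k < m := by
      by_contra h; push_neg at h
      have hk' : (m:ℝ) ≤ k := by exact_mod_cast h
      have h3 : (m:ℝ)*b ≤ (k:ℝ)*b := mul_le_mul_of_nonneg_right hk' hb.le
      linarith
    have := hzero k hkpos hklt
    rw [this] at hk1; norm_num at hk1
  have h6 : c - (m:ℝ)*b ≤ rho a t := by
    by_contra h; push_neg at h
    refine hA ⌊t/a⌋ ⟨?_, floor_mul_le ha t⟩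
    unfold rho at h; linarith
  have h7 : rho a t < a + c - (m:ℝ)*b := by
    by_contra h; push_neg at h
    refine hB (⌊t/a⌋ + 1) ⟨?_, ?_⟩
    · push_cast
      have := rho_lt ha t; unfold rho at this; linarith
    · push_cast
      unfold rho at h; linarith
  exact ⟨m, hm0, hxm, hzero, h6, h7⟩

lemma gap_below {a b c : ℝ} (ha : 0 < a) (hb : 0 < b) (t : ℝ) (x : ℤ → ℝ)
    (hx : ∀ k, x k = 0 ∨ x k = 1) (hx0 : x 0 = 1)
    (hM : ∀ j : ℤ, Mrow a b c t x j = 1) :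
    ∃ m : ℤ, 0 < m ∧ x (-m) = 1 ∧ (∀ k, -m < k → k < 0 → x k = 0) ∧
      (m:ℝ)*b - c ≤ rho a (t - c) ∧ rho a (t - c) < a + (m:ℝ)*b - c := by
  classical
  have hneg : ∃ z : ℤ, 0 < z ∧ x (-z) = 1 := by
    obtain ⟨k, ⟨hk1, hk2, hk3⟩, -⟩ := row_unique a b c t x hx ⌊(t - c)/a⌋ (hM _)
    have hja : (↑⌊(t - c)/a⌋ : ℝ) * a ≤ t - c := floor_mul_le ha (t - c)
    have hk0 : k < 0 := by
      by_contra h; push_neg at h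
      have hk' : (0:ℝ) ≤ (k:ℝ) := by exact_mod_cast h
      have h3 : 0 ≤ (k:ℝ)*b := mul_nonneg hk' hb.le
      linarith
    exact ⟨-k, by omega, by simpa using hk1⟩
  obtain ⟨m, ⟨hm0, hxm⟩, hmin⟩ := Int.exists_least_of_bdd
    (P := fun z => 0 < z ∧ x (-z) = 1) ⟨1, fun z hz => hz.1⟩ hneg
  have hzero : ∀ k, -m < k → k < 0 → x k = 0 := by
    intro k h1 h2
    rcases hx k with h | h
    · exact h
    · have := hmin (-k) ⟨by omega, by simpa using h⟩; omega
  have hmb : 0 < (m:ℝ)*b := mul_pos (by exact_mod_cast hm0) hb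
  have hA : ∀ j : ℤ, ¬ (t - c < (j:ℝ)*a ∧ (j:ℝ)*a ≤ t - (m:ℝ)*b) := by
    rintro j ⟨h1, h2⟩
    obtain ⟨k, -, huniq⟩ := row_unique a b c t x hx j (hM j)
    have e0 : (0:ℤ) = k := huniq 0 hx0 (by push_cast; linarith) (by push_cast; linarith)
    have em : -m = k := huniq (-m) hxm (by push_cast; linarith) (by push_cast; linarith)
    omega
  have hB : ∀ j : ℤ, ¬ (t - (m:ℝ)*b < (j:ℝ)*a ∧ (j:ℝ)*a ≤ t - c) := by
    rintro j ⟨h1, h2⟩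
    obtain ⟨k, ⟨hk1, hk2, hk3⟩, -⟩ := row_unique a b c t x hx j (hM j)
    have hk0 : k < 0 := by
      by_contra h; push_neg at h
      have hk' : (0:ℝ) ≤ (k:ℝ) := by exact_mod_cast h
      have h3 : 0 ≤ (k:ℝ)*b := mul_nonneg hk' hb.le
      linarith
    have hkm : -m < k := by
      by_contra h; push_neg at h
      have hk' : (k:ℝ) ≤ ((-m : ℤ):ℝ) := by exact_mod_cast h
      push_cast at hk'
      have h3 : (k:ℝ)*b ≤ (-(m:ℝ))*b := mul_le_mul_of_nonneg_right hk' hb.le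
      linarith
    have := hzero k hkm hk0
    rw [this] at hk1; norm_num at hk1
  have h6 : (m:ℝ)*b - c ≤ rho a (t - c) := by
    by_contra h; push_neg at h
    refine hB ⌊(t - c)/a⌋ ⟨?_, floor_mul_le ha (t - c)⟩
    unfold rho at h; linarith
  have h7 : rho a (t - c) < a + (m:ℝ)*b - c := by
    by_contra h; push_neg at h
    refine hA (⌊(t - c)/a⌋ + 1) ⟨?_, ?_⟩
    · push_cast
      have := rho_lt ha (t - c); unfold rho at this; linarith
    · push_cast
      unfold rho at h; linarith
  exact ⟨m, hm0, hxm, hzero, h6, h7⟩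
/-- Proposition `dabcbasic1`: with `c₀ = c − ⌊c/b⌋·b`, `P = (c₀+a−b)₊`, `Q = c₀∧a`:
(i) `S_{a,b,c} ∩ (([P,Q) ∪ [c−Q, c−P)) + aℤ) = ∅`;
(ii) for `t ∈ S_{a,b,c}` and binary `x` with `x(0)=1` and `M_{a,b,c}(t)x = 1`, one has
`x(λ) = 0` for `λ̃_{a,b,c}(t) < λ < λ_{a,b,c}(t)`, `λ ≠ 0`, and
`x(λ) = 1` for `λ ∈ {λ_{a,b,c}(t), 0, λ̃_{a,b,c}(t)}`. -/
theorem S_blackhole_disjoint_and_first_indices (a b c c₀ P Q : ℝ)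
    (ha : 0 < a) (hab : a < b) (hbc : b < c)
    (hc0 : c₀ = c - (⌊c / b⌋ : ℝ) * b)
    (hP : P = max (c₀ + a - b) 0) (hQ : Q = min c₀ a) :
    Sset a b c ∩ perSet a (Set.Ico P Q ∪ Set.Ico (c - Q) (c - P)) = ∅ ∧
    ∀ t ∈ Sset a b c, ∀ x : ℤ → ℝ,
      (∀ k, x k = 0 ∨ x k = 1) → x 0 = 1 → (∀ j : ℤ, Mrow a b c t x j = 1) →
        (∀ k : ℤ, lamTilF a b c t < (k : ℝ) * b → (k : ℝ) * b < lamF a b c t → k ≠ 0 →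
          x k = 0) ∧
        (∀ k : ℤ, ((k : ℝ) * b = lamF a b c t ∨ k = 0 ∨ (k : ℝ) * b = lamTilF a b c t) →
          x k = 1) := by
  have hb : 0 < b := lt_trans ha hab
  have hc : 0 < c := lt_trans hb hbc
  set N : ℤ := ⌊c / b⌋ with hN
  have hNb : (N:ℝ) * b ≤ c := floor_mul_le hb c
  have hNb2 : c < (N:ℝ)*b + b := lt_floor_mul_add hb c
  have hc0' : 0 ≤ c₀ := by rw [hc0]; linarith
  have hc0b : c₀ < b := by rw [hc0]; linarith
  have hP0 : 0 ≤ P := by rw [hP]; exact le_max_right _ _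
  have hPc0 : P ≤ c₀ := by rw [hP]; apply max_le <;> linarith
  have hPge : c₀ + a - b ≤ P := by rw [hP]; exact le_max_left _ _
  have hQc0 : Q ≤ c₀ := by rw [hQ]; exact min_le_left _ _
  have hQa : Q ≤ a := by rw [hQ]; exact min_le_right _ _
  have hPQ : P ≤ Q := by rw [hP, hQ]; apply le_min <;> apply max_le <;> linarith
  have hPa : P ≤ a := hPQ.trans hQa
  have key : ∀ (t : ℝ) (x : ℤ → ℝ), (∀ k, x k = 0 ∨ x k = 1) → x 0 = 1 →
      (∀ j : ℤ, Mrow a b c t x j = 1) →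
      (¬ (P ≤ rho a t ∧ rho a t < Q)) ∧
      (¬ (a - Q ≤ rho a (t - c) ∧ rho a (t - c) < a - P)) ∧
      ∃ m m' : ℤ, 0 < m ∧ 0 < m' ∧ x m = 1 ∧ x (-m') = 1 ∧
        (∀ k, 0 < k → k < m → x k = 0) ∧ (∀ k, -m' < k → k < 0 → x k = 0) ∧
        lamF a b c t = (m:ℝ)*b ∧ lamTilF a b c t = -((m':ℝ)*b) := by
    intro t x hx hx0 hM
    obtain ⟨m, hm0, hxm, hz1, hr1, hr2⟩ := gap_above ha hb t x hx hx0 hM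
    obtain ⟨m', hm'0, hxm', hz2, hr1', hr2'⟩ := gap_below ha hb t x hx hx0 hM
    have hr0 : 0 ≤ rho a t := rho_nonneg ha t
    have hra : rho a t < a := rho_lt ha t
    have hr0' : 0 ≤ rho a (t - c) := rho_nonneg ha (t - c)
    have hra' : rho a (t - c) < a := rho_lt ha (t - c)
    have notMid1 : ¬ (P ≤ rho a t ∧ rho a t < Q) := by
      rintro ⟨h1, h2⟩
      have hm1 : N + 1 ≤ m := by
        have : N < m := intlt hb (by linarith)
        omega
      have h4 : ((N:ℝ) + 1) * b ≤ (m:ℝ)*b := by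
        have h3 : ((N:ℝ) + 1) ≤ m := by exact_mod_cast hm1
        exact mul_le_mul_of_nonneg_right h3 hb.le
      linarith
    have notMid2 : ¬ (a - Q ≤ rho a (t - c) ∧ rho a (t - c) < a - P) := by
      rintro ⟨h1, h2⟩
      have hm1 : m' ≤ N := by
        have : m' < N + 1 := intlt hb (by push_cast; linarith)
        omega
      have h4 : (m':ℝ)*b ≤ (N:ℝ)*b :=
        mul_le_mul_of_nonneg_right (by exact_mod_cast hm1) hb.le
      linarith
    have hcls : (rho a t < P ∧ m = N + 1) ∨ (Q ≤ rho a t ∧ m = N) := by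
      rcases lt_or_ge (rho a t) P with h | h
      · left
        refine ⟨h, ?_⟩
        have hPpos : 0 < P := lt_of_le_of_lt hr0 h
        have hmax : 0 < c₀ + a - b := by
          by_contra hh; push_neg at hh
          rw [hP, max_eq_right hh] at hPpos
          exact lt_irrefl _ hPpos
        have hPe : P = c₀ + a - b := by rw [hP]; exact max_eq_left hmax.le
        have hg : N < m := intlt hb (by linarith)
        have hl : m < N + 2 := intlt hb (by push_cast; linarith)
        omega
      · right
        have hQr : Q ≤ rho a t := by
          by_contra hh; push_neg at hh
          exact notMid1 ⟨h, hh⟩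
        refine ⟨hQr, ?_⟩
        have hca : c₀ < a := by
          by_contra hh; push_neg at hh
          rw [hQ, min_eq_right hh] at hQr
          linarith
        have hQe : Q = c₀ := by rw [hQ]; exact min_eq_left hca.le
        have hg : N ≤ m := by
          have : N - 1 < m := intlt hb (by push_cast; linarith)
          omega
        have hl : m ≤ N := by
          have : m < N + 1 := intlt hb (by push_cast; linarith)
          omega
        omega
    have hcls' : (a - P ≤ rho a (t - c) ∧ m' = N + 1) ∨
        (rho a (t - c) < a - Q ∧ m' = N) := by
      rcases le_or_gt (a - P) (rho a (t - c)) with h | h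
      · left
        refine ⟨h, ?_⟩
        have hPpos : 0 < P := by linarith
        have hmax : 0 < c₀ + a - b := by
          by_contra hh; push_neg at hh
          rw [hP, max_eq_right hh] at hPpos
          exact lt_irrefl _ hPpos
        have hPe : P = c₀ + a - b := by rw [hP]; exact max_eq_left hmax.le
        have hg : N < m' := intlt hb (by linarith)
        have hl : m' < N + 2 := intlt hb (by push_cast; linarith)
        omega
      · right
        have hQr : rho a (t - c) < a - Q := by
          by_contra hh; push_neg at hh
          exact notMid2 ⟨hh, h⟩
        refine ⟨hQr, ?_⟩
        have hQbc : a + c₀ - b ≤ Q := by rw [hQ]; apply le_min <;> linarith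
        have hl : m' ≤ N := by
          have : m' < N + 1 := intlt hb (by push_cast; linarith)
          omega
        have hg : N ≤ m' := by
          have : N - 1 < m' := intlt hb (by push_cast; linarith)
          omega
        omega
    have hlamF : lamF a b c t = (m:ℝ)*b := by
      unfold lamF
      rw [← hN, ← hc0, ← hP, ← hQ]
      rcases hcls with ⟨hrP, hm⟩ | ⟨hQr, hm⟩
      · rw [if_pos ((perSet_Ico_iff ha le_rfl hPa t).mpr ⟨hr0, hrP⟩)]
        rw [hm]; push_cast; ring
      · rw [if_neg, if_neg, hm]
        · rw [perSet_Ico_iff ha hP0 hQa t]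
          rintro ⟨-, hh⟩; linarith
        · rw [perSet_Ico_iff ha le_rfl hPa t]
          rintro ⟨-, hh⟩; linarith
    have hlamT : lamTilF a b c t = -((m':ℝ)*b) := by
      unfold lamTilF
      rw [← hN, ← hc0, ← hP, ← hQ]
      rw [show Set.Ico (c - P) c = Set.Ico (c - P) (c - 0) by norm_num]
      rcases hcls' with ⟨hrP, hm⟩ | ⟨hQr, hm⟩
      · rw [if_pos ((perSet_Ico_sub_iff ha le_rfl hPa c t).mpr ⟨hrP, by linarith⟩)]
        rw [hm]; push_cast; ring
      · rw [if_neg, if_neg, hm]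
        · rw [perSet_Ico_sub_iff ha hP0 hQa c t]
          rintro ⟨hh, -⟩; linarith
        · rw [perSet_Ico_sub_iff ha le_rfl hPa c t]
          rintro ⟨hh, -⟩; linarith
    exact ⟨notMid1, notMid2, m, m', hm0, hm'0, hxm, hxm', hz1, hz2, hlamF, hlamT⟩
  constructor
  · rw [Set.eq_empty_iff_forall_notMem]
    rintro t ⟨hS, hper⟩
    obtain ⟨x, hx, hx0, hMx⟩ := hS
    obtain ⟨n1, n2, -⟩ := key t x hx hx0 hMx
    rw [perSet_union] at hper
    rcases hper with h | h
    · exact n1 ((perSet_Ico_iff ha hP0 hQa t).mp h)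
    · exact n2 ((perSet_Ico_sub_iff ha hP0 hQa c t).mp h)
  · rintro t - x hx hx0 hMx
    obtain ⟨-, -, m, m', hm0, hm'0, hxm, hxm', hz1, hz2, hlF, hlT⟩ := key t x hx hx0 hMx
    constructor
    · intro k hk1 hk2 hk0
      rw [hlT] at hk1; rw [hlF] at hk2
      have h1 : -m' < k := intlt hb (y := -m') (z := k) (by push_cast; linarith)
      have h2 : k < m := intlt hb hk2
      rcases lt_trichotomy k 0 with h | h | h
      · exact hz2 k h1 h
      · exact absurd h hk0
      · exact hz1 k h h2
    · intro k hk
      rcases hk with h | h | h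
      · rw [hlF] at h
        have hk' : (k:ℝ) = m := mul_right_cancel₀ (ne_of_gt hb) h
        have : k = m := by exact_mod_cast hk'
        rw [this]; exact hxm
      · rw [h]; exact hx0
      · rw [hlT] at h
        have hk' : (k:ℝ) = ((-m' : ℤ):ℝ) := by
          apply mul_right_cancel₀ (ne_of_gt hb)
          push_cast; linarith
        have : k = -m' := by exact_mod_cast hk'
        rw [this]; exact hxm'
end

section
/- Let (a,b,c) be a triple of positive real numbers with a < b < c and b − a < c₀ < a, where c₀ := c − ⌊c/b⌋·b. Then: (i) R_{a,b,c}(D_{a,b,c}) = R̃_{a,b,c}(D_{a,b,c}) = D_{a,b,c} and R_{a,b,c}(S_{a,b,c}) = R̃_{a,b,c}(S_{a,b,c}) = S_{a,b,c} (image sets); (ii) R_{a,b,c}(R̃_{a,b,c}(t)) = t and R̃_{a,b,c}(R_{a,b,c}(t)) = t for every t ∈ S_{a,b,c} (hence also for every t ∈ D_{a,b,c}); (iii) for every Lebesgue-measurable set E ⊆ S_{a,b,c} (and in particular every measurable E ⊆ D_{a,b,c}), the Lebesgue measures satisfy |R_{a,b,c}(E)| = |R̃_{a,b,c}(E)| =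 |E|. -/
open MeasureTheory Set

/- The piecewise linear transformation `R_{a,b,c}`. -/
open Classical in
noncomputable def Rmap (a b c : ℝ) (t : ℝ) : ℝ :=
  if t ∈ perSet a (Set.Ico 0 ((c - (⌊c / b⌋ : ℝ) * b) + a - b)) then
    t + (⌊c / b⌋ : ℝ) * b + b
  else if t ∈ perSet a (Set.Ico ((c - (⌊c / b⌋ : ℝ) * b) + a - b) (c - (⌊c / b⌋ : ℝ) * b)) then
    t
  else t + (⌊c / b⌋ : ℝ) * b

/- The piecewise linear transformation `R̃_{a,b,c}`. -/
open Classical in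
noncomputable def Rtil (a b c : ℝ) (t : ℝ) : ℝ :=
  if t ∈ perSet a (Set.Ico (c - a) (c - (c - (⌊c / b⌋ : ℝ) * b))) then
    t - (⌊c / b⌋ : ℝ) * b
  else if t ∈ perSet a
      (Set.Ico (c - (c - (⌊c / b⌋ : ℝ) * b)) (c + b - (c - (⌊c / b⌋ : ℝ) * b) - a)) then
    t
  else t - (⌊c / b⌋ : ℝ) * b - b

/-! ### Auxiliary definitions and lemmas -/

/-- Membership predicate common to `Dset` (`r = 2`) and `Sset` (`r = 1`). -/
def memP (a b c r t : ℝ) : Prop :=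
  ∃ x : ℤ → ℝ, (∀ k, x k = 0 ∨ x k = 1) ∧ x 0 = 1 ∧ ∀ j : ℤ, Mrow a b c t x j = r

/- Normalized form of `Rmap`. -/
open Classical in
noncomputable def RmapN (a b c₀ : ℝ) (N : ℤ) (t : ℝ) : ℝ :=
  if t ∈ perSet a (Set.Ico 0 (c₀ + a - b)) then t + (N : ℝ) * b + b
  else if t ∈ perSet a (Set.Ico (c₀ + a - b) c₀) then t
  else t + (N : ℝ) * b

/- Normalized form of `Rtil`. -/
open Classical in
noncomputable def RtilN (a b c₀ : ℝ) (N : ℤ) (t : ℝ) : ℝ :=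
  if t ∈ perSet a (Set.Ico ((N : ℝ) * b + c₀ - a) ((N : ℝ) * b)) then t - (N : ℝ) * b
  else if t ∈ perSet a (Set.Ico ((N : ℝ) * b) ((N : ℝ) * b + b - a)) then t
  else t - (N : ℝ) * b - b

lemma mrow_eval (a b c : ℝ) (hb : 0 < b) (x : ℤ → ℝ) (t : ℝ) (j lo hi : ℤ)
    (_hlh : lo ≤ hi)
    (h1 : 0 ≤ t - (j : ℝ) * a + (lo : ℝ) * b) (h3 : t - (j : ℝ) * a + (lo : ℝ) * b < b)
    (h2 : t - (j : ℝ) * a + (hi : ℝ) * b < c) (h4 : c - b ≤ t - (j : ℝ) * a + (hi : ℝ) * b) :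
    Mrow a b c t x j = ∑ k ∈ Finset.Icc lo hi, x k := by
  have hchi : ∀ k : ℤ, chiIco c (t - (j : ℝ) * a + (k : ℝ) * b)
      = if k ∈ Finset.Icc lo hi then 1 else 0 := by
    intro k
    unfold chiIco
    by_cases hk : k ∈ Finset.Icc lo hi
    · rw [if_pos hk]
      rw [Finset.mem_Icc] at hk
      have hk1 : (lo : ℝ) ≤ k := by exact_mod_cast hk.1
      have hk2 : (k : ℝ) ≤ hi := by exact_mod_cast hk.2
      have e1 : (lo : ℝ) * b ≤ (k : ℝ) * b := mul_le_mul_of_nonneg_right hk1 hb.le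
      have e2 : (k : ℝ) * b ≤ (hi : ℝ) * b := mul_le_mul_of_nonneg_right hk2 hb.le
      rw [if_pos ⟨by linarith, by linarith⟩]
    · rw [if_neg hk]
      rw [Finset.mem_Icc] at hk
      rw [if_neg]
      rintro ⟨hA, hB⟩
      rcases lt_or_ge k lo with h | h
      · have hk1 : k ≤ lo - 1 := by omega
        have hk1' : (k : ℝ) ≤ (lo : ℝ) - 1 := by exact_mod_cast hk1
        have e1 : (k : ℝ) * b ≤ ((lo : ℝ) - 1) * b := mul_le_mul_of_nonneg_right hk1' hb.le
        nlinarith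
      · have h' : hi < k := by omega
        have hk1' : (hi : ℝ) + 1 ≤ k := by exact_mod_cast h'
        have e1 : ((hi : ℝ) + 1) * b ≤ (k : ℝ) * b := mul_le_mul_of_nonneg_right hk1' hb.le
        nlinarith
  unfold Mrow
  rw [tsum_eq_sum (s := Finset.Icc lo hi) (fun k hk => by rw [hchi k, if_neg hk, zero_mul])]
  exact Finset.sum_congr rfl fun k hk => by rw [hchi k, if_pos hk, one_mul]

lemma core_up (x : ℤ → ℝ) (r : ℝ) (M : ℤ) (hM : 0 ≤ M) (hx0 : x 0 = 1)
    (e1 : ∑ k ∈ Finset.Icc 0 M, x k = r) (e2 : ∑ k ∈ Finset.Icc 1 (M + 1), x k = r) :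
    x (M + 1) = 1 := by
  have i1 : Finset.Icc 0 M = insert 0 (Finset.Icc 1 M) := by
    ext k; simp only [Finset.mem_Icc, Finset.mem_insert]; omega
  have i2 : Finset.Icc 1 (M + 1) = insert (M + 1) (Finset.Icc 1 M) := by
    ext k; simp only [Finset.mem_Icc, Finset.mem_insert]; omega
  rw [i1, Finset.sum_insert (by simp only [Finset.mem_Icc]; omega), hx0] at e1
  rw [i2, Finset.sum_insert (by simp only [Finset.mem_Icc]; omega)] at e2
  linarith

lemma core_down (x : ℤ → ℝ) (r : ℝ) (m : ℤ) (hm : m ≤ 0) (hx0 : x 0 = 1)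
    (e1 : ∑ k ∈ Finset.Icc m 0, x k = r) (e2 : ∑ k ∈ Finset.Icc (m - 1) (-1), x k = r) :
    x (m - 1) = 1 := by
  have i1 : Finset.Icc m 0 = insert 0 (Finset.Icc m (-1)) := by
    ext k; simp only [Finset.mem_Icc, Finset.mem_insert]; omega
  have i2 : Finset.Icc (m - 1) (-1) = insert (m - 1) (Finset.Icc m (-1)) := by
    ext k; simp only [Finset.mem_Icc, Finset.mem_insert]; omega
  rw [i1, Finset.sum_insert (by simp only [Finset.mem_Icc]; omega), hx0] at e1
  rw [i2, Finset.sum_insert (by simp only [Finset.mem_Icc]; omega)] at e2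
  linarith

lemma core_up_false (x : ℤ → ℝ) (r : ℝ) (M : ℤ) (hM : 0 ≤ M) (hx0 : x 0 = 1)
    (e1 : ∑ k ∈ Finset.Icc 0 M, x k = r) (e2 : ∑ k ∈ Finset.Icc 1 M, x k = r) : False := by
  have i1 : Finset.Icc 0 M = insert 0 (Finset.Icc 1 M) := by
    ext k; simp only [Finset.mem_Icc, Finset.mem_insert]; omega
  rw [i1, Finset.sum_insert (by simp only [Finset.mem_Icc]; omega), hx0] at e1
  linarith

lemma core_down_false (x : ℤ → ℝ) (r : ℝ) (m : ℤ) (hm : m ≤ 0) (hx0 : x 0 = 1)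
    (e1 : ∑ k ∈ Finset.Icc m 0, x k = r) (e2 : ∑ k ∈ Finset.Icc m (-1), x k = r) : False := by
  have i1 : Finset.Icc m 0 = insert 0 (Finset.Icc m (-1)) := by
    ext k; simp only [Finset.mem_Icc, Finset.mem_insert]; omega
  rw [i1, Finset.sum_insert (by simp only [Finset.mem_Icc]; omega), hx0] at e1
  linarith

lemma exists_rep (a : ℝ) (ha : 0 < a) (t α : ℝ) :
    ∃ l : ℤ, α ≤ t - (l : ℝ) * a ∧ t - (l : ℝ) * a < α + a := by
  refine ⟨⌊(t - α) / a⌋, ?_, ?_⟩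
  · have h1 := Int.floor_le ((t - α) / a)
    have := mul_le_mul_of_nonneg_right h1 ha.le
    rw [div_mul_cancel₀ _ (ne_of_gt ha)] at this
    linarith
  · have h2 := Int.lt_floor_add_one ((t - α) / a)
    have h2' := (div_lt_iff₀ ha).mp h2
    nlinarith

lemma perSet_disjoint (a : ℝ) (ha : 0 < a) {α β γ δ : ℝ} (hβγ : β ≤ γ) (hδα : δ ≤ α + a)
    {t : ℝ} (hx : t ∈ perSet a (Set.Ico α β)) (hy : t ∈ perSet a (Set.Ico γ δ)) : False := by
  obtain ⟨k, hk1, hk2⟩ := hx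
  obtain ⟨k', hk1', hk2'⟩ := hy
  have hgt : (0 : ℝ) < ((k - k' : ℤ) : ℝ) * a := by push_cast; nlinarith
  have hk0 : (0 : ℤ) < k - k' := by
    rcases lt_trichotomy (k - k') 0 with h | h | h
    · exfalso
      have : ((k - k' : ℤ) : ℝ) ≤ 0 := by exact_mod_cast h.le
      nlinarith
    · exfalso; rw [h] at hgt; simp at hgt
    · exact h
  have h1 : (1 : ℝ) ≤ ((k - k' : ℤ) : ℝ) := by exact_mod_cast hk0
  have : ((k - k' : ℤ) : ℝ) * a < a := by push_cast; nlinarith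
  nlinarith

lemma perSet_shift_down (a : ℝ) {α β t : ℝ} (h : t ∈ perSet a (Set.Ico α β)) :
    t ∈ perSet a (Set.Ico (α - a) (β - a)) := by
  obtain ⟨k, hk1, hk2⟩ := h
  refine ⟨k + 1, ?_, ?_⟩ <;> push_cast <;> [linarith; linarith]

lemma shiftP (a b c : ℝ) {t r : ℝ} (x : ℤ → ℝ) (hbin : ∀ k, x k = 0 ∨ x k = 1) (m : ℤ)
    (hm : x m = 1) (hrow : ∀ j : ℤ, Mrow a b c t x j = r) :
    memP a b c r (t + (m : ℝ) * b) := by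
  refine ⟨fun k => x (k + m), fun k => hbin _, by simpa using hm, fun j => ?_⟩
  unfold Mrow
  have key : ∀ k : ℤ, chiIco c (t + (m : ℝ) * b - (j : ℝ) * a + (k : ℝ) * b) * x (k + m)
      = (fun i : ℤ => chiIco c (t - (j : ℝ) * a + (i : ℝ) * b) * x i) ((Equiv.addRight m) k) := by
    intro k
    simp only [Equiv.coe_addRight]
    have : t + (m : ℝ) * b - (j : ℝ) * a + (k : ℝ) * b
        = t - (j : ℝ) * a + ((k + m : ℤ) : ℝ) * b := by push_cast; ring
    rw [this]
  rw [tsum_congr key]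
  exact (Equiv.tsum_eq (Equiv.addRight m) _).trans (hrow j)

section Flemmas
variable (a b c c₀ : ℝ) (N : ℤ) (t r : ℝ) (x : ℤ → ℝ) (l : ℤ)
variable (ha : 0 < a) (hab : a < b) (h1 : b - a < c₀) (h2 : c₀ < a)
  (hc : c = (N : ℝ) * b + c₀) (hN : 1 ≤ N)
  (hx0 : x 0 = 1) (hrow : ∀ j : ℤ, Mrow a b c t x j = r)

include ha hab h1 h2 hc hN hx0 hrow

omit h1 in
lemma F1 (hs0 : 0 ≤ t - (l : ℝ) * a) (hs1 : t - (l : ℝ) * a < c₀ + a - b) :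
    x (N + 1) = 1 := by
  have hb : 0 < b := ha.trans hab
  have hN' : (1 : ℝ) ≤ (N : ℝ) := by exact_mod_cast hN
  have hNb : b ≤ (N : ℝ) * b := by nlinarith
  have e1 : Mrow a b c t x l = ∑ k ∈ Finset.Icc 0 N, x k := by
    apply mrow_eval a b c hb x t l 0 N (by omega) <;> push_cast <;> linarith
  have e2 : Mrow a b c t x (l + 1) = ∑ k ∈ Finset.Icc 1 (N + 1), x k := by
    apply mrow_eval a b c hb x t (l + 1) 1 (N + 1) (by omega) <;> push_cast <;> linarith
  rw [hrow l] at e1; rw [hrow (l + 1)] at e2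
  exact core_up x r N (by omega) hx0 e1.symm e2.symm

lemma F2 (hs0 : c₀ + a - b ≤ t - (l : ℝ) * a) (hs1 : t - (l : ℝ) * a < c₀) : False := by
  have hb : 0 < b := ha.trans hab
  have hN' : (1 : ℝ) ≤ (N : ℝ) := by exact_mod_cast hN
  have hNb : b ≤ (N : ℝ) * b := by nlinarith
  have e1 : Mrow a b c t x l = ∑ k ∈ Finset.Icc 0 N, x k := by
    apply mrow_eval a b c hb x t l 0 N (by omega) <;> push_cast <;> linarith
  have e2 : Mrow a b c t x (l + 1) = ∑ k ∈ Finset.Icc 1 N, x k := by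
    apply mrow_eval a b c hb x t (l + 1) 1 N (by omega) <;> push_cast <;> linarith
  rw [hrow l] at e1; rw [hrow (l + 1)] at e2
  exact core_up_false x r N (by omega) hx0 e1.symm e2.symm

omit h2 in
lemma F3 (hs0 : c₀ ≤ t - (l : ℝ) * a) (hs1 : t - (l : ℝ) * a < a) :
    x N = 1 := by
  have hb : 0 < b := ha.trans hab
  have hN' : (1 : ℝ) ≤ (N : ℝ) := by exact_mod_cast hN
  have hNb : b ≤ (N : ℝ) * b := by nlinarith
  have e1 : Mrow a b c t x l = ∑ k ∈ Finset.Icc 0 (N - 1), x k := by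
    apply mrow_eval a b c hb x t l 0 (N - 1) (by omega) <;> push_cast <;> linarith
  have e2 : Mrow a b c t x (l + 1) = ∑ k ∈ Finset.Icc 1 N, x k := by
    apply mrow_eval a b c hb x t (l + 1) 1 N (by omega) <;> push_cast <;> linarith
  rw [hrow l] at e1; rw [hrow (l + 1)] at e2
  have := core_up x r (N - 1) (by omega) hx0 e1.symm
    (by rw [show N - 1 + 1 = N by ring]; exact e2.symm)
  rwa [show N - 1 + 1 = N by ring] at this

omit h2 in
lemma F1' (hs0 : (N : ℝ) * b + c₀ - a ≤ t - (l : ℝ) * a) (hs1 : t - (l : ℝ) * a < (N : ℝ) * b) :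
    x (-N) = 1 := by
  have hb : 0 < b := ha.trans hab
  have hN' : (1 : ℝ) ≤ (N : ℝ) := by exact_mod_cast hN
  have hNb : b ≤ (N : ℝ) * b := by nlinarith
  have e1 : Mrow a b c t x l = ∑ k ∈ Finset.Icc (-N + 1) 0, x k := by
    apply mrow_eval a b c hb x t l (-N + 1) 0 (by omega) <;> push_cast <;> linarith
  have e2 : Mrow a b c t x (l - 1) = ∑ k ∈ Finset.Icc (-N) (-1), x k := by
    apply mrow_eval a b c hb x t (l - 1) (-N) (-1) (by omega) <;> push_cast <;> linarith
  rw [hrow l] at e1; rw [hrow (l - 1)] at e2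
  have := core_down x r (-N + 1) (by omega) hx0 e1.symm
    (by rw [show -N + 1 - 1 = -N by ring]; exact e2.symm)
  rwa [show -N + 1 - 1 = -N by ring] at this

lemma F2' (hs0 : (N : ℝ) * b ≤ t - (l : ℝ) * a) (hs1 : t - (l : ℝ) * a < (N : ℝ) * b + b - a) :
    False := by
  have hb : 0 < b := ha.trans hab
  have hN' : (1 : ℝ) ≤ (N : ℝ) := by exact_mod_cast hN
  have hNb : b ≤ (N : ℝ) * b := by nlinarith
  have e1 : Mrow a b c t x l = ∑ k ∈ Finset.Icc (-N) 0, x k := by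
    apply mrow_eval a b c hb x t l (-N) 0 (by omega) <;> push_cast <;> linarith
  have e2 : Mrow a b c t x (l - 1) = ∑ k ∈ Finset.Icc (-N) (-1), x k := by
    apply mrow_eval a b c hb x t (l - 1) (-N) (-1) (by omega) <;> push_cast <;> linarith
  rw [hrow l] at e1; rw [hrow (l - 1)] at e2
  exact core_down_false x r (-N) (by omega) hx0 e1.symm e2.symm

omit h1 in
lemma F3' (hs0 : (N : ℝ) * b + b - a ≤ t - (l : ℝ) * a)
    (hs1 : t - (l : ℝ) * a < (N : ℝ) * b + c₀) :
    x (-N - 1) = 1 := by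
  have hb : 0 < b := ha.trans hab
  have hN' : (1 : ℝ) ≤ (N : ℝ) := by exact_mod_cast hN
  have hNb : b ≤ (N : ℝ) * b := by nlinarith
  have e1 : Mrow a b c t x l = ∑ k ∈ Finset.Icc (-N) 0, x k := by
    apply mrow_eval a b c hb x t l (-N) 0 (by omega) <;> push_cast <;> linarith
  have e2 : Mrow a b c t x (l - 1) = ∑ k ∈ Finset.Icc (-N - 1) (-1), x k := by
    apply mrow_eval a b c hb x t (l - 1) (-N - 1) (-1) (by omega) <;> push_cast <;> linarith
  rw [hrow l] at e1; rw [hrow (l - 1)] at e2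
  exact core_down x r (-N) (by omega) hx0 e1.symm e2.symm

end Flemmas

section Main
variable (a b c c₀ : ℝ) (N : ℤ) (t r : ℝ)
variable (ha : 0 < a) (hab : a < b) (h1 : b - a < c₀) (h2 : c₀ < a)
  (hc : c = (N : ℝ) * b + c₀) (hN : 1 ≤ N)

include ha hab h1 h2 hc hN

lemma forwardR (ht : memP a b c r t) :
    ((t ∈ perSet a (Set.Ico 0 (c₀ + a - b)) ∧ RmapN a b c₀ N t = t + ((N : ℝ) * b + b)) ∨
      (t ∈ perSet a (Set.Ico c₀ a) ∧ RmapN a b c₀ N t = t + (N : ℝ) * b)) ∧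
    memP a b c r (RmapN a b c₀ N t) ∧ RtilN a b c₀ N (RmapN a b c₀ N t) = t := by
  have hb : 0 < b := ha.trans hab
  have hN' : (1 : ℝ) ≤ (N : ℝ) := by exact_mod_cast hN
  have hNb : b ≤ (N : ℝ) * b := by nlinarith
  obtain ⟨x, hbin, hx0, hrow⟩ := ht
  obtain ⟨l, hl0, hl1⟩ := exists_rep a ha t 0
  by_cases case1 : t - (l : ℝ) * a < c₀ + a - b
  · have hmem1 : t ∈ perSet a (Set.Ico 0 (c₀ + a - b)) := ⟨l, hl0, case1⟩
    have hval : RmapN a b c₀ N t = t + ((N : ℝ) * b + b) := by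
      unfold RmapN; rw [if_pos hmem1]; ring
    have hx : x (N + 1) = 1 := F1 a b c c₀ N t r x l ha hab h2 hc hN hx0 hrow hl0 case1
    have hmem : memP a b c r (RmapN a b c₀ N t) := by
      have := shiftP a b c x hbin (N + 1) hx hrow
      have e : t + ((N + 1 : ℤ) : ℝ) * b = RmapN a b c₀ N t := by rw [hval]; push_cast; ring
      rwa [e] at this
    have hu : RmapN a b c₀ N t ∈
        perSet a (Set.Ico ((N : ℝ) * b + b - a) ((N : ℝ) * b + c₀ + a - a)) :=
      perSet_shift_down a ⟨l, by rw [hval]; constructor <;> linarith⟩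
    have hn1 : RmapN a b c₀ N t ∉
        perSet a (Set.Ico ((N : ℝ) * b + c₀ - a) ((N : ℝ) * b)) := fun h =>
      perSet_disjoint a ha (by linarith) (by linarith) h hu
    have hn2 : RmapN a b c₀ N t ∉
        perSet a (Set.Ico ((N : ℝ) * b) ((N : ℝ) * b + b - a)) := fun h =>
      perSet_disjoint a ha (le_refl _) (by linarith) h hu
    refine ⟨Or.inl ⟨hmem1, hval⟩, hmem, ?_⟩
    unfold RtilN; rw [if_neg hn1, if_neg hn2, hval]; ring
  · by_cases case2 : t - (l : ℝ) * a < c₀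
    · exact (F2 a b c c₀ N t r x l ha hab h1 h2 hc hN hx0 hrow (by linarith) case2).elim
    · have hmem3 : t ∈ perSet a (Set.Ico c₀ a) := ⟨l, by constructor <;> linarith⟩
      have hn1 : t ∉ perSet a (Set.Ico 0 (c₀ + a - b)) := fun h =>
        perSet_disjoint a ha (by linarith) (by linarith) h hmem3
      have hn2 : t ∉ perSet a (Set.Ico (c₀ + a - b) c₀) := fun h =>
        perSet_disjoint a ha (le_refl _) (by linarith) h hmem3
      have hval : RmapN a b c₀ N t = t + (N : ℝ) * b := by
        unfold RmapN; rw [if_neg hn1, if_neg hn2]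
      have hx : x N = 1 := F3 a b c c₀ N t r x l ha hab h1 hc hN hx0 hrow (by linarith)
        (by linarith)
      have hmem : memP a b c r (RmapN a b c₀ N t) := by
        have := shiftP a b c x hbin N hx hrow
        rwa [← hval] at this
      have hu : RmapN a b c₀ N t ∈
          perSet a (Set.Ico ((N : ℝ) * b + c₀ - a) ((N : ℝ) * b)) :=
        ⟨l + 1, by rw [hval]; push_cast; constructor <;> linarith⟩
      refine ⟨Or.inr ⟨hmem3, hval⟩, hmem, ?_⟩
      unfold RtilN; rw [if_pos hu, hval]; ring

lemma backwardR (ht : memP a b c r t) :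
    ((t ∈ perSet a (Set.Ico ((N : ℝ) * b + c₀ - a) ((N : ℝ) * b)) ∧
        RtilN a b c₀ N t = t - (N : ℝ) * b) ∨
      (t ∈ perSet a (Set.Ico ((N : ℝ) * b + b - a) ((N : ℝ) * b + c₀)) ∧
        RtilN a b c₀ N t = t - ((N : ℝ) * b + b))) ∧
    memP a b c r (RtilN a b c₀ N t) ∧ RmapN a b c₀ N (RtilN a b c₀ N t) = t := by
  have hb : 0 < b := ha.trans hab
  have hN' : (1 : ℝ) ≤ (N : ℝ) := by exact_mod_cast hN
  have hNb : b ≤ (N : ℝ) * b := by nlinarith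
  obtain ⟨x, hbin, hx0, hrow⟩ := ht
  obtain ⟨l, hl0, hl1⟩ := exists_rep a ha t ((N : ℝ) * b + c₀ - a)
  by_cases case1 : t - (l : ℝ) * a < (N : ℝ) * b
  · have hmem1 : t ∈ perSet a (Set.Ico ((N : ℝ) * b + c₀ - a) ((N : ℝ) * b)) := ⟨l, hl0, case1⟩
    have hval : RtilN a b c₀ N t = t - (N : ℝ) * b := by
      unfold RtilN; rw [if_pos hmem1]
    have hx : x (-N) = 1 := F1' a b c c₀ N t r x l ha hab h1 hc hN hx0 hrow hl0 case1
    have hmem : memP a b c r (RtilN a b c₀ N t) := by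
      have := shiftP a b c x hbin (-N) hx hrow
      have e : t + ((-N : ℤ) : ℝ) * b = RtilN a b c₀ N t := by rw [hval]; push_cast; ring
      rwa [e] at this
    have hu : RtilN a b c₀ N t ∈ perSet a (Set.Ico c₀ a) :=
      ⟨l - 1, by rw [hval]; push_cast; constructor <;> linarith⟩
    have hn1 : RtilN a b c₀ N t ∉ perSet a (Set.Ico 0 (c₀ + a - b)) := fun h =>
      perSet_disjoint a ha (by linarith) (by linarith) h hu
    have hn2 : RtilN a b c₀ N t ∉ perSet a (Set.Ico (c₀ + a - b) c₀) := fun h =>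
      perSet_disjoint a ha (le_refl _) (by linarith) h hu
    refine ⟨Or.inl ⟨hmem1, hval⟩, hmem, ?_⟩
    unfold RmapN; rw [if_neg hn1, if_neg hn2, hval]; ring
  · by_cases case2 : t - (l : ℝ) * a < (N : ℝ) * b + b - a
    · exact (F2' a b c c₀ N t r x l ha hab h1 h2 hc hN hx0 hrow (by linarith) case2).elim
    · have hmem3 : t ∈ perSet a (Set.Ico ((N : ℝ) * b + b - a) ((N : ℝ) * b + c₀)) :=
        ⟨l, by constructor <;> linarith⟩
      have hn1 : t ∉ perSet a (Set.Ico ((N : ℝ) * b + c₀ - a) ((N : ℝ) * b)) := fun h =>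
        perSet_disjoint a ha (by linarith) (by linarith) h hmem3
      have hn2 : t ∉ perSet a (Set.Ico ((N : ℝ) * b) ((N : ℝ) * b + b - a)) := fun h =>
        perSet_disjoint a ha (le_refl _) (by linarith) h hmem3
      have hval : RtilN a b c₀ N t = t - ((N : ℝ) * b + b) := by
        unfold RtilN; rw [if_neg hn1, if_neg hn2]; ring
      have hx : x (-N - 1) = 1 := F3' a b c c₀ N t r x l ha hab h2 hc hN hx0 hrow
        (by linarith) (by linarith)
      have hmem : memP a b c r (RtilN a b c₀ N t) := by
        have := shiftP a b c x hbin (-N - 1) hx hrow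
        have e : t + ((-N - 1 : ℤ) : ℝ) * b = RtilN a b c₀ N t := by rw [hval]; push_cast; ring
        rwa [e] at this
      have hu : RtilN a b c₀ N t ∈ perSet a (Set.Ico 0 (c₀ + a - b)) :=
        ⟨l - 1, by rw [hval]; push_cast; constructor <;> linarith⟩
      refine ⟨Or.inr ⟨hmem3, hval⟩, hmem, ?_⟩
      unfold RmapN; rw [if_pos hu, hval]; ring

end Main

lemma translate_image_eq (d : ℝ) (A : Set ℝ) :
    (fun u : ℝ => u + d) '' A = (fun u : ℝ => u - d) ⁻¹' A := by
  ext u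
  constructor
  · rintro ⟨x, hx, rfl⟩; simpa using hx
  · intro h; exact ⟨u - d, h, by ring⟩

lemma vol_translate (d : ℝ) (A : Set ℝ) :
    volume ((fun u : ℝ => u + d) '' A) = volume A := by
  rw [translate_image_eq,
    show (fun u : ℝ => u - d) = fun u : ℝ => u + (-d) from funext fun u => by ring,
    measure_preimage_add_right]

lemma measurableSet_perSet (a α β : ℝ) : MeasurableSet (perSet a (Set.Ico α β)) := by
  have : perSet a (Set.Ico α β) = ⋃ k : ℤ, (fun t : ℝ => t - (k : ℝ) * a) ⁻¹' (Set.Ico α β) := by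
    ext t; simp only [perSet, Set.mem_setOf_eq, Set.mem_iUnion, Set.mem_preimage]
  rw [this]
  exact MeasurableSet.iUnion fun k => measurableSet_Ico.preimage (measurable_id.sub_const _)

lemma vol_piecewise (f g : ℝ → ℝ) (P1 P3 : Set ℝ) (hP3m : MeasurableSet P3)
    (hP13 : ∀ t, t ∈ P1 → t ∈ P3 → False) (d1 d3 : ℝ) (S : Set ℝ)
    (hdich : ∀ t ∈ S, (t ∈ P1 ∧ f t = t + d1) ∨ (t ∈ P3 ∧ f t = t + d3))
    (hinv : ∀ t ∈ S, g (f t) = t)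
    (E : Set ℝ) (hE : E ⊆ S) (hEm : MeasurableSet E) : volume (f '' E) = volume E := by
  have hd : ∀ t ∈ E, (t ∈ P1 ∧ f t = t + d1) ∨ (t ∈ P3 ∧ f t = t + d3) :=
    fun t ht => hdich t (hE ht)
  have hv1 : ∀ t ∈ E, t ∈ P1 → f t = t + d1 := by
    intro t ht hP
    rcases hd t ht with ⟨_, hv⟩ | ⟨hP3, _⟩
    · exact hv
    · exact (hP13 t hP hP3).elim
  have hv3 : ∀ t ∈ E, t ∈ P3 → f t = t + d3 := by
    intro t ht hP
    rcases hd t ht with ⟨hP1, _⟩ | ⟨_, hv⟩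
    · exact (hP13 t hP1 hP).elim
    · exact hv
  have him : f '' E = ((fun u => u + d1) '' (E ∩ P1)) ∪ ((fun u => u + d3) '' (E ∩ P3)) := by
    ext u
    constructor
    · rintro ⟨t, ht, rfl⟩
      rcases hd t ht with ⟨hP, hv⟩ | ⟨hP, hv⟩
      · exact Or.inl ⟨t, ⟨ht, hP⟩, hv.symm⟩
      · exact Or.inr ⟨t, ⟨ht, hP⟩, hv.symm⟩
    · rintro (⟨t, ⟨ht, hP⟩, rfl⟩ | ⟨t, ⟨ht, hP⟩, rfl⟩)
      · exact ⟨t, ht, hv1 t ht hP⟩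
      · exact ⟨t, ht, hv3 t ht hP⟩
  have hdisj : Disjoint ((fun u => u + d1) '' (E ∩ P1)) ((fun u => u + d3) '' (E ∩ P3)) := by
    rw [Set.disjoint_left]
    rintro u ⟨t, ⟨ht, hP⟩, rfl⟩ ⟨s, ⟨hs, hQ⟩, heq⟩
    have hft : f t = t + d1 := hv1 t ht hP
    have hfs : f s = s + d3 := hv3 s hs hQ
    have hts : t = s := by
      have g1 : g (f t) = t := hinv t (hE ht)
      have g2 : g (f s) = s := hinv s (hE hs)
      rw [hft] at g1
      have heq' : s + d3 = t + d1 := heq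
      rw [hfs, heq'] at g2
      rw [g1] at g2
      exact g2
    exact hP13 t hP (hts ▸ hQ)
  have hdisj2 : Disjoint (E ∩ P1) (E ∩ P3) := by
    rw [Set.disjoint_left]
    rintro t ⟨_, hP⟩ ⟨_, hQ⟩
    exact hP13 t hP hQ
  have hcover : (E ∩ P1) ∪ (E ∩ P3) = E := by
    apply Set.Subset.antisymm
    · rintro t (⟨ht, _⟩ | ⟨ht, _⟩) <;> exact ht
    · intro t ht
      rcases hd t ht with ⟨hP, _⟩ | ⟨hP, _⟩
      · exact Or.inl ⟨ht, hP⟩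
      · exact Or.inr ⟨ht, hP⟩
  have hm3 : MeasurableSet ((fun u => u + d3) '' (E ∩ P3)) := by
    rw [translate_image_eq]
    exact (hEm.inter hP3m).preimage (measurable_id.sub_const _)
  calc volume (f '' E)
      = volume (((fun u => u + d1) '' (E ∩ P1)) ∪ ((fun u => u + d3) '' (E ∩ P3))) := by
        rw [him]
    _ = volume ((fun u => u + d1) '' (E ∩ P1)) + volume ((fun u => u + d3) '' (E ∩ P3)) :=
        measure_union hdisj hm3
    _ = volume (E ∩ P1) + volume (E ∩ P3) := by rw [vol_translate, vol_translate]
    _ = volume ((E ∩ P1) ∪ (E ∩ P3)) := (measure_union hdisj2 (hEm.inter hP3m)).symm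
    _ = volume E := by rw [hcover]

/-- Proposition `rabcbasic1`: with `c₀ = c − ⌊c/b⌋·b` and `b − a < c₀ < a`:
(i) `R_{a,b,c}` and `R̃_{a,b,c}` map `D_{a,b,c}` and `S_{a,b,c}` onto themselves;
(ii) on `S_{a,b,c}` (hence on `D_{a,b,c}`) they are mutually inverse;
(iii) on measurable subsets of `S_{a,b,c}` (hence of `D_{a,b,c}`) they preserve
Lebesgue measure. -/
theorem R_Rtil_invariance_inverse_measure_preserving (a b c c₀ : ℝ)
    (ha : 0 < a) (hab : a < b) (hbc : b < c)
    (hc0 : c₀ = c - (⌊c / b⌋ : ℝ) * b) (h1 : b - a < c₀) (h2 : c₀ < a) :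
    (Rmap a b c '' Dset a b c = Dset a b c ∧ Rtil a b c '' Dset a b c = Dset a b c ∧
      Rmap a b c '' Sset a b c = Sset a b c ∧ Rtil a b c '' Sset a b c = Sset a b c) ∧
    (∀ t ∈ Sset a b c, Rmap a b c (Rtil a b c t) = t ∧ Rtil a b c (Rmap a b c t) = t) ∧
    (∀ E : Set ℝ, E ⊆ Sset a b c → MeasurableSet E →
      volume (Rmap a b c '' E) = volume E ∧ volume (Rtil a b c '' E) = volume E) := by
  have hb : 0 < b := ha.trans hab
  set N : ℤ := ⌊c / b⌋ with hNdef
  have hc : c = (N : ℝ) * b + c₀ := by rw [hc0]; ring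
  have hNb0 : (0 : ℝ) < (N : ℝ) * b := by linarith
  have hN : 1 ≤ N := by
    by_contra h
    push_neg at h
    have h' : N ≤ 0 := by omega
    have h'' : (N : ℝ) ≤ 0 := by exact_mod_cast h'
    nlinarith
  have hRe : Rmap a b c = RmapN a b c₀ N := by
    funext u
    unfold Rmap RmapN
    rw [← hNdef, hc0]
  have hRte : Rtil a b c = RtilN a b c₀ N := by
    funext u
    unfold Rtil RtilN
    rw [← hNdef, hc0]
    rw [show c - (c - (N : ℝ) * b) = (N : ℝ) * b from by ring,
      show (N : ℝ) * b + (c - (N : ℝ) * b) - a = c - a from by ring,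
      show c + b - (c - (N : ℝ) * b) - a = (N : ℝ) * b + b - a from by ring]
  have hD : Dset a b c = {u : ℝ | memP a b c 2 u} := rfl
  have hS : Sset a b c = {u : ℝ | memP a b c 1 u} := rfl
  have fwd : ∀ r t : ℝ, memP a b c r t →
      ((t ∈ perSet a (Set.Ico 0 (c₀ + a - b)) ∧ RmapN a b c₀ N t = t + ((N : ℝ) * b + b)) ∨
        (t ∈ perSet a (Set.Ico c₀ a) ∧ RmapN a b c₀ N t = t + (N : ℝ) * b)) ∧
      memP a b c r (RmapN a b c₀ N t) ∧ RtilN a b c₀ N (RmapN a b c₀ N t) = t :=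
    fun r t ht => forwardR a b c c₀ N t r ha hab h1 h2 hc hN ht
  have bwd : ∀ r t : ℝ, memP a b c r t →
      ((t ∈ perSet a (Set.Ico ((N : ℝ) * b + c₀ - a) ((N : ℝ) * b)) ∧
          RtilN a b c₀ N t = t - (N : ℝ) * b) ∨
        (t ∈ perSet a (Set.Ico ((N : ℝ) * b + b - a) ((N : ℝ) * b + c₀)) ∧
          RtilN a b c₀ N t = t - ((N : ℝ) * b + b))) ∧
      memP a b c r (RtilN a b c₀ N t) ∧ RmapN a b c₀ N (RtilN a b c₀ N t) = t :=
    fun r t ht => backwardR a b c c₀ N t r ha hab h1 h2 hc hN ht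
  have himg : ∀ r : ℝ, RmapN a b c₀ N '' {u : ℝ | memP a b c r u} = {u : ℝ | memP a b c r u} := by
    intro r
    apply Set.Subset.antisymm
    · rintro u ⟨t, ht, rfl⟩
      exact (fwd r t ht).2.1
    · intro t ht
      exact ⟨RtilN a b c₀ N t, (bwd r t ht).2.1, (bwd r t ht).2.2⟩
  have himg' : ∀ r : ℝ, RtilN a b c₀ N '' {u : ℝ | memP a b c r u} = {u : ℝ | memP a b c r u} := by
    intro r
    apply Set.Subset.antisymm
    · rintro u ⟨t, ht, rfl⟩
      exact (bwd r t ht).2.1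
    · intro t ht
      exact ⟨RmapN a b c₀ N t, (fwd r t ht).2.1, (fwd r t ht).2.2⟩
  rw [hRe, hRte, hD, hS]
  refine ⟨⟨himg 2, himg' 2, himg 1, himg' 1⟩, ?_, ?_⟩
  · intro t ht
    exact ⟨(bwd 1 t ht).2.2, (fwd 1 t ht).2.2⟩
  · intro E hE hEm
    constructor
    · refine vol_piecewise (RmapN a b c₀ N) (RtilN a b c₀ N)
        (perSet a (Set.Ico 0 (c₀ + a - b))) (perSet a (Set.Ico c₀ a))
        (measurableSet_perSet a c₀ a)
        (fun t hp1 hp3 => perSet_disjoint a ha (by linarith) (by linarith) hp1 hp3)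
        ((N : ℝ) * b + b) ((N : ℝ) * b) {u : ℝ | memP a b c 1 u}
        (fun t ht => (fwd 1 t ht).1) (fun t ht => (fwd 1 t ht).2.2) E hE hEm
    · refine vol_piecewise (RtilN a b c₀ N) (RmapN a b c₀ N)
        (perSet a (Set.Ico ((N : ℝ) * b + c₀ - a) ((N : ℝ) * b)))
        (perSet a (Set.Ico ((N : ℝ) * b + b - a) ((N : ℝ) * b + c₀)))
        (measurableSet_perSet a _ _)
        (fun t hp1 hp3 => perSet_disjoint a ha (by linarith) (by linarith) hp1 hp3)
        (-((N : ℝ) * b)) (-((N : ℝ) * b + b)) {u : ℝ | memP a b c 1 u}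
        (fun t ht => ((bwd 1 t ht).1).imp
          (fun h => ⟨h.1, by rw [h.2]; ring⟩) (fun h => ⟨h.1, by rw [h.2]; ring⟩))
        (fun t ht => (bwd 1 t ht).2.2) E hE hEm
end

section
/- Let (a,b,c) be a triple of positive real numbers with a < b < c and b − a < c₀ < a, where c₀ := c − ⌊c/b⌋·b. Then for every t ∈ S_{a,b,c} there exists exactly one vector x ∈ B_b⁰ such that M_{a,b,c}(t)x = 1. -/
open MeasureTheory Set

namespace UBS


def ESol (a b c t : ℝ) (x : ℤ → ℝ) : Prop :=
  (∀ k, x k = 0 ∨ x k = 1) ∧ x 0 = 1 ∧ ∀ j : ℤ, Mrow a b c t x j = 1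

lemma chi_cases (c y : ℝ) : chiIco c y = 0 ∨ chiIco c y = 1 := by
  unfold chiIco; split <;> simp

lemma row_iff (a b c t : ℝ) (x : ℤ → ℝ) (hx : ∀ k, x k = 0 ∨ x k = 1) (j : ℤ) :
    Mrow a b c t x j = 1 ↔
      ∃! k : ℤ, (0 ≤ t - (j:ℝ)*a + (k:ℝ)*b ∧ t - (j:ℝ)*a + (k:ℝ)*b < c) ∧ x k = 1 := by
  classical
  set f : ℤ → ℝ := fun k => chiIco c (t - (j:ℝ)*a + (k:ℝ)*b) * x k with hfdef
  have hfone : ∀ k, f k = 1 ↔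
      ((0 ≤ t - (j:ℝ)*a + (k:ℝ)*b ∧ t - (j:ℝ)*a + (k:ℝ)*b < c) ∧ x k = 1) := by
    intro k
    constructor
    · intro h
      rcases chi_cases c (t - (j:ℝ)*a + (k:ℝ)*b) with h0 | h1
      · simp [hfdef, h0] at h
      · rcases hx k with hk0 | hk1
        · simp [hfdef, hk0] at h
        · refine ⟨?_, hk1⟩
          have : chiIco c (t - (j:ℝ)*a + (k:ℝ)*b) ≠ 0 := by
            intro h0; simp [hfdef, h0] at h
          unfold chiIco at this
          by_contra hc; simp [hc] at this
    · rintro ⟨hE, hk1⟩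
      have : chiIco c (t - (j:ℝ)*a + (k:ℝ)*b) = 1 := by unfold chiIco; simp [hE]
      simp [hfdef, this, hk1]
  have hf01 : ∀ k, f k = 0 ∨ f k = 1 := by
    intro k
    rcases chi_cases c (t - (j:ℝ)*a + (k:ℝ)*b) with h0 | h1
    · left; simp [hfdef, h0]
    · rcases hx k with hk0 | hk1
      · left; simp [hfdef, hk0]
      · right; simp [hfdef, h1, hk1]
  have hMf : Mrow a b c t x j = ∑' k, f k := rfl
  constructor
  · intro h
    rw [hMf] at h
    -- existence
    have hex : ∃ k, f k = 1 := by
      by_contra hne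
      push_neg at hne
      have : ∀ k, f k = 0 := fun k => (hf01 k).resolve_right (hne k)
      rw [tsum_congr this] at h
      simp at h
    obtain ⟨k0, hk0⟩ := hex
    refine ⟨k0, (hfone k0).mp hk0, ?_⟩
    intro k1 hk1
    have hk1' : f k1 = 1 := (hfone k1).mpr hk1
    by_contra hne
    have hsum : Summable f := by
      by_contra hns
      rw [tsum_eq_zero_of_not_summable hns] at h
      simp at h
    have h2 : (2:ℝ) ≤ ∑' k, f k := by
      have := Summable.sum_le_tsum ({k1, k0} : Finset ℤ)
        (fun i _ => by rcases hf01 i with h' | h' <;> simp [h']) hsum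
      rw [Finset.sum_pair hne, hk0, hk1'] at this
      linarith
    rw [h] at h2; norm_num at h2
  · rintro ⟨k0, hk0, huniq⟩
    rw [hMf]
    have : ∀ k, k ≠ k0 → f k = 0 := by
      intro k hk
      rcases hf01 k with h' | h'
      · exact h'
      · exact absurd (huniq k ((hfone k).mp h')) hk
    rw [tsum_eq_single k0 this]
    exact (hfone k0).mpr hk0

variable {a b c t : ℝ}

lemma sol_row (hx : ESol a b c t x) (j : ℤ) :
    ∃! k : ℤ, (0 ≤ t - (j:ℝ)*a + (k:ℝ)*b ∧ t - (j:ℝ)*a + (k:ℝ)*b < c) ∧ x k = 1 :=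
  (row_iff a b c t x hx.1 j).mp (hx.2.2 j)



lemma floor_mul_le (ha : 0 < a) (u : ℝ) : (⌊u/a⌋ : ℝ) * a ≤ u :=
  (le_div_iff₀ ha).mp (Int.floor_le _)

lemma lt_floor_succ (ha : 0 < a) (u : ℝ) : u < ((⌊u/a⌋ : ℝ) + 1) * a := by
  have h := Int.lt_floor_add_one (u/a)
  have := (div_lt_iff₀ ha).mp h
  linarith

lemma next_exists (ha : 0 < a) (hb : 0 < b) {x : ℤ → ℝ} (hx : ESol a b c t x) (m : ℤ) :
    ∃ n, m < n ∧ x n = 1 := by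
  obtain ⟨k, ⟨⟨h0, h1⟩, hk⟩, -⟩ := sol_row hx (⌊(t + (m:ℝ)*b)/a⌋ + 1)
  have hja : t + (m:ℝ)*b < ((⌊(t + (m:ℝ)*b)/a⌋ + 1 : ℤ):ℝ) * a := by
    push_cast
    exact lt_floor_succ ha _
  refine ⟨k, ?_, hk⟩
  have hlt : (m:ℝ)*b < (k:ℝ)*b := by linarith
  exact_mod_cast (mul_lt_mul_iff_of_pos_right hb).mp hlt

lemma prev_exists (ha : 0 < a) (hb : 0 < b) {x : ℤ → ℝ} (hx : ESol a b c t x) (m : ℤ) :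
    ∃ n, n < m ∧ x n = 1 := by
  obtain ⟨k, ⟨⟨h0, h1⟩, hk⟩, -⟩ := sol_row hx ⌊(t + (m:ℝ)*b - c)/a⌋
  have hja : ((⌊(t + (m:ℝ)*b - c)/a⌋ : ℤ):ℝ) * a ≤ t + (m:ℝ)*b - c := floor_mul_le ha _
  refine ⟨k, ?_, hk⟩
  have hlt : (k:ℝ)*b < (m:ℝ)*b := by linarith
  exact_mod_cast (mul_lt_mul_iff_of_pos_right hb).mp hlt

lemma floor_consec (ha : 0 < a) (hb : 0 < b) {x : ℤ → ℝ} (hx : ESol a b c t x)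
    {m n : ℤ} (hm : x m = 1) (hn : x n = 1) (hmn : m < n)
    (hbet : ∀ k, m < k → k < n → x k = 0) :
    ⌊(t + (m:ℝ)*b)/a⌋ = ⌊(t + (n:ℝ)*b - c)/a⌋ := by
  have hmnb : (m:ℝ)*b < (n:ℝ)*b := by
    have : (m:ℝ) < n := by exact_mod_cast hmn
    exact (mul_lt_mul_iff_of_pos_right hb).mpr this
  rcases lt_trichotomy ⌊(t + (m:ℝ)*b)/a⌋ ⌊(t + (n:ℝ)*b - c)/a⌋ with h | h | h
  · exfalso
    obtain ⟨k, ⟨⟨h0, h1⟩, hk⟩, -⟩ := sol_row hx ⌊(t + (n:ℝ)*b - c)/a⌋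
    have hjv : ((⌊(t + (n:ℝ)*b - c)/a⌋ : ℤ):ℝ) * a ≤ t + (n:ℝ)*b - c := floor_mul_le ha _
    have hju : t + (m:ℝ)*b < ((⌊(t + (n:ℝ)*b - c)/a⌋ : ℤ):ℝ) * a := by
      have h1' : t + (m:ℝ)*b < ((⌊(t + (m:ℝ)*b)/a⌋ : ℝ) + 1) * a := lt_floor_succ ha _
      have h2' : ((⌊(t + (m:ℝ)*b)/a⌋ : ℝ) + 1) ≤ ((⌊(t + (n:ℝ)*b - c)/a⌋ : ℤ):ℝ) := by
        exact_mod_cast h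
      nlinarith
    have hkm : m < k := by
      have hlt : (m:ℝ)*b < (k:ℝ)*b := by linarith
      exact_mod_cast (mul_lt_mul_iff_of_pos_right hb).mp hlt
    have hkn : n ≤ k := by
      by_contra hlt
      push_neg at hlt
      have h₀ := hbet k hkm hlt
      rw [h₀] at hk; norm_num at hk
    have hnk : (n:ℝ)*b ≤ (k:ℝ)*b := by
      have : (n:ℝ) ≤ k := by exact_mod_cast hkn
      exact mul_le_mul_of_nonneg_right this hb.le
    linarith
  · exact h
  · exfalso
    obtain ⟨k, -, huniq⟩ := sol_row hx ⌊(t + (m:ℝ)*b)/a⌋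
    have hju : ((⌊(t + (m:ℝ)*b)/a⌋ : ℤ):ℝ) * a ≤ t + (m:ℝ)*b := floor_mul_le ha _
    have hjv : t + (n:ℝ)*b - c < ((⌊(t + (m:ℝ)*b)/a⌋ : ℤ):ℝ) * a := by
      have h1' : t + (n:ℝ)*b - c < ((⌊(t + (n:ℝ)*b - c)/a⌋ : ℝ) + 1) * a := lt_floor_succ ha _
      have h2' : ((⌊(t + (n:ℝ)*b - c)/a⌋ : ℝ) + 1) ≤ ((⌊(t + (m:ℝ)*b)/a⌋ : ℤ):ℝ) := by
        exact_mod_cast h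
      nlinarith
    have hEm := huniq m ⟨⟨by linarith, by linarith⟩, hm⟩
    have hEn := huniq n ⟨⟨by linarith, by linarith⟩, hn⟩
    omega
  
lemma floor_gap (ha : 0 < a) {u v : ℝ} (hf : ⌊u/a⌋ = ⌊v/a⌋) : v - u < a := by
  have h1 : (⌊u/a⌋:ℝ)*a ≤ u := floor_mul_le ha u
  have h2 : v < ((⌊v/a⌋:ℝ)+1)*a := lt_floor_succ ha v
  rw [← hf] at h2
  nlinarith

lemma next_eq (ha : 0 < a) (hb : 0 < b) (hab : a < b) {x y : ℤ → ℝ}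
    (hx : ESol a b c t x) (hy : ESol a b c t y) {m n n' : ℤ}
    (hmx : x m = 1) (hmy : y m = 1)
    (hnx : x n = 1) (hmn : m < n) (hbx : ∀ k, m < k → k < n → x k = 0)
    (hny : y n' = 1) (hmn' : m < n') (hby : ∀ k, m < k → k < n' → y k = 0) : n = n' := by
  have f1 := floor_consec ha hb hx hmx hnx hmn hbx
  have f2 := floor_consec ha hb hy hmy hny hmn' hby
  by_contra hne
  rcases lt_or_gt_of_ne hne with h | h
  · have hg := floor_gap ha (f1.symm.trans f2)
    have hs : (n:ℝ) + 1 ≤ (n':ℝ) := by exact_mod_cast h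
    nlinarith
  · have hg := floor_gap ha (f2.symm.trans f1)
    have hs : (n':ℝ) + 1 ≤ (n:ℝ) := by exact_mod_cast h
    nlinarith

lemma prev_eq (ha : 0 < a) (hb : 0 < b) (hab : a < b) {x y : ℤ → ℝ}
    (hx : ESol a b c t x) (hy : ESol a b c t y) {n m m' : ℤ}
    (hnx : x n = 1) (hny : y n = 1)
    (hmx : x m = 1) (hmn : m < n) (hbx : ∀ k, m < k → k < n → x k = 0)
    (hm'y : y m' = 1) (hm'n : m' < n) (hby : ∀ k, m' < k → k < n → y k = 0) : m = m' := by
  have f1 := floor_consec ha hb hx hmx hnx hmn hbx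
  have f2 := floor_consec ha hb hy hm'y hny hm'n hby
  by_contra hne
  rcases lt_or_gt_of_ne hne with h | h
  · have hg := floor_gap ha (f1.trans f2.symm)
    have hs : (m:ℝ) + 1 ≤ (m':ℝ) := by exact_mod_cast h
    nlinarith
  · have hg := floor_gap ha (f2.trans f1.symm)
    have hs : (m':ℝ) + 1 ≤ (m:ℝ) := by exact_mod_cast h
    nlinarith

lemma step_up (ha : 0 < a) (hb : 0 < b) (hab : a < b) {x y : ℤ → ℝ}
    (hx : ESol a b c t x) (hy : ESol a b c t y) {k : ℤ} (hk : 0 < k)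
    (IH : ∀ k', 0 ≤ k' → k' < k → (x k' = 1 ↔ y k' = 1)) (hxk : x k = 1) : y k = 1 := by
  obtain ⟨m, ⟨hmk, hmx⟩, hmax⟩ := Int.exists_greatest_of_bdd
      (P := fun s => s < k ∧ x s = 1) ⟨k, fun z hz => hz.1.le⟩ ⟨0, hk, hx.2.1⟩
  have hm0 : 0 ≤ m := hmax 0 ⟨hk, hx.2.1⟩
  have hmy : y m = 1 := (IH m hm0 hmk).mp hmx
  have hbx : ∀ k', m < k' → k' < k → x k' = 0 := by
    intro k' h1 h2
    refine (hx.1 k').resolve_right (fun h => ?_)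
    have := hmax k' ⟨h2, h⟩; omega
  have hbyk : ∀ k', m < k' → k' < k → y k' = 0 := by
    intro k' h1 h2
    refine (hy.1 k').resolve_right (fun h => ?_)
    have h' := (IH k' (by omega) h2).mpr h
    have h0 := hbx k' h1 h2
    rw [h0] at h'; norm_num at h'
  obtain ⟨n', ⟨hmn', hn'y⟩, hmin⟩ := Int.exists_least_of_bdd
      (P := fun s => m < s ∧ y s = 1) ⟨m+1, fun z hz => by omega⟩ (next_exists ha hb hy m)
  have hbyn : ∀ k', m < k' → k' < n' → y k' = 0 := by
    intro k' h1 h2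
    refine (hy.1 k').resolve_right (fun h => ?_)
    have := hmin k' ⟨h1, h⟩; omega
  have heq := next_eq ha hb hab hx hy hmx hmy hxk hmk hbx hn'y hmn' hbyn
  rw [heq]; exact hn'y

lemma step_down (ha : 0 < a) (hb : 0 < b) (hab : a < b) {x y : ℤ → ℝ}
    (hx : ESol a b c t x) (hy : ESol a b c t y) {k : ℤ} (hk : k < 0)
    (IH : ∀ k', k < k' → k' ≤ 0 → (x k' = 1 ↔ y k' = 1)) (hxk : x k = 1) : y k = 1 := by
  obtain ⟨m, ⟨hkm, hmx⟩, hmin⟩ := Int.exists_least_of_bdd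
      (P := fun s => k < s ∧ x s = 1) ⟨k+1, fun z hz => by omega⟩ ⟨0, hk, hx.2.1⟩
  have hm0 : m ≤ 0 := hmin 0 ⟨hk, hx.2.1⟩
  have hmy : y m = 1 := (IH m hkm hm0).mp hmx
  have hbx : ∀ k', k < k' → k' < m → x k' = 0 := by
    intro k' h1 h2
    refine (hx.1 k').resolve_right (fun h => ?_)
    have := hmin k' ⟨h1, h⟩; omega
  have hbyk : ∀ k', k < k' → k' < m → y k' = 0 := by
    intro k' h1 h2
    refine (hy.1 k').resolve_right (fun h => ?_)
    have h' := (IH k' h1 (by omega)).mpr h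
    have h0 := hbx k' h1 h2
    rw [h0] at h'; norm_num at h'
  obtain ⟨m', ⟨hm'm, hm'y⟩, hmax⟩ := Int.exists_greatest_of_bdd
      (P := fun s => s < m ∧ y s = 1) ⟨m, fun z hz => hz.1.le⟩ (prev_exists ha hb hy m)
  have hbym : ∀ k', m' < k' → k' < m → y k' = 0 := by
    intro k' h1 h2
    refine (hy.1 k').resolve_right (fun h => ?_)
    have := hmax k' ⟨h2, h⟩; omega
  have heq := prev_eq ha hb hab hx hy hmx hmy hxk hkm hbx hm'y hm'm hbym
  rw [heq]; exact hm'y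

lemma agree (ha : 0 < a) (hb : 0 < b) (hab : a < b) {x y : ℤ → ℝ}
    (hx : ESol a b c t x) (hy : ESol a b c t y) : ∀ k : ℤ, x k = 1 ↔ y k = 1 := by
  have up : ∀ N : ℕ, ∀ k : ℤ, 0 ≤ k → k ≤ (N:ℤ) → (x k = 1 ↔ y k = 1) := by
    intro N
    induction N with
    | zero =>
      intro k h1 h2
      have hk0 : k = 0 := by omega
      rw [hk0, hx.2.1, hy.2.1]
    | succ N IH =>
      intro k h1 h2
      by_cases hkN : k ≤ (N:ℤ)
      · exact IH k h1 hkN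
      · have hk0 : 0 < k := by omega
        have IH' : ∀ k', 0 ≤ k' → k' < k → (x k' = 1 ↔ y k' = 1) := by
          intro k' a1 a2; exact IH k' a1 (by omega)
        exact ⟨step_up ha hb hab hx hy hk0 IH',
          step_up ha hb hab hy hx hk0 (fun k' a1 a2 => (IH' k' a1 a2).symm)⟩
  have dn : ∀ N : ℕ, ∀ k : ℤ, -(N:ℤ) ≤ k → k ≤ 0 → (x k = 1 ↔ y k = 1) := by
    intro N
    induction N with
    | zero =>
      intro k h1 h2
      have hk0 : k = 0 := by omega
      rw [hk0, hx.2.1, hy.2.1]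
    | succ N IH =>
      intro k h1 h2
      by_cases hkN : -(N:ℤ) ≤ k
      · exact IH k hkN h2
      · have hk0 : k < 0 := by omega
        have IH' : ∀ k', k < k' → k' ≤ 0 → (x k' = 1 ↔ y k' = 1) := by
          intro k' a1 a2
          refine IH k' ?_ a2
          push_cast at h1 hkN ⊢
          omega
        exact ⟨step_down ha hb hab hx hy hk0 IH',
          step_down ha hb hab hy hx hk0 (fun k' a1 a2 => (IH' k' a1 a2).symm)⟩
  intro k
  rcases le_or_gt 0 k with h | h
  · exact up k.toNat k h (by omega)
  · exact dn (-k).toNat k (by omega) (by omega)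

end UBS

/-- Proposition `uniqueness`: with `c₀ = c − ⌊c/b⌋·b` and `b − a < c₀ < a`, for every
`t ∈ S_{a,b,c}` there is a unique binary vector `x` with `x(0) = 1` and `M_{a,b,c}(t)x = 1`. -/
theorem unique_binary_solution (a b c c₀ : ℝ)
    (ha : 0 < a) (hab : a < b) (hbc : b < c)
    (hc0 : c₀ = c - (⌊c / b⌋ : ℝ) * b) (h1 : b - a < c₀) (h2 : c₀ < a) :
    ∀ t ∈ Sset a b c,
      ∃! x : ℤ → ℝ,
        (∀ k, x k = 0 ∨ x k = 1) ∧ x 0 = 1 ∧ ∀ j : ℤ, Mrow a b c t x j = 1 := by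
  intro t ht
  obtain ⟨x, hx1, hx2, hx3⟩ := ht
  have hb : 0 < b := ha.trans hab
  refine ⟨x, ⟨hx1, hx2, hx3⟩, ?_⟩
  intro y hy
  have hxs : UBS.ESol a b c t x := ⟨hx1, hx2, hx3⟩
  have hys : UBS.ESol a b c t y := hy
  funext k
  have hiff := UBS.agree ha hb hab hys hxs k
  rcases hy.1 k with h0 | h1
  · rcases hx1 k with g0 | g1
    · rw [h0, g0]
    · exfalso
      have h' := hiff.mpr g1
      rw [h0] at h'; norm_num at h'
  · rw [h1, hiff.mp h1]
end

section
/- Let (a,b,c) be a triple of positive real numbers with a < b < c and b − a < c₀ < a, where c₀ := c − ⌊c/b⌋·b. Then for every integer n ≥ 0, the image set (R_{a,b,c})ⁿ([c−c₀, c+b−c₀−a) + aℤ) of the n-fold iterate of R_{a,b,c} applied to the black hole of R̃_{a,b,c} is disjoint from S_{a,b,c}. -/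
open MeasureTheory Set

lemma chiIco_eq_zero_or_one (c y : ℝ) : chiIco c y = 0 ∨ chiIco c y = 1 := by
  unfold chiIco; split <;> simp

lemma chiIco_eq_one {c y : ℝ} (h1 : 0 ≤ y) (h2 : y < c) : chiIco c y = 1 := by
  unfold chiIco; rw [if_pos ⟨h1, h2⟩]

lemma chiIco_eq_zero {c y : ℝ} (h : ¬ (0 ≤ y ∧ y < c)) : chiIco c y = 0 := by
  unfold chiIco; rw [if_neg h]

lemma row_spec {a b c t : ℝ} (hb : 0 < b) {x : ℤ → ℝ}
    (hx : ∀ k, x k = 0 ∨ x k = 1) (j : ℤ)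
    (hrow : Mrow a b c t x j = 1) :
    ∃ k : ℤ, (x k = 1 ∧ 0 ≤ t - (j:ℝ)*a + (k:ℝ)*b ∧ t - (j:ℝ)*a + (k:ℝ)*b < c) ∧
      ∀ k' : ℤ, x k' = 1 → 0 ≤ t - (j:ℝ)*a + (k':ℝ)*b → t - (j:ℝ)*a + (k':ℝ)*b < c → k' = k := by
  classical
  unfold Mrow at hrow
  set f : ℤ → ℝ := fun k => chiIco c (t - (j:ℝ)*a + (k:ℝ)*b) * x k with hf
  have hf01 : ∀ k, f k = 0 ∨ f k = 1 := by
    intro k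
    rcases hx k with h | h <;>
      rcases chiIco_eq_zero_or_one c (t - (j:ℝ)*a + (k:ℝ)*b) with h2 | h2 <;>
        simp [hf, h, h2]
  have hfone : ∀ k, (f k = 1 ↔ x k = 1 ∧ 0 ≤ t - (j:ℝ)*a + (k:ℝ)*b ∧ t - (j:ℝ)*a + (k:ℝ)*b < c) := by
    intro k
    rcases hx k with h1 | h1 <;>
      by_cases hP : (0 ≤ t - (j:ℝ)*a + (k:ℝ)*b ∧ t - (j:ℝ)*a + (k:ℝ)*b < c) <;>
        simp [hf, chiIco, h1, hP]
  set lo : ℤ := ⌈((j:ℝ)*a - t)/b⌉ with hlo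
  set hi : ℤ := ⌊((j:ℝ)*a - t + c)/b⌋ with hhi
  have hsupp : ∀ k ∉ Finset.Icc lo hi, f k = 0 := by
    intro k hk
    rw [Finset.mem_Icc] at hk
    push_neg at hk
    have hchi : chiIco c (t - (j:ℝ)*a + (k:ℝ)*b) = 0 := by
      apply chiIco_eq_zero
      by_cases hl : lo ≤ k
      · have hh : hi < k := hk hl
        have h3 : ((j:ℝ)*a - t + c)/b < (k:ℝ) := by
          by_contra hcon
          push_neg at hcon
          exact absurd (Int.le_floor.mpr hcon) (not_le.mpr hh)
        have h4 : (j:ℝ)*a - t + c < (k:ℝ)*b := (div_lt_iff₀ hb).mp h3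
        rintro ⟨-, h5⟩; linarith
      · have h3 : (k:ℝ) < ((j:ℝ)*a - t)/b := by
          by_contra hcon
          push_neg at hcon
          exact hl (Int.ceil_le.mpr hcon)
        have h4 : (k:ℝ)*b < (j:ℝ)*a - t := (lt_div_iff₀ hb).mp h3
        rintro ⟨h5, -⟩; linarith
    simp [hf, hchi]
  have hsummable : Summable f := summable_of_ne_finset_zero hsupp
  have htsum : ∑' k, f k = 1 := hrow
  have hex : ∃ k, f k = 1 := by
    by_contra h
    push_neg at h
    have hz : ∀ k, f k = 0 := fun k => (hf01 k).resolve_right (h k)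
    have : f = fun _ => 0 := funext hz
    rw [this] at htsum
    simpa using htsum
  obtain ⟨k, hk⟩ := hex
  refine ⟨k, (hfone k).1 hk, ?_⟩
  intro k' h1 h2 h3
  by_contra hne
  have hk' : f k' = 1 := (hfone k').2 ⟨h1, h2, h3⟩
  have hpair : ({k', k} : Finset ℤ).sum f ≤ ∑' i, f i :=
    Summable.sum_le_tsum _ (fun i _ => by rcases hf01 i with h|h <;> rw [show chiIco c (t - (j:ℝ)*a + (i:ℝ)*b) * x i = f i from rfl, h] <;> norm_num) hsummable
  rw [Finset.sum_pair hne] at hpair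
  rw [htsum] at hpair
  linarith [show chiIco c (t - (j:ℝ)*a + (k:ℝ)*b) * x k = 1 from hk,
    show chiIco c (t - (j:ℝ)*a + (k':ℝ)*b) * x k' = 1 from hk']

lemma Mrow_shift (a b c t : ℝ) (x : ℤ → ℝ) (m j : ℤ) :
    Mrow a b c (t - (m:ℝ)*b) (fun k => x (k - m)) j = Mrow a b c t x j := by
  unfold Mrow
  have h : ∀ k : ℤ, chiIco c (t - (m:ℝ)*b - (j:ℝ)*a + (k:ℝ)*b) * x (k - m)
      = (fun k' : ℤ => chiIco c (t - (j:ℝ)*a + (k':ℝ)*b) * x k') ((Equiv.subRight m) k) := by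
    intro k
    simp only [Equiv.subRight_apply]
    congr 2
    push_cast
    ring
  calc ∑' k : ℤ, chiIco c (t - (m:ℝ)*b - (j:ℝ)*a + (k:ℝ)*b) * x (k - m)
      = ∑' k : ℤ, (fun k' : ℤ => chiIco c (t - (j:ℝ)*a + (k':ℝ)*b) * x k') ((Equiv.subRight m) k) :=
        tsum_congr h
    _ = _ := (Equiv.subRight m).tsum_eq (fun k' : ℤ => chiIco c (t - (j:ℝ)*a + (k':ℝ)*b) * x k')

lemma window_unique {a t u : ℝ} (ha : 0 < a) {i j : ℤ}
    (h1 : u ≤ t - (i:ℝ)*a) (h2 : t - (i:ℝ)*a < u + a)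
    (h3 : u ≤ t - (j:ℝ)*a) (h4 : t - (j:ℝ)*a < u + a) : i = j := by
  have h5 : (i:ℝ) * a < ((j:ℝ)+1) * a := by rw [add_mul, one_mul]; linarith
  have h6 : (j:ℝ) * a < ((i:ℝ)+1) * a := by rw [add_mul, one_mul]; linarith
  have h7 : (i:ℝ) < (j:ℝ)+1 := lt_of_mul_lt_mul_right h5 (le_of_lt ha)
  have h8 : (j:ℝ) < (i:ℝ)+1 := lt_of_mul_lt_mul_right h6 (le_of_lt ha)
  have h9 : i < j + 1 := by exact_mod_cast h7
  have h10 : j < i + 1 := by exact_mod_cast h8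
  omega

lemma key (a b c : ℝ) (ha : 0 < a) (hab : a < b) (hbc : b < c)
    (h1 : b - a < c - (⌊c / b⌋ : ℝ) * b) (h2 : c - (⌊c / b⌋ : ℝ) * b < a)
    (t : ℝ) (x : ℤ → ℝ) (hx : ∀ k, x k = 0 ∨ x k = 1) (hx0 : x 0 = 1)
    (hrow : ∀ j : ℤ, Mrow a b c t x j = 1) :
    ∃ j : ℤ,
      (x (-⌊c / b⌋) = 1 ∧ c ≤ t - (j:ℝ)*a ∧ t - (j:ℝ)*a < c + a - (c - (⌊c / b⌋ : ℝ)*b))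
      ∨ (x (-⌊c / b⌋ - 1) = 1 ∧ c + b - (c - (⌊c / b⌋ : ℝ)*b) ≤ t - (j:ℝ)*a ∧ t - (j:ℝ)*a < c + a) := by
  have hb : 0 < b := lt_trans ha hab
  set q : ℤ := ⌊c / b⌋ with hq
  have hq1 : 1 ≤ q := by
    rw [hq]
    exact Int.le_floor.mpr (by rw [Int.cast_one]; exact (one_le_div hb).mpr (le_of_lt hbc))
  have hQ1 : (1:ℝ) ≤ (q:ℝ) := by exact_mod_cast hq1
  set J : ℤ := ⌊(t - c)/a⌋ with hJ
  have hJ1 : (J:ℝ)*a ≤ t - c := by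
    have h := Int.floor_le ((t - c)/a)
    calc (J:ℝ)*a ≤ ((t-c)/a)*a := mul_le_mul_of_nonneg_right h (le_of_lt ha)
    _ = t - c := by field_simp
  have hJ2 : t - c < (J:ℝ)*a + a := by
    have h := Int.lt_floor_add_one ((t - c)/a)
    have h' : t - c < ((J:ℝ)+1)*a := by
      calc t - c = ((t-c)/a)*a := by field_simp
      _ < ((J:ℝ)+1)*a := mul_lt_mul_of_pos_right (by exact_mod_cast h) ha
    rw [add_mul, one_mul] at h'
    linarith
  obtain ⟨k₁, ⟨hk₁x, hk₁0, hk₁c⟩, _⟩ := row_spec hb hx J (hrow J)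
  have hw1 : c ≤ t - (J:ℝ)*a := by linarith
  have hw2 : t - (J:ℝ)*a < c + a := by linarith
  have hk₁neg : k₁ ≤ -1 := by
    by_contra h
    push_neg at h
    have h0 : (0:ℝ) ≤ (k₁:ℝ) := by exact_mod_cast (by omega : (0:ℤ) ≤ k₁)
    have hkb : 0 ≤ (k₁:ℝ)*b := mul_nonneg h0 (le_of_lt hb)
    linarith
  have hk₁low : -q - 1 ≤ k₁ := by
    by_contra h
    push_neg at h
    have h0 : (k₁:ℝ) ≤ -(q:ℝ) - 2 := by exact_mod_cast (by omega : k₁ ≤ -q-2)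
    have h3 : (k₁:ℝ)*b ≤ (-(q:ℝ)-2)*b := mul_le_mul_of_nonneg_right h0 (le_of_lt hb)
    have h4 : (-(q:ℝ)-2)*b = -((q:ℝ)*b) - 2*b := by ring
    linarith
  have hcast : ((J+1 : ℤ):ℝ)*a = (J:ℝ)*a + a := by push_cast; ring
  have hk₁up : k₁ ≤ -q := by
    by_contra h
    push_neg at h
    have h0 : -(q:ℝ) + 1 ≤ (k₁:ℝ) := by exact_mod_cast (by omega : -q+1 ≤ k₁)
    have h3 : (-(q:ℝ)+1)*b ≤ (k₁:ℝ)*b := mul_le_mul_of_nonneg_right h0 (le_of_lt hb)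
    have h4 : (-(q:ℝ)+1)*b = -((q:ℝ)*b) + b := by ring
    obtain ⟨k₂, -, huniq2⟩ := row_spec hb hx (J+1) (hrow (J+1))
    have e0 : (0:ℤ) = k₂ := by
      apply huniq2 0 hx0 <;> rw [hcast] <;> push_cast <;> linarith
    have e1 : k₁ = k₂ := by
      apply huniq2 k₁ hk₁x <;> rw [hcast] <;> linarith
    omega
  rcases (by omega : k₁ = -q ∨ k₁ = -q - 1) with hk | hk
  · -- k₁ = -q
    have hKQ : (k₁:ℝ) = -(q:ℝ) := by rw [hk]; push_cast; ring
    refine ⟨J, Or.inl ⟨by rw [← hk]; exact hk₁x, hw1, ?_⟩⟩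
    by_contra hcon
    push_neg at hcon
    obtain ⟨k₂, -, huniq2⟩ := row_spec hb hx (J+1) (hrow (J+1))
    have e0 : (0:ℤ) = k₂ := by
      apply huniq2 0 hx0 <;> rw [hcast] <;> push_cast <;> linarith
    have e1 : k₁ = k₂ := by
      apply huniq2 k₁ hk₁x <;> rw [hcast] <;> rw [hKQ] at hk₁0 hk₁c ⊢ <;> linarith
    omega
  · -- k₁ = -q-1
    have hKQ : (k₁:ℝ) = -(q:ℝ) - 1 := by rw [hk]; push_cast; ring
    refine ⟨J, Or.inr ⟨by rw [← hk]; exact hk₁x, ?_, hw2⟩⟩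
    rw [hKQ] at hk₁0
    nlinarith [hk₁0]

lemma notBH (a b c : ℝ) (ha : 0 < a) (hab : a < b) (hbc : b < c)
    (h1 : b - a < c - (⌊c / b⌋ : ℝ) * b) (h2 : c - (⌊c / b⌋ : ℝ) * b < a)
    (t : ℝ) (ht : t ∈ Sset a b c) :
    t ∉ perSet a (Set.Ico (c - (c - (⌊c / b⌋ : ℝ) * b))
      (c + b - (c - (⌊c / b⌋ : ℝ) * b) - a)) := by
  rintro ⟨j', hj'⟩
  rw [Set.mem_Ico] at hj'
  obtain ⟨x, hx, hx0, hrow⟩ := ht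
  obtain ⟨j, hcase⟩ := key a b c ha hab hbc h1 h2 t x hx hx0 hrow
  -- t - (j'-1) a ∈ [c + a - c₀, c + b - c₀) ⊆ [c, c+a)
  have hcast : ((j' - 1 : ℤ):ℝ)*a = (j':ℝ)*a - a := by push_cast; ring
  have hw1 : c ≤ t - ((j'-1:ℤ):ℝ)*a := by rw [hcast]; linarith
  have hw2 : t - ((j'-1:ℤ):ℝ)*a < c + a := by rw [hcast]; linarith
  rcases hcase with ⟨-, hl1, hl2⟩ | ⟨-, hl1, hl2⟩
  · have hj : j = j' - 1 := window_unique ha hl1 (by linarith) hw1 hw2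
    rw [hj, hcast] at hl2
    linarith
  · have hj : j = j' - 1 := window_unique ha (by linarith) hl2 hw1 hw2
    rw [hj, hcast] at hl1
    linarith

lemma pred_mem (a b c : ℝ) (ha : 0 < a) (hab : a < b) (hbc : b < c)
    (h1 : b - a < c - (⌊c / b⌋ : ℝ) * b) (h2 : c - (⌊c / b⌋ : ℝ) * b < a)
    (s t : ℝ) (hR : Rmap a b c s = t) (ht : t ∈ Sset a b c) : s ∈ Sset a b c := by
  have hb : 0 < b := lt_trans ha hab
  obtain ⟨x, hx, hx0, hrow⟩ := ht
  unfold Rmap at hR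
  split_ifs at hR with hr1 hr2
  · -- branch 1 : t = s + qb + b, shift by q+1
    obtain ⟨j, hj⟩ := hr1
    rw [Set.mem_Ico] at hj
    have hw1 : c + b - (c - (⌊c / b⌋ : ℝ)*b) ≤ t - (j:ℝ)*a := by linarith [hj.1]
    have hw2 : t - (j:ℝ)*a < c + a := by linarith [hj.2]
    obtain ⟨j₀, hcase⟩ := key a b c ha hab hbc h1 h2 t x hx hx0 hrow
    have hxm : x (-⌊c / b⌋ - 1) = 1 := by
      rcases hcase with ⟨-, hl1, hl2⟩ | ⟨hxm, hl1, hl2⟩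
      · have hj₀ : j₀ = j := window_unique ha hl1 (by linarith)
          (show c ≤ t - (j:ℝ)*a by linarith) hw2
        rw [hj₀] at hl2
        linarith
      · exact hxm
    have hs : s = t - ((⌊c / b⌋ + 1 : ℤ):ℝ)*b := by push_cast; linarith
    refine ⟨fun k => x (k - (⌊c / b⌋ + 1)), fun k => hx _, ?_, ?_⟩
    · show x (0 - (⌊c / b⌋ + 1)) = 1
      rw [show (0:ℤ) - (⌊c / b⌋ + 1) = -⌊c / b⌋ - 1 by ring]
      exact hxm
    · intro j'
      rw [hs, Mrow_shift a b c t x (⌊c / b⌋ + 1) j']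
      exact hrow j'
  · -- branch 2 : s = t
    rw [hR]
    exact ⟨x, hx, hx0, hrow⟩
  · -- branch 3 : t = s + qb, shift by q
    set j : ℤ := ⌊s / a⌋ with hjdef
    have hj1 : (j:ℝ)*a ≤ s := by
      have h := Int.floor_le (s/a)
      calc (j:ℝ)*a ≤ (s/a)*a := mul_le_mul_of_nonneg_right h (le_of_lt ha)
      _ = s := by field_simp
    have hj2 : s < (j:ℝ)*a + a := by
      have h := Int.lt_floor_add_one (s/a)
      have h' : s < ((j:ℝ)+1)*a := by
        calc s = (s/a)*a := by field_simp
        _ < ((j:ℝ)+1)*a := mul_lt_mul_of_pos_right (by exact_mod_cast h) ha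
      rw [add_mul, one_mul] at h'
      linarith
    have hj3 : c - (⌊c / b⌋ : ℝ)*b ≤ s - (j:ℝ)*a := by
      by_contra hcon
      push_neg at hcon
      by_cases hsm : s - (j:ℝ)*a < (c - (⌊c / b⌋ : ℝ)*b) + a - b
      · exact hr1 ⟨j, Set.mem_Ico.mpr ⟨by linarith, hsm⟩⟩
      · push_neg at hsm
        exact hr2 ⟨j, Set.mem_Ico.mpr ⟨hsm, hcon⟩⟩
    have hw1 : c ≤ t - (j:ℝ)*a := by linarith [hj3]
    have hw2 : t - (j:ℝ)*a < c + a - (c - (⌊c / b⌋ : ℝ)*b) := by linarith [hj2]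
    obtain ⟨j₀, hcase⟩ := key a b c ha hab hbc h1 h2 t x hx hx0 hrow
    have hxm : x (-⌊c / b⌋) = 1 := by
      rcases hcase with ⟨hxm, hl1, hl2⟩ | ⟨-, hl1, hl2⟩
      · exact hxm
      · have hj₀ : j₀ = j := window_unique ha (by linarith) hl2 hw1 (by linarith)
        rw [hj₀] at hl1
        linarith
    have hs : s = t - ((⌊c / b⌋ : ℤ):ℝ)*b := by push_cast; linarith
    refine ⟨fun k => x (k - ⌊c / b⌋), fun k => hx _, ?_, ?_⟩
    · show x (0 - ⌊c / b⌋) = 1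
      rw [show (0:ℤ) - ⌊c / b⌋ = -⌊c / b⌋ by ring]
      exact hxm
    · intro j'
      rw [hs, Mrow_shift a b c t x ⌊c / b⌋ j']
      exact hrow j'


/-- Proposition `blackholestwo`: with `c₀ = c − ⌊c/b⌋·b` and `b − a < c₀ < a`, for every
`n ≥ 0` the image `(R_{a,b,c})ⁿ([c−c₀, c+b−c₀−a) + aℤ)` is disjoint from `S_{a,b,c}`. -/
theorem iterated_blackhole_disjoint_from_S (a b c c₀ : ℝ)
    (ha : 0 < a) (hab : a < b) (hbc : b < c)
    (hc0 : c₀ = c - (⌊c / b⌋ : ℝ) * b) (h1 : b - a < c₀) (h2 : c₀ < a) :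
    ∀ n : ℕ,
      ((Rmap a b c)^[n] '' perSet a (Set.Ico (c - c₀) (c + b - c₀ - a))) ∩ Sset a b c
        = ∅ := by
  subst hc0
  intro n
  induction n with
  | zero =>
    rw [Set.eq_empty_iff_forall_notMem]
    rintro t ⟨⟨w, hw, hwt⟩, htS⟩
    simp only [Function.iterate_zero, id] at hwt
    subst hwt
    exact notBH a b c ha hab hbc h1 h2 w htS hw
  | succ n ih =>
    rw [Set.eq_empty_iff_forall_notMem]
    rintro t ⟨⟨w, hw, hwt⟩, htS⟩
    rw [Function.iterate_succ_apply'] at hwt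
    have hs : (Rmap a b c)^[n] w ∈ Sset a b c :=
      pred_mem a b c ha hab hbc h1 h2 _ t hwt htS
    rw [Set.eq_empty_iff_forall_notMem] at ih
    exact ih ((Rmap a b c)^[n] w) ⟨⟨w, hw, rfl⟩, hs⟩
end

section
/- Let (a,b,c) be a triple of positive real numbers with a < b < c, b − a < c₀ < a, and a/b ∉ ℚ, where c₀ := c − ⌊c/b⌋·b. Then: (i) if S_{a,b,c} ≠ ∅, then for every ε > 0 both (0, ε) ∩ S_{a,b,c} ≠ ∅ and (−ε, 0) ∩ S_{a,b,c} ≠ ∅; (ii) if D_{a,b,c} ≠ ∅, then for every ε > 0 both (0, ε) ∩ D_{a,b,c} ≠ ∅ and (−ε, 0) ∩ D_{a,b,c} ≠ ∅. -/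
open MeasureTheory Set

/-- generic version with row value `r` -/
def Gset (a b c r : ℝ) : Set ℝ :=
  {t : ℝ | ∃ x : ℤ → ℝ, (∀ k, x k = 0 ∨ x k = 1) ∧ x 0 = 1 ∧ ∀ j : ℤ, Mrow a b c t x j = r}

lemma Sset_eq_G (a b c : ℝ) : Sset a b c = Gset a b c 1 := rfl
lemma Dset_eq_G (a b c : ℝ) : Dset a b c = Gset a b c 2 := rfl

lemma chi_of_mem {c v : ℝ} (h0 : 0 ≤ v) (h1 : v < c) : chiIco c v = 1 := by
  simp [chiIco, h0, h1]

lemma chi_of_neg {c v : ℝ} (h : v < 0) : chiIco c v = 0 := by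
  simp only [chiIco, ite_eq_right_iff]
  rintro ⟨h1, -⟩; linarith

lemma chi_of_ge {c v : ℝ} (h : c ≤ v) : chiIco c v = 0 := by
  simp only [chiIco, ite_eq_right_iff]
  rintro ⟨-, h2⟩; linarith

lemma chi_ne_zero {c v : ℝ} (h : chiIco c v ≠ 0) : 0 ≤ v ∧ v < c := by
  by_contra hc
  simp [chiIco, hc] at h

/-- summability of a generic row-like sum -/
lemma summable_chi {b : ℝ} (hb : 0 < b) (x : ℤ → ℝ) (C T : ℝ) :
    Summable (fun k : ℤ => chiIco C (T + (k : ℝ) * b) * x k) := by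
  apply summable_of_ne_finset_zero (s := Finset.Icc ⌈(-T) / b⌉ ⌊(C - T) / b⌋)
  intro k hk
  rw [Finset.mem_Icc, not_and_or] at hk
  rcases hk with hk | hk
  · push_neg at hk
    have : (k : ℝ) < (-T) / b := Int.lt_ceil.mp hk
    have : (k : ℝ) * b < -T := by
      calc (k:ℝ) * b < ((-T)/b) * b := by exact mul_lt_mul_of_pos_right this hb
      _ = -T := by field_simp
    rw [chi_of_neg (by linarith), zero_mul]
  · push_neg at hk
    have : (C - T) / b < (k : ℝ) := Int.floor_lt.mp hk
    have : C - T < (k : ℝ) * b := by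
      calc C - T = ((C - T)/b) * b := by field_simp
      _ < (k:ℝ) * b := mul_lt_mul_of_pos_right this hb
    rw [chi_of_ge (by linarith), zero_mul]

lemma summable_row {a b c : ℝ} (hb : 0 < b) (x : ℤ → ℝ) (t : ℝ) (j : ℤ) :
    Summable (fun k : ℤ => chiIco c (t - (j : ℝ) * a + (k : ℝ) * b) * x k) :=
  summable_chi hb x c (t - (j : ℝ) * a)

/-- shift by multiples of `a` -/
lemma memG_shift_a {a b c r : ℝ} {t : ℝ} (ht : t ∈ Gset a b c r) (n : ℤ) :
    t + (n : ℝ) * a ∈ Gset a b c r := by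
  obtain ⟨x, hx, hx0, hrow⟩ := ht
  refine ⟨x, hx, hx0, fun j => ?_⟩
  have : Mrow a b c (t + (n:ℝ)*a) x j = Mrow a b c t x (j - n) := by
    unfold Mrow
    apply tsum_congr
    intro k
    congr 2
    push_cast
    ring
  rw [this, hrow]

/-- shift by `k₀·b` when `x k₀ = 1` -/
lemma memG_shift_b {a b c r : ℝ} {t : ℝ} {x : ℤ → ℝ}
    (hx : ∀ k, x k = 0 ∨ x k = 1) (hrow : ∀ j : ℤ, Mrow a b c t x j = r)
    (k₀ : ℤ) (hk : x k₀ = 1) :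
    t + (k₀ : ℝ) * b ∈ Gset a b c r := by
  refine ⟨fun k => x (k + k₀), fun k => hx _, by simpa using hk, fun j => ?_⟩
  have : Mrow a b c (t + (k₀:ℝ)*b) (fun k => x (k + k₀)) j = Mrow a b c t x j := by
    unfold Mrow
    have := Equiv.tsum_eq (Equiv.addRight k₀)
      (fun k : ℤ => chiIco c (t - (j : ℝ) * a + (k : ℝ) * b) * x k)
    rw [← this]
    apply tsum_congr
    intro k
    simp only [Equiv.coe_addRight]
    congr 2
    push_cast
    ring
  rw [this, hrow]

/-- normalization into `[0, a)` -/
lemma memG_norm {a b c r : ℝ} (ha : 0 < a) {t : ℝ} (ht : t ∈ Gset a b c r) :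
    ∃ s, s ∈ Gset a b c r ∧ 0 ≤ s ∧ s < a ∧ ∃ n : ℤ, s = t + (n : ℝ) * a := by
  refine ⟨t + (-⌊t/a⌋ : ℤ) * a, memG_shift_a ht _, ?_, ?_, ⟨-⌊t/a⌋, rfl⟩⟩
  · have h1 : (⌊t/a⌋ : ℝ) ≤ t/a := Int.floor_le _
    have : (⌊t/a⌋ : ℝ) * a ≤ t := by
      calc (⌊t/a⌋:ℝ) * a ≤ (t/a) * a := mul_le_mul_of_nonneg_right h1 ha.le
      _ = t := by field_simp
    push_cast
    linarith
  · have h1 : t/a < (⌊t/a⌋ : ℝ) + 1 := Int.lt_floor_add_one _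
    have : t < ((⌊t/a⌋ : ℝ) + 1) * a := by
      calc t = (t/a) * a := by field_simp
      _ < ((⌊t/a⌋:ℝ)+1) * a := mul_lt_mul_of_pos_right h1 ha
    push_cast
    nlinarith

/-- The key existence: if `s ∈ Gset ∩ [0,a)` then there is `k₂` with `x k₂ = 1` and
    `c - s ≤ k₂ b < c - s + a`. -/
lemma step_exists {a b c r s : ℝ} {x : ℤ → ℝ}
    (ha : 0 < a) (hab : a < b) (hbc : b < c)
    (hx : ∀ k, x k = 0 ∨ x k = 1) (hx0 : x 0 = 1)
    (hrow : ∀ j : ℤ, Mrow a b c s x j = r)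
    (hs0 : 0 ≤ s) (hsa : s < a) :
    ∃ k₂ : ℤ, x k₂ = 1 ∧ c - s ≤ (k₂ : ℝ) * b ∧ (k₂ : ℝ) * b < c - s + a := by
  have hb : (0:ℝ) < b := lt_trans ha hab
  -- termwise identity
  have ident : ∀ k : ℤ,
      chiIco c ((s - a) + (k:ℝ)*b) * x k + (if k = (0:ℤ) then (1:ℝ) else 0)
      = chiIco c (s + (k:ℝ)*b) * x k + chiIco a ((s - c) + (k:ℝ)*b) * x k := by
    intro k
    rcases eq_or_ne k 0 with rfl | hk
    · simp only [Int.cast_zero, zero_mul, add_zero, if_pos rfl, hx0, mul_one]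
      rw [chi_of_neg (show s - a < 0 by linarith),
        chi_of_mem hs0 (show s < c by linarith),
        chi_of_neg (show s - c < 0 by linarith)]
      norm_num
    · rw [if_neg hk]
      rcases hx k with hxk | hxk
      · simp [hxk]
      · rw [hxk, mul_one, mul_one, mul_one, add_zero]
        rcases lt_or_gt_of_ne hk with hneg | hpos
        · -- k ≤ -1
          have hkZ : k ≤ -1 := by omega
          have hk1 : (k:ℝ) ≤ -1 := by exact_mod_cast hkZ
          have hkb : (k:ℝ) * b ≤ -b := by nlinarith
          rw [chi_of_neg (show s - a + (k:ℝ)*b < 0 by linarith),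
            chi_of_neg (show s + (k:ℝ)*b < 0 by linarith),
            chi_of_neg (show s - c + (k:ℝ)*b < 0 by linarith)]
          norm_num
        · -- k ≥ 1
          have hk1 : (1:ℝ) ≤ (k:ℝ) := by exact_mod_cast hpos
          have hkb : b ≤ (k:ℝ) * b := by nlinarith
          have harg1 : (0:ℝ) ≤ (s - a) + (k:ℝ)*b := by linarith
          have harg2 : (0:ℝ) ≤ s + (k:ℝ)*b := by linarith
          rcases lt_or_ge (s + (k:ℝ)*b) c with h2 | h2
          · rw [chi_of_mem harg1 (show s - a + (k:ℝ)*b < c by linarith),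
              chi_of_mem harg2 h2,
              chi_of_neg (show s - c + (k:ℝ)*b < 0 by linarith)]
            norm_num
          · rcases lt_or_ge ((s - a) + (k:ℝ)*b) c with h3 | h3
            · rw [chi_of_mem harg1 h3,
                chi_of_ge h2,
                chi_of_mem (show (0:ℝ) ≤ s - c + (k:ℝ)*b by linarith)
                  (show s - c + (k:ℝ)*b < a by linarith)]
              norm_num
            · rw [chi_of_ge h3, chi_of_ge h2,
                chi_of_ge (show a ≤ s - c + (k:ℝ)*b by linarith)]
              norm_num
  -- sum the identity
  have S1 : Summable (fun k : ℤ => chiIco c ((s - a) + (k:ℝ)*b) * x k) :=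
    summable_chi hb x c (s - a)
  have S2 : Summable (fun k : ℤ => if k = (0:ℤ) then (1:ℝ) else 0) := by
    apply summable_of_ne_finset_zero (s := {(0:ℤ)})
    intro k hk
    simp only [Finset.mem_singleton] at hk
    simp [hk]
  have S3 : Summable (fun k : ℤ => chiIco c (s + (k:ℝ)*b) * x k) := by
    have := summable_chi hb x c s
    simpa using this
  have S4 : Summable (fun k : ℤ => chiIco a ((s - c) + (k:ℝ)*b) * x k) :=
    summable_chi hb x a (s - c)
  have hsum : (∑' k : ℤ, (chiIco c ((s - a) + (k:ℝ)*b) * x k + (if k = (0:ℤ) then (1:ℝ) else 0)))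
      = ∑' k : ℤ, (chiIco c (s + (k:ℝ)*b) * x k + chiIco a ((s - c) + (k:ℝ)*b) * x k) := by
    exact tsum_congr ident
  rw [Summable.tsum_add S1 S2, Summable.tsum_add S3 S4, tsum_ite_eq (0:ℤ) (fun _ => (1:ℝ))] at hsum
  have hrow1 : (∑' k : ℤ, chiIco c ((s - a) + (k:ℝ)*b) * x k) = r := by
    have := hrow 1
    unfold Mrow at this
    rw [← this]
    apply tsum_congr; intro k; congr 2; push_cast; ring
  have hrow0 : (∑' k : ℤ, chiIco c (s + (k:ℝ)*b) * x k) = r := by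
    have := hrow 0
    unfold Mrow at this
    rw [← this]
    apply tsum_congr; intro k; congr 2; push_cast; ring
  rw [hrow1, hrow0] at hsum
  have hkey : (∑' k : ℤ, chiIco a ((s - c) + (k:ℝ)*b) * x k) = 1 := by linarith
  -- extract a nonzero term
  have hex : ∃ k : ℤ, chiIco a ((s - c) + (k:ℝ)*b) * x k ≠ 0 := by
    by_contra hcon
    push_neg at hcon
    have : (∑' k : ℤ, chiIco a ((s - c) + (k:ℝ)*b) * x k) = 0 := by
      rw [tsum_congr hcon]; exact tsum_zero
    rw [this] at hkey; norm_num at hkey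
  obtain ⟨k₂, hk₂⟩ := hex
  have h1 : chiIco a ((s - c) + (k₂:ℝ)*b) ≠ 0 := fun h => hk₂ (by rw [h, zero_mul])
  have h2 : x k₂ ≠ 0 := fun h => hk₂ (by rw [h, mul_zero])
  have hxk : x k₂ = 1 := (hx k₂).resolve_left h2
  obtain ⟨hA, hB⟩ := chi_ne_zero h1
  exact ⟨k₂, hxk, by linarith, by linarith⟩

/-- the deterministic next index -/
noncomputable def nk (a b c : ℝ) (s : ℝ) : ℤ :=
  if s < (c - (⌊c/b⌋:ℝ)*b) + a - b then ⌊c/b⌋ + 1 else ⌊c/b⌋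

/-- the deterministic next point of the orbit -/
noncomputable def nxt (a b c : ℝ) (s : ℝ) : ℝ :=
  (s + (nk a b c s : ℝ) * b) + (-⌊(s + (nk a b c s : ℝ) * b)/a⌋ : ℤ) * a

section Step

variable {a b c r : ℝ}
variable (ha : 0 < a) (hab : a < b) (hbc : b < c)
variable (h1 : b - a < c - (⌊c/b⌋:ℝ)*b) (h2 : c - (⌊c/b⌋:ℝ)*b < a)

/-- q ≥ 1 -/
lemma q_pos (hb : 0 < b) (hbc : b < c) : 1 ≤ ⌊c/b⌋ := by
  rw [Int.le_floor]
  rw [le_div_iff₀ hb]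
  push_cast
  linarith

include ha hab hbc h1 h2 in
/-- the step lemma: no point of `Gset` in the gap, and the forced next point. -/
lemma step_main {s : ℝ} (hs : s ∈ Gset a b c r) (hs0 : 0 ≤ s) (hsa : s < a) :
    ¬((c - (⌊c/b⌋:ℝ)*b) + a - b ≤ s ∧ s < c - (⌊c/b⌋:ℝ)*b) ∧
    s + (nk a b c s : ℝ) * b ∈ Gset a b c r := by
  obtain ⟨x, hx, hx0, hrow⟩ := hs
  obtain ⟨k₂, hxk₂, hk₂l, hk₂u⟩ := step_exists ha hab hbc hx hx0 hrow hs0 hsa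
  set q : ℤ := ⌊c/b⌋ with hq
  set c₀ : ℝ := c - (q:ℝ)*b with hc₀
  have hb : (0:ℝ) < b := lt_trans ha hab
  have hqb : (q:ℝ)*b = c - c₀ := by rw [hc₀]; ring
  have hq1 : 1 ≤ q := q_pos hb hbc
  -- gap exclusion
  have hgap : ¬(c₀ + a - b ≤ s ∧ s < c₀) := by
    rintro ⟨hg1, hg2⟩
    -- k₂ b ≥ c - s > c - c₀ = q b  ⟹  k₂ ≥ q+1
    have hlow : (q:ℝ)*b < (k₂:ℝ)*b := by rw [hqb]; linarith
    have hklow : q < k₂ := by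
      have := (mul_lt_mul_iff_of_pos_right hb).mp hlow
      exact_mod_cast this
    -- k₂ b < c - s + a ≤ (q+1) b  ⟹  k₂ ≤ q
    have hup : (k₂:ℝ)*b < ((q:ℝ)+1)*b := by
      have : c - s + a ≤ ((q:ℝ)+1)*b := by rw [hqb] at *; nlinarith
      linarith
    have hkup : k₂ < q + 1 := by
      have := (mul_lt_mul_iff_of_pos_right hb).mp hup
      exact_mod_cast this
    omega
  refine ⟨hgap, ?_⟩
  -- identify k₂ with nk
  have hk₂ : k₂ = nk a b c s := by
    unfold nk
    rw [← hq, ← hc₀]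
    split_ifs with hcase
    · -- s < c₀ + a - b : k₂ = q + 1
      have hlow : (q:ℝ)*b < (k₂:ℝ)*b := by
        have hsc₀ : s < c₀ := by linarith
        rw [hqb]; linarith
      have hklow : q < k₂ := by
        have := (mul_lt_mul_iff_of_pos_right hb).mp hlow
        exact_mod_cast this
      have hup : (k₂:ℝ)*b < ((q:ℝ)+2)*b := by
        have : c - s + a < ((q:ℝ)+2)*b := by rw [hqb] at *; nlinarith
        linarith
      have hkup : k₂ < q + 2 := by
        have := (mul_lt_mul_iff_of_pos_right hb).mp hup
        exact_mod_cast this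
      omega
    · -- s ≥ c₀ + a - b, and not in gap, so s ≥ c₀ : k₂ = q
      push_neg at hcase
      have hsc₀ : c₀ ≤ s := by
        by_contra hcon
        push_neg at hcon
        exact hgap ⟨by linarith, hcon⟩
      have hup : (k₂:ℝ)*b < ((q:ℝ)+1)*b := by
        have : c - s + a ≤ (q:ℝ)*b + a := by rw [hqb]; linarith
        have h2' : (q:ℝ)*b + a < ((q:ℝ)+1)*b := by nlinarith
        linarith
      have hkup : k₂ < q + 1 := by
        have := (mul_lt_mul_iff_of_pos_right hb).mp hup
        exact_mod_cast this
      have hlow : ((q:ℝ)-1)*b < (k₂:ℝ)*b := by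
        have : c - a < c - s := by linarith
        have h3' : ((q:ℝ)-1)*b < c - a := by rw [hqb] at *; nlinarith
        linarith
      have hklow : q - 1 < k₂ := by
        have := (mul_lt_mul_iff_of_pos_right hb).mp hlow
        exact_mod_cast this
      omega
  rw [← hk₂]
  exact memG_shift_b hx hrow k₂ hxk₂

include ha hab hbc h1 h2 in
/-- properties of the normalized next point -/
lemma nxt_props {s : ℝ} (hs : s ∈ Gset a b c r) (hs0 : 0 ≤ s) (hsa : s < a) :
    nxt a b c s ∈ Gset a b c r ∧ 0 ≤ nxt a b c s ∧ nxt a b c s < a ∧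
    ∃ M : ℤ, nxt a b c s = s + (nk a b c s : ℝ) * b - (M:ℝ) * a := by
  obtain ⟨-, hmem⟩ := step_main ha hab hbc h1 h2 hs hs0 hsa
  set y := s + (nk a b c s : ℝ) * b with hy
  have hmem2 : nxt a b c s ∈ Gset a b c r := memG_shift_a hmem _
  refine ⟨hmem2, ?_, ?_, ⟨⌊y/a⌋, by unfold nxt; push_cast; ring⟩⟩
  · have h1' : (⌊y/a⌋ : ℝ) ≤ y/a := Int.floor_le _
    have : (⌊y/a⌋:ℝ) * a ≤ y := by
      calc (⌊y/a⌋:ℝ) * a ≤ (y/a) * a := mul_le_mul_of_nonneg_right h1' ha.le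
      _ = y := by field_simp
    unfold nxt
    push_cast
    linarith
  · have h1' : y/a < (⌊y/a⌋ : ℝ) + 1 := Int.lt_floor_add_one _
    have : y < ((⌊y/a⌋:ℝ)+1) * a := by
      calc y = (y/a) * a := by field_simp
      _ < ((⌊y/a⌋:ℝ)+1) * a := mul_lt_mul_of_pos_right h1' ha
    unfold nxt
    push_cast
    nlinarith

end Step

/-- the orbit -/
noncomputable def orb (a b c t₀ : ℝ) : ℕ → ℝ := fun n => (nxt a b c)^[n] t₀

lemma orb_zero (a b c t₀ : ℝ) : orb a b c t₀ 0 = t₀ := rfl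

lemma orb_succ (a b c t₀ : ℝ) (n : ℕ) :
    orb a b c t₀ (n + 1) = nxt a b c (orb a b c t₀ n) := by
  unfold orb
  rw [Function.iterate_succ_apply']

lemma nk_ge_one {a b c : ℝ} (hb : 0 < b) (hbc : b < c) (s : ℝ) : 1 ≤ nk a b c s := by
  unfold nk
  have := q_pos hb hbc
  split_ifs <;> omega

section Orbit

variable {a b c r : ℝ}
variable (ha : 0 < a) (hab : a < b) (hbc : b < c)
variable (h1 : b - a < c - (⌊c/b⌋:ℝ)*b) (h2 : c - (⌊c/b⌋:ℝ)*b < a)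
variable {t₀ : ℝ} (ht₀G : t₀ ∈ Gset a b c r) (ht₀0 : 0 ≤ t₀) (ht₀a : t₀ < a)

include ha hab hbc h1 h2 ht₀G ht₀0 ht₀a in
lemma orb_inv : ∀ n, orb a b c t₀ n ∈ Gset a b c r ∧ 0 ≤ orb a b c t₀ n ∧ orb a b c t₀ n < a := by
  intro n
  induction n with
  | zero => exact ⟨ht₀G, ht₀0, ht₀a⟩
  | succ n ih =>
    obtain ⟨hG, h0, hA⟩ := ih
    obtain ⟨g1, g2, g3, -⟩ := nxt_props ha hab hbc h1 h2 hG h0 hA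
    rw [orb_succ]
    exact ⟨g1, g2, g3⟩

include ha hab hbc h1 h2 ht₀G ht₀0 ht₀a in
lemma orb_rep : ∀ n m : ℕ, n < m → ∃ B C : ℤ,
    orb a b c t₀ m = orb a b c t₀ n + (B:ℝ)*b - (C:ℝ)*a ∧ 1 ≤ B := by
  intro n m hnm
  induction m with
  | zero => omega
  | succ m ih =>
    obtain ⟨hG, h0, hA⟩ := orb_inv ha hab hbc h1 h2 ht₀G ht₀0 ht₀a m
    obtain ⟨-, -, -, M, hM⟩ := nxt_props ha hab hbc h1 h2 hG h0 hA
    have hb : (0:ℝ) < b := lt_trans ha hab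
    have hstep : orb a b c t₀ (m+1)
        = orb a b c t₀ m + ((nk a b c (orb a b c t₀ m) : ℤ):ℝ)*b - (M:ℝ)*a := by
      rw [orb_succ]; exact hM
    rcases Nat.lt_succ_iff_lt_or_eq.mp hnm with h | h
    · obtain ⟨B, C, hBC, hB1⟩ := ih h
      refine ⟨B + nk a b c (orb a b c t₀ m), C + M, ?_, ?_⟩
      · rw [hstep, hBC]; push_cast; ring
      · have := nk_ge_one (a := a) hb hbc (orb a b c t₀ m)
        omega
    · subst h
      exact ⟨nk a b c (orb a b c t₀ n), M, hstep, nk_ge_one (a := a) hb hbc _⟩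

include ha hab hbc h1 h2 ht₀G ht₀0 ht₀a in
lemma orb_inj (hirr : Irrational (a / b)) :
    ∀ n m : ℕ, n < m → orb a b c t₀ n ≠ orb a b c t₀ m := by
  intro n m hnm heq
  obtain ⟨B, C, hBC, hB1⟩ := orb_rep ha hab hbc h1 h2 ht₀G ht₀0 ht₀a n m hnm
  have hb : (0:ℝ) < b := lt_trans ha hab
  have hBb : (B:ℝ)*b = (C:ℝ)*a := by rw [← heq] at hBC; linarith
  have hBne : (B:ℝ) ≠ 0 := by
    have : (1:ℝ) ≤ (B:ℝ) := by exact_mod_cast hB1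
    linarith
  have hCne : (C:ℝ) ≠ 0 := by
    intro hC
    rw [hC, zero_mul] at hBb
    have : (B:ℝ) * b ≠ 0 := mul_ne_zero hBne (ne_of_gt hb)
    exact this hBb
  apply hirr
  refine ⟨(B:ℚ)/(C:ℚ), ?_⟩
  have : a / b = (B:ℝ)/(C:ℝ) := by
    field_simp
    nlinarith [hBb]
  rw [this]
  push_cast
  ring

end Orbit

section Main

variable {a b c r : ℝ}

/-- main lemma: if `Gset` is nonempty, it has points in `(0,ε)` and `(-ε,0)`. -/
lemma main_pair (ha : 0 < a) (hab : a < b) (hbc : b < c)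
    (h1 : b - a < c - (⌊c/b⌋:ℝ)*b) (h2 : c - (⌊c/b⌋:ℝ)*b < a)
    (hirr : Irrational (a / b))
    (hne : (Gset a b c r).Nonempty) {ε : ℝ} (hε : 0 < ε) :
    (Ioo (0:ℝ) ε ∩ Gset a b c r).Nonempty ∧ (Ioo (-ε) (0:ℝ) ∩ Gset a b c r).Nonempty := by
  classical
  have hb : (0:ℝ) < b := lt_trans ha hab
  set δ : ℝ := min ε (b - a) with hδdef
  have hδ : 0 < δ := lt_min hε (by linarith)
  have hδε : δ ≤ ε := min_le_left _ _
  have hδba : δ ≤ b - a := min_le_right _ _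
  -- choose the base point
  obtain ⟨t₁, ht₁⟩ := hne
  obtain ⟨t₂, ht₂G, ht₂0, ht₂a, -⟩ := memG_norm ha ht₁
  -- if 0 ∈ Gset use 0 as base point, else t₂
  set t₀ : ℝ := if (0:ℝ) ∈ Gset a b c r then 0 else t₂ with ht₀def
  have ht₀G : t₀ ∈ Gset a b c r := by
    rw [ht₀def]; split_ifs with h; exact h; exact ht₂G
  have ht₀0 : 0 ≤ t₀ := by
    rw [ht₀def]; split_ifs
    · exact le_refl 0
    · exact ht₂0
  have ht₀a : t₀ < a := by
    rw [ht₀def]; split_ifs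
    · exact ha
    · exact ht₂a
  set u : ℕ → ℝ := orb a b c t₀ with hu
  have hInv : ∀ n, u n ∈ Gset a b c r ∧ 0 ≤ u n ∧ u n < a :=
    orb_inv ha hab hbc h1 h2 ht₀G ht₀0 ht₀a
  have hInj : ∀ n m : ℕ, n < m → u n ≠ u m :=
    orb_inj ha hab hbc h1 h2 ht₀G ht₀0 ht₀a hirr
  -- key positivity: orbit points of positive index are nonzero
  have hpos : ∀ idx : ℕ, 1 ≤ idx → u idx ≠ 0 := by
    intro idx hidx hzero
    by_cases h0 : (0:ℝ) ∈ Gset a b c r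
    · have ht₀eq : t₀ = 0 := by rw [ht₀def, if_pos h0]
      have : u 0 = 0 := by rw [hu, orb_zero, ht₀eq]
      exact hInj 0 idx hidx (by rw [this, hzero])
    · have ht₀eq : t₀ = t₂ := by rw [ht₀def, if_neg h0]
      have := (hInv idx).1
      rw [hzero] at this
      exact h0 this
  -- Bolzano–Weierstrass : a close pair
  obtain ⟨L, -, φ, hφ, hφt⟩ :=
    tendsto_subseq_of_bounded (Metric.isBounded_Icc (0:ℝ) a)
      (fun n => ⟨(hInv n).2.1, (hInv n).2.2.le⟩ : ∀ n, u n ∈ Icc (0:ℝ) a)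
  rw [Metric.tendsto_atTop] at hφt
  obtain ⟨N, hN⟩ := hφt (δ/2) (by linarith)
  set m : ℕ := φ N with hm
  set n : ℕ := φ (N+1) with hn
  have hmn : m < n := hφ (Nat.lt_succ_self N)
  set d : ℝ := u n - u m with hd
  have hdne : d ≠ 0 := by
    rw [hd, sub_ne_zero]
    exact (hInj m n hmn).symm
  have hdlt : |d| < δ := by
    have e1 := hN N (le_refl N)
    have e2 := hN (N+1) (Nat.le_succ N)
    rw [Function.comp_apply, Real.dist_eq] at e1 e2
    rw [hd]
    calc |u n - u m| = |(u n - L) - (u m - L)| := by ring_nf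
    _ ≤ |u n - L| + |u m - L| := abs_sub _ _
    _ < δ/2 + δ/2 := by
        apply add_lt_add
        · exact e2
        · exact e1
    _ = δ := by ring
  -- the parallel property must fail eventually
  have hfail : ∃ i : ℕ, u (n + i) ≠ u (m + i) + d := by
    by_contra hall
    push_neg at hall
    have hg : n = m + (n - m) := (Nat.add_sub_cancel' hmn.le).symm
    have chain : ∀ k : ℕ, u (m + k * (n - m)) = u m + (k:ℝ) * d := by
      intro k
      induction k with
      | zero => simp
      | succ k ih =>
        have hidx : m + (k+1) * (n - m) = n + k * (n - m) := by
          rw [hg]; ring_nf; omega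
        rw [hidx, hall (k * (n-m) ) ]
        rw [show m + k * (n-m) = m + k*(n-m) from rfl] at ih
        rw [ih]
        push_cast
        ring
    rcases hdne.lt_or_gt with hneg | hpos'
    · -- d < 0 : eventually below 0
      obtain ⟨k, hk⟩ := exists_nat_gt (a / (-d))
      have hknd : (k:ℝ) * (-d) > a := by
        have h0d : 0 < -d := by linarith
        calc a = (a / (-d)) * (-d) := by field_simp
        _ < (k:ℝ) * (-d) := by exact mul_lt_mul_of_pos_right hk h0d
      have := chain k
      have hlb := (hInv (m + k * (n - m))).2.1
      have hub := (hInv m).2.2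
      rw [this] at hlb
      nlinarith
    · -- d > 0 : eventually above a
      obtain ⟨k, hk⟩ := exists_nat_gt (a / d)
      have hknd : (k:ℝ) * d > a := by
        calc a = (a / d) * d := by field_simp
        _ < (k:ℝ) * d := by exact mul_lt_mul_of_pos_right hk hpos'
      have := chain k
      have hub := (hInv (m + k * (n - m))).2.2
      have hlb := (hInv m).2.1
      rw [this] at hub
      nlinarith
  -- least failure index
  set i₀ : ℕ := Nat.find hfail with hi₀
  have hfi : u (n + i₀) ≠ u (m + i₀) + d := Nat.find_spec hfail
  have hi₀pos : i₀ ≠ 0 := by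
    intro h0
    apply hfi
    rw [h0]
    simp [hd]
  obtain ⟨i, hi⟩ := Nat.exists_eq_succ_of_ne_zero hi₀pos
  have hPi : u (n + i) = u (m + i) + d := by
    by_contra hcon
    have := Nat.find_min hfail (m := i) (by omega)
    exact this hcon
  -- set up the straddle analysis
  set x : ℝ := u (m + i) with hx
  set y : ℝ := u (n + i) with hy
  have hyx : y = x + d := hPi
  obtain ⟨hxG, hx0, hxa⟩ := hInv (m + i)
  obtain ⟨hyG, hy0, hya⟩ := hInv (n + i)
  -- same branch of nk
  have hkk : nk a b c x = nk a b c y := by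
    have hgx := (step_main ha hab hbc h1 h2 hxG hx0 hxa).1
    have hgy := (step_main ha hab hbc h1 h2 hyG hy0 hya).1
    set A : ℝ := (c - (⌊c/b⌋:ℝ)*b) + a - b with hA
    set c₀ : ℝ := c - (⌊c/b⌋:ℝ)*b with hc₀
    unfold nk
    rcases lt_or_ge x A with hx' | hx' <;> rcases lt_or_ge y A with hy' | hy'
    · rw [if_pos (by rw [← hA] at *; exact hx'), if_pos (by rw [← hA] at *; exact hy')]
    · exfalso
      have hyge : c₀ ≤ y := by
        by_contra hcon
        push_neg at hcon
        exact hgy ⟨hy', hcon⟩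
      have : d ≥ c₀ - A := by rw [hyx] at hyge; linarith
      have h3 : c₀ - A = b - a := by rw [hA]; ring
      have : |d| < b - a := lt_of_lt_of_le hdlt hδba
      rw [abs_lt] at this
      linarith
    · exfalso
      have hxge : c₀ ≤ x := by
        by_contra hcon
        push_neg at hcon
        exact hgx ⟨hx', hcon⟩
      have : -d ≥ c₀ - A := by rw [hyx] at hy'; linarith
      have h3 : c₀ - A = b - a := by rw [hA]; ring
      have : |d| < b - a := lt_of_lt_of_le hdlt hδba
      rw [abs_lt] at this
      linarith
    · rw [if_neg (by rw [← hA] at *; linarith), if_neg (by rw [← hA] at *; linarith)]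
  -- next points
  obtain ⟨-, -, -, M₁, hM₁⟩ := nxt_props ha hab hbc h1 h2 hxG hx0 hxa
  obtain ⟨-, -, -, M₂, hM₂⟩ := nxt_props ha hab hbc h1 h2 hyG hy0 hya
  set x' : ℝ := u (m + i + 1) with hx'
  set y' : ℝ := u (n + i + 1) with hy'
  have hx'e : x' = x + ((nk a b c x : ℤ):ℝ)*b - (M₁:ℝ)*a := by
    rw [hx', hu, orb_succ]; exact hM₁
  have hy'e : y' = y + ((nk a b c x : ℤ):ℝ)*b - (M₂:ℝ)*a := by
    rw [hy', hu, orb_succ, hkk]; exact hM₂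
  obtain ⟨hx'G, hx'0, hx'a⟩ := hInv (m + i + 1)
  obtain ⟨hy'G, hy'0, hy'a⟩ := hInv (n + i + 1)
  rw [← hx'] at hx'G hx'0 hx'a
  rw [← hy'] at hy'G hy'0 hy'a
  have hfail' : y' ≠ x' + d := by
    have e1 : n + i + 1 = n + i₀ := by omega
    have e2 : m + i + 1 = m + i₀ := by omega
    rw [hy', hx', e1, e2]
    exact hfi
  have hMne : M₂ ≠ M₁ := by
    intro hMeq
    apply hfail'
    rw [hy'e, hx'e, hyx, hMeq]
    ring
  have hdiff : y' - x' = d - ((M₂:ℝ) - (M₁:ℝ))*a := by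
    rw [hy'e, hx'e, hyx]; ring
  clear_value u t₀ δ d i₀ x y x' y'
  -- |M₂ - M₁| = 1 and the two cases
  rcases hdne.lt_or_gt with hneg | hpos'
  · -- d < 0 : M₂ = M₁ - 1, x' is the right point, y' the left point
    have hMeq : M₂ = M₁ - 1 := by
      have habs := abs_lt.mp hdlt
      have hb1 : ((M₂:ℝ) - (M₁:ℝ))*a = d - (y' - x') := by linarith
      have hbound1 : y' - x' < a := by linarith
      have hbound2 : -a < y' - x' := by linarith
      have hgt : ((M₂:ℝ) - (M₁:ℝ))*a < 1*a := by rw [one_mul]; linarith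
      have hlt : (-2:ℝ)*a < ((M₂:ℝ) - (M₁:ℝ))*a := by linarith
      have e1 : (M₂:ℝ) - (M₁:ℝ) < 1 := (mul_lt_mul_iff_of_pos_right ha).mp hgt
      have e2 : (-2:ℝ) < (M₂:ℝ) - (M₁:ℝ) := (mul_lt_mul_iff_of_pos_right ha).mp hlt
      have e1' : M₂ - M₁ < 1 := by exact_mod_cast e1
      have e2' : -2 < M₂ - M₁ := by exact_mod_cast e2
      omega
    have hy'eq : y' = x' + d + a := by
      have hMr : ((M₂:ℝ) - (M₁:ℝ)) = -1 := by rw [hMeq]; push_cast; ring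
      rw [hMr] at hdiff
      linarith
    -- x' ∈ [0, -d) ⊆ [0, δ) with positive index ⇒ right point; y' ∈ (a-δ, a) ⇒ left point
    have hx'lt : x' < -d := by linarith
    have hx'ne : x' ≠ 0 := by rw [hx']; exact hpos (m + i + 1) (by omega)
    have hy'gt : a - δ < y' := by
      have : -d ≤ |d| := neg_le_abs d
      linarith
    constructor
    · refine ⟨x', ⟨?_, ?_⟩, hx'G⟩
      · exact lt_of_le_of_ne hx'0 (Ne.symm hx'ne)
      · have : -d ≤ |d| := neg_le_abs d
        linarith
    · refine ⟨y' - a, ⟨?_, ?_⟩, ?_⟩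
      · linarith
      · linarith
      · have hmem := memG_shift_a hy'G (-1)
        have he : y' + ((-1 : ℤ):ℝ) * a = y' - a := by push_cast; ring
        rwa [he] at hmem
  · -- d > 0 : M₂ = M₁ + 1, y' is the right point, x' the left point
    have hMeq : M₂ = M₁ + 1 := by
      have habs := abs_lt.mp hdlt
      have hb1 : ((M₂:ℝ) - (M₁:ℝ))*a = d - (y' - x') := by linarith
      have hbound1 : y' - x' < a := by linarith
      have hbound2 : -a < y' - x' := by linarith
      have hgt : ((M₂:ℝ) - (M₁:ℝ))*a < 2*a := by linarith
      have hlt : (-1:ℝ)*a < ((M₂:ℝ) - (M₁:ℝ))*a := by linarith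
      have e1 : (M₂:ℝ) - (M₁:ℝ) < 2 := (mul_lt_mul_iff_of_pos_right ha).mp hgt
      have e2 : (-1:ℝ) < (M₂:ℝ) - (M₁:ℝ) := (mul_lt_mul_iff_of_pos_right ha).mp hlt
      have e1' : M₂ - M₁ < 2 := by exact_mod_cast e1
      have e2' : -1 < M₂ - M₁ := by exact_mod_cast e2
      omega
    have hy'eq : y' = x' + d - a := by
      have hMr : ((M₂:ℝ) - (M₁:ℝ)) = 1 := by rw [hMeq]; push_cast; ring
      rw [hMr] at hdiff
      linarith
    have hy'lt : y' < d := by linarith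
    have hy'ne : y' ≠ 0 := by rw [hy']; exact hpos (n + i + 1) (by omega)
    have hx'gt : a - δ < x' := by
      have : d ≤ |d| := le_abs_self d
      linarith
    constructor
    · refine ⟨y', ⟨?_, ?_⟩, hy'G⟩
      · exact lt_of_le_of_ne hy'0 (Ne.symm hy'ne)
      · have : d ≤ |d| := le_abs_self d
        linarith
    · refine ⟨x' - a, ⟨?_, ?_⟩, ?_⟩
      · linarith
      · linarith
      · have hmem := memG_shift_a hx'G (-1)
        have he : x' + ((-1 : ℤ):ℝ) * a = x' - a := by push_cast; ring
        rwa [he] at hmem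

end Main

/-- Lemma `rabcbasic2`: with `c₀ = c − ⌊c/b⌋·b`, `b − a < c₀ < a` and `a/b ∉ ℚ`:
(i) if `S_{a,b,c} ≠ ∅` then `(0,ε) ∩ S_{a,b,c} ≠ ∅` and `(−ε,0) ∩ S_{a,b,c} ≠ ∅` for all `ε > 0`;
(ii) the same with `S` replaced by `D`. -/
theorem S_and_D_dense_at_origin (a b c c₀ : ℝ)
    (ha : 0 < a) (hab : a < b) (hbc : b < c)
    (hc0 : c₀ = c - (⌊c / b⌋ : ℝ) * b) (h1 : b - a < c₀) (h2 : c₀ < a)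
    (hirr : Irrational (a / b)) :
    (Sset a b c ≠ ∅ → ∀ ε : ℝ, 0 < ε →
      Set.Ioo (0 : ℝ) ε ∩ Sset a b c ≠ ∅ ∧ Set.Ioo (-ε) (0 : ℝ) ∩ Sset a b c ≠ ∅) ∧
    (Dset a b c ≠ ∅ → ∀ ε : ℝ, 0 < ε →
      Set.Ioo (0 : ℝ) ε ∩ Dset a b c ≠ ∅ ∧ Set.Ioo (-ε) (0 : ℝ) ∩ Dset a b c ≠ ∅) := by
  subst hc0
  constructor
  · intro hS ε hε
    rw [Sset_eq_G] at *
    have hne : (Gset a b c 1).Nonempty := Set.nonempty_iff_ne_empty.mpr hS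
    obtain ⟨hR, hL⟩ := main_pair ha hab hbc h1 h2 hirr hne hε
    exact ⟨hR.ne_empty, hL.ne_empty⟩
  · intro hD ε hε
    rw [Dset_eq_G] at *
    have hne : (Gset a b c 2).Nonempty := Set.nonempty_iff_ne_empty.mpr hD
    obtain ⟨hR, hL⟩ := main_pair ha hab hbc h1 h2 hirr hne hε
    exact ⟨hR.ne_empty, hL.ne_empty⟩
end
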